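/- arXiv:2005.10032 — 5 statements merged into one kernel-verified Lean document; each statement's English description precedes it below -/
import Mathlib

section
/- Let n ≥ 1, p ∈ (1,∞), and let ν be a positive integer. If f : 𝔹_{ℓ₂ⁿ} → 𝔹_{ℓ_p^ν} is a pluriharmonic function, then for every z ∈ 𝔹_{ℓ₂ⁿ}, |∇‖f(z)‖_p| ≤ (4/π) · 1/(1 − ‖z‖₂²). -/
open scoped BigOperators Topology
open Filter

/-- The `p`-norm `(∑ ‖z j‖^p)^(1/p)` on `ℂ^ν` for a real exponent `p`. -/
noncomputable def pnormC {ν : ℕ} (p : ℝ) (z : Fin ν → ℂ) : ℝ :=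
  (∑ j, ‖z j‖ ^ p) ^ (1 / p)

/-- `|∇‖f(z)‖_p| = limsup_{w → z} |‖f(w)‖_p - ‖f(z)‖_p| / ‖w - z‖`. -/
noncomputable def gradPnormC {n ν : ℕ} (p : ℝ)
    (f : EuclideanSpace ℂ (Fin n) → (Fin ν → ℂ)) (z : EuclideanSpace ℂ (Fin n)) : ℝ :=
  Filter.limsup (fun w => |pnormC p (f w) - pnormC p (f z)| / ‖w - z‖) (𝓝[≠] z)

section Auxiliary

/-- Compatibility: the complex modulus as an absolute value. -/
noncomputable def Complex.abs : AbsoluteValue ℂ ℝ where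
  toFun := fun z => ‖z‖
  map_mul' := norm_mul
  nonneg' := norm_nonneg
  eq_zero' _ := norm_eq_zero
  add_le' := norm_add_le

lemma Complex.abs_apply' (z : ℂ) : Complex.abs z = ‖z‖ := rfl

lemma Complex.norm_eq_abs (z : ℂ) : ‖z‖ = Complex.abs z := rfl

@[simp] lemma Complex.abs_ofReal (r : ℝ) : Complex.abs (r : ℂ) = |r| := Complex.norm_real r

@[simp] lemma Complex.abs_conj (z : ℂ) : Complex.abs ((starRingEnd ℂ) z) = Complex.abs z :=
  Complex.norm_conj z

lemma Complex.normSq_eq_abs (z : ℂ) : Complex.normSq z = Complex.abs z ^ 2 :=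
  Complex.normSq_eq_norm_sq z

lemma Complex.sq_abs (z : ℂ) : Complex.abs z ^ 2 = Complex.normSq z :=
  Complex.sq_norm z

lemma Complex.abs_re_le_abs (z : ℂ) : |z.re| ≤ Complex.abs z := Complex.abs_re_le_norm z

lemma Complex.re_le_abs (z : ℂ) : z.re ≤ Complex.abs z := Complex.re_le_norm z

open Complex Metric Filter


lemma normSq_diff_mobius (a ζ : ℂ) :
    normSq (1 + (starRingEnd ℂ) a * ζ) - normSq (ζ + a)
      = (1 - normSq a) * (1 - normSq ζ) := by
  simp only [normSq_apply, add_re, add_im, mul_re, mul_im, one_re, one_im, conj_re, conj_im]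
  ring

lemma mobius_denom_ne {a ζ : ℂ} (ha : Complex.abs a < 1) (hζ : Complex.abs ζ < 1) :
    (1 + (starRingEnd ℂ) a * ζ) ≠ 0 := by
  intro h
  have h1 : (starRingEnd ℂ) a * ζ = -1 := by linear_combination h
  have h2 : Complex.abs ((starRingEnd ℂ) a * ζ) = 1 := by rw [h1]; simp
  rw [map_mul, abs_conj] at h2
  nlinarith [Complex.abs.nonneg a, Complex.abs.nonneg ζ]

lemma mobius_lt_one {a ζ : ℂ} (ha : Complex.abs a < 1) (hζ : Complex.abs ζ < 1) :
    Complex.abs ((ζ + a) / (1 + (starRingEnd ℂ) a * ζ)) < 1 := by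
  have hD := mobius_denom_ne ha hζ
  have hDpos : 0 < Complex.abs (1 + (starRingEnd ℂ) a * ζ) := by
    simpa [Complex.abs.pos_iff] using hD
  rw [map_div₀, div_lt_one hDpos]
  have key := normSq_diff_mobius a ζ
  have h1 : normSq a < 1 := by rw [normSq_eq_abs]; nlinarith [Complex.abs.nonneg a]
  have h2 : normSq ζ < 1 := by rw [normSq_eq_abs]; nlinarith [Complex.abs.nonneg ζ]
  have h3 : normSq (ζ + a) < normSq (1 + (starRingEnd ℂ) a * ζ) := by nlinarith
  rw [normSq_eq_abs, normSq_eq_abs] at h3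
  nlinarith [Complex.abs.nonneg (ζ + a)]

lemma hasDerivAt_mobius {a : ℂ} (ζ : ℂ) (hD : (1 + (starRingEnd ℂ) a * ζ) ≠ 0) :
    HasDerivAt (fun w => (w + a) / (1 + (starRingEnd ℂ) a * w))
      ((1 - (starRingEnd ℂ) a * a) / (1 + (starRingEnd ℂ) a * ζ) ^ 2) ζ := by
  have h1 : HasDerivAt (fun w : ℂ => w + a) 1 ζ := (hasDerivAt_id ζ).add_const a
  have h2 : HasDerivAt (fun w : ℂ => 1 + (starRingEnd ℂ) a * w) ((starRingEnd ℂ) a) ζ := by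
    simpa using ((hasDerivAt_id ζ).const_mul ((starRingEnd ℂ) a)).const_add 1
  have := h1.fun_div h2 hD
  refine this.congr_deriv ?_
  ring

lemma normSq_sin' (w : ℂ) : normSq (Complex.sin w) = Real.sin w.re ^ 2 + Real.sinh w.im ^ 2 := by
  rw [Complex.sin_eq]
  rw [← Complex.ofReal_sin, ← Complex.ofReal_cosh, ← Complex.ofReal_cos, ← Complex.ofReal_sinh,
    ← Complex.ofReal_mul, ← Complex.ofReal_mul, Complex.normSq_add_mul_I]
  nlinarith [Real.sin_sq_add_cos_sq w.re, Real.cosh_sq w.im]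

lemma normSq_cos' (w : ℂ) : normSq (Complex.cos w) = Real.cos w.re ^ 2 + Real.sinh w.im ^ 2 := by
  rw [Complex.cos_eq]
  rw [← Complex.ofReal_sin, ← Complex.ofReal_cosh, ← Complex.ofReal_cos, ← Complex.ofReal_sinh,
    sub_eq_add_neg, ← neg_mul, ← Complex.ofReal_mul, ← Complex.ofReal_mul, ← Complex.ofReal_neg,
    Complex.normSq_add_mul_I]
  nlinarith [Real.sin_sq_add_cos_sq w.re, Real.cosh_sq w.im]

lemma cos_ne_zero_strip {w : ℂ} (hw : |w.re| < Real.pi / 2) : Complex.cos w ≠ 0 := by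
  have hc : 0 < Real.cos w.re :=
    Real.cos_pos_of_mem_Ioo ⟨by cases abs_lt.1 hw with | intro h1 h2 => linarith, (abs_lt.1 hw).2⟩
  intro h
  have := normSq_cos' w
  rw [h, map_zero] at this
  nlinarith [sq_nonneg (Real.sinh w.im)]

lemma abs_tan_lt_one_strip {w : ℂ} (hw : |w.re| < Real.pi / 4) :
    Complex.abs (Complex.tan w) < 1 := by
  have hπ := Real.pi_pos
  have hw2 : |w.re| < Real.pi / 2 := by linarith [abs_nonneg w.re]
  have hc := cos_ne_zero_strip hw2
  have hcos2 : 0 < Real.cos (2 * w.re) := by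
    apply Real.cos_pos_of_mem_Ioo
    constructor
    · cases abs_lt.1 hw with | intro h1 h2 => linarith
    · cases abs_lt.1 hw with | intro h1 h2 => linarith
  have hlt : normSq (Complex.sin w) < normSq (Complex.cos w) := by
    rw [normSq_sin', normSq_cos']
    have := Real.cos_two_mul w.re
    nlinarith [Real.sin_sq_add_cos_sq w.re]
  rw [Complex.tan_eq_sin_div_cos, map_div₀, div_lt_one]
  · rw [normSq_eq_abs, normSq_eq_abs] at hlt
    nlinarith [Complex.abs.nonneg (Complex.sin w), Complex.abs.nonneg (Complex.cos w)]
  · simpa [Complex.abs.pos_iff] using hc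

set_option maxHeartbeats 1600000 in
/-- Schwarz–Pick estimate for holomorphic maps of a disk into the strip `|Re| < 1`. -/
lemma schwarz_strip {φ : ℂ → ℂ} {c t₀ : ℂ} {r : ℝ}
    (hφ : DifferentiableOn ℂ φ (Metric.ball c r))
    (hre : ∀ t ∈ Metric.ball c r, |(φ t).re| < 1)
    (ht₀ : t₀ ∈ Metric.ball c r) :
    ‖deriv φ t₀‖ * (r ^ 2 - ‖t₀ - c‖ ^ 2) ≤ 4 / Real.pi * r := by
  have hπ := Real.pi_pos
  have hd : dist t₀ c < r := mem_ball.1 ht₀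
  have hr : 0 < r := lt_of_le_of_lt dist_nonneg hd
  have hrC : ((r : ℝ) : ℂ) ≠ 0 := by exact_mod_cast hr.ne'
  set a : ℂ := (t₀ - c) / (r : ℂ) with ha_def
  have habs_a : Complex.abs a < 1 := by
    rw [ha_def, map_div₀, Complex.abs_ofReal, abs_of_pos hr, div_lt_one hr]
    rw [Complex.dist_eq] at hd; exact hd
  -- the building blocks
  set L : ℂ → ℂ := fun w => ((Real.pi / 4 : ℝ) : ℂ) * w with hL_def
  set T : ℂ → ℂ := fun w => Complex.tan (L w) with hT_def
  have hLre : ∀ w : ℂ, |(L w).re| = Real.pi / 4 * |w.re| := by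
    intro w
    have : (L w).re = Real.pi / 4 * w.re := by
      simp [hL_def, Complex.mul_re]
    rw [this, abs_mul, abs_of_pos (by linarith : (0:ℝ) < Real.pi / 4)]
  have hcosne : ∀ w : ℂ, |w.re| < 1 → Complex.cos (L w) ≠ 0 := by
    intro w hw
    apply cos_ne_zero_strip
    rw [hLre w]
    nlinarith [abs_nonneg w.re]
  have habsT : ∀ w : ℂ, |w.re| < 1 → Complex.abs (T w) < 1 := by
    intro w hw
    apply abs_tan_lt_one_strip
    rw [hLre w]
    nlinarith [abs_nonneg w.re]
  set w₀ : ℂ := φ t₀ with hw₀_def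
  have hw₀re : |w₀.re| < 1 := hre t₀ ht₀
  set β : ℂ := T w₀ with hβ_def
  have hβ : Complex.abs β < 1 := habsT w₀ hw₀re
  have hβ' : Complex.abs (-β) < 1 := by simpa using hβ
  set m : ℂ → ℂ := fun ζ => (ζ + -β) / (1 + (starRingEnd ℂ) (-β) * ζ) with hm_def
  set ψ : ℂ → ℂ := fun ζ => c + (r : ℂ) * ((ζ + a) / (1 + (starRingEnd ℂ) a * ζ)) with hψ_def
  set H : ℂ → ℂ := fun ζ => m (T (φ (ψ ζ))) with hH_def
  have hψmaps : ∀ ζ ∈ Metric.ball (0 : ℂ) 1, ψ ζ ∈ Metric.ball c r := by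
    intro ζ hζ
    have hζ1 : Complex.abs ζ < 1 := by
      rw [mem_ball, Complex.dist_eq, sub_zero] at hζ; exact hζ
    rw [mem_ball, Complex.dist_eq]
    have : ψ ζ - c = (r : ℂ) * ((ζ + a) / (1 + (starRingEnd ℂ) a * ζ)) := by
      rw [hψ_def]; ring
    rw [this, Complex.norm_eq_abs, map_mul, Complex.abs_ofReal, abs_of_pos hr]
    have := mobius_lt_one habs_a hζ1
    nlinarith
  have hψ0 : ψ 0 = t₀ := by
    rw [hψ_def]
    simp only [zero_add, mul_zero, add_zero, div_one]
    rw [ha_def]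
    field_simp
    ring
  -- differentiability of the composition
  have hHdiff : DifferentiableOn ℂ H (Metric.ball 0 1) := by
    intro ζ hζmem
    have hζ1 : Complex.abs ζ < 1 := by
      rw [mem_ball, Complex.dist_eq, sub_zero] at hζmem; exact hζmem
    have hψζ := hψmaps ζ hζmem
    have dψ : DifferentiableAt ℂ ψ ζ := by
      have hD := mobius_denom_ne habs_a hζ1
      apply DifferentiableAt.const_add
      apply DifferentiableAt.const_mul
      exact (differentiableAt_id.add_const a).div
        (((differentiableAt_id.const_mul _).const_add 1)) hD
    have dφ : DifferentiableAt ℂ φ (ψ ζ) := hφ.differentiableAt (isOpen_ball.mem_nhds hψζ)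
    have dT : DifferentiableAt ℂ T (φ (ψ ζ)) := by
      have h0 := Complex.hasDerivAt_tan (hcosne _ (hre _ hψζ))
      exact (h0.comp _ ((hasDerivAt_id _).const_mul ((Real.pi / 4 : ℝ) : ℂ))).differentiableAt
    have dm : DifferentiableAt ℂ m (T (φ (ψ ζ))) := by
      have hD := mobius_denom_ne hβ' (habsT _ (hre _ hψζ))
      exact (differentiableAt_id.add_const (-β)).div
        (((differentiableAt_id.const_mul _).const_add 1)) hD
    exact ((dm.comp ζ (dT.comp ζ (dφ.comp ζ dψ)))).differentiableWithinAt
  have hH0 : H 0 = 0 := by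
    rw [hH_def]
    simp only [hψ0, ← hw₀_def, ← hβ_def, hm_def]
    simp
  have hHmaps : Set.MapsTo H (Metric.ball 0 1) (Metric.ball (H 0) 1) := by
    rw [hH0]
    intro ζ hζmem
    have hζ1 : Complex.abs ζ < 1 := by
      rw [mem_ball, Complex.dist_eq, sub_zero] at hζmem; exact hζmem
    have hψζ := hψmaps ζ hζmem
    rw [mem_ball, Complex.dist_eq, sub_zero]
    exact mobius_lt_one hβ' (habsT _ (hre _ hψζ))
  have hschwarz : ‖deriv H 0‖ ≤ 1 := by
    have := Complex.norm_deriv_le_div_of_mapsTo_ball hHdiff (hHmaps.mono_right ball_subset_closedBall) one_pos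
    simpa using this
  -- the chain rule at 0
  have hψ' : HasDerivAt ψ ((r : ℂ) * (1 - (starRingEnd ℂ) a * a)) 0 := by
    have hD0 : (1 + (starRingEnd ℂ) a * (0 : ℂ)) ≠ 0 := by simp
    have h0 := hasDerivAt_mobius (a := a) 0 hD0
    have h1 := (h0.const_mul ((r : ℝ) : ℂ)).const_add c
    refine h1.congr_deriv ?_
    simp
  have hφ' : HasDerivAt φ (deriv φ t₀) (ψ 0) := by
    rw [hψ0]
    exact (hφ.differentiableAt (isOpen_ball.mem_nhds ht₀)).hasDerivAt
  have hT' : HasDerivAt T ((1 / Complex.cos (L w₀) ^ 2) * ((Real.pi / 4 : ℝ) : ℂ)) (φ (ψ 0)) := by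
    rw [hψ0, ← hw₀_def]
    have h0 := Complex.hasDerivAt_tan (hcosne w₀ hw₀re)
    have h1 : HasDerivAt L (((Real.pi / 4 : ℝ) : ℂ)) w₀ := by
      have h := (hasDerivAt_id w₀).const_mul ((Real.pi / 4 : ℝ) : ℂ)
      rw [mul_one] at h
      exact h
    exact h0.comp w₀ h1
  have hm' : HasDerivAt m
      ((1 - (starRingEnd ℂ) (-β) * (-β)) / (1 + (starRingEnd ℂ) (-β) * β) ^ 2)
      (T (φ (ψ 0))) := by
    rw [hψ0, ← hw₀_def, ← hβ_def]
    exact hasDerivAt_mobius β (mobius_denom_ne hβ' hβ)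
  have hH' : HasDerivAt H
      (((1 - (starRingEnd ℂ) (-β) * (-β)) / (1 + (starRingEnd ℂ) (-β) * β) ^ 2) *
        (((1 / Complex.cos (L w₀) ^ 2) * ((Real.pi / 4 : ℝ) : ℂ)) *
          ((deriv φ t₀) * ((r : ℂ) * (1 - (starRingEnd ℂ) a * a))))) 0 := by
    exact hm'.comp 0 ((hT'.comp 0 (hφ'.comp 0 hψ')))
  have hderiv_eq := hH'.deriv
  rw [hderiv_eq] at hschwarz
  -- now compute norms
  set s : ℝ := normSq β with hs_def
  have hs0 : 0 ≤ s := normSq_nonneg β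
  have hs1 : s < 1 := by rw [hs_def, normSq_eq_abs]; nlinarith [Complex.abs.nonneg β]
  have e1 : (1 : ℂ) - (starRingEnd ℂ) (-β) * (-β) = ((1 - s : ℝ) : ℂ) := by
    rw [hs_def, map_neg, neg_mul_neg, ← Complex.normSq_eq_conj_mul_self]
    push_cast
    ring
  have e2 : (1 : ℂ) + (starRingEnd ℂ) (-β) * β = ((1 - s : ℝ) : ℂ) := by
    rw [hs_def, map_neg, neg_mul, ← Complex.normSq_eq_conj_mul_self]
    push_cast
    ring
  have hcosid : 1 / Complex.cos (L w₀) ^ 2 = 1 + β ^ 2 := by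
    have hc := hcosne w₀ hw₀re
    rw [hβ_def, hT_def]
    simp only
    rw [Complex.tan_eq_sin_div_cos]
    field_simp
    exact (Complex.cos_sq_add_sin_sq _).symm
  set X : ℝ := Complex.abs (1 + β ^ 2) with hX_def
  have hXge : 1 - s ≤ X := by
    have h1 : Complex.abs ((1 + β ^ 2) + (-β ^ 2)) ≤ X + Complex.abs (-β ^ 2) := by
      rw [hX_def]; exact Complex.abs.add_le _ _
    simp only [add_neg_cancel_right] at h1
    have h2 : Complex.abs (-β ^ 2) = s := by
      rw [map_neg_eq_map, map_pow, hs_def, normSq_eq_abs]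
    rw [h2] at h1
    have h3 : (1 : ℝ) ≤ X + s := by simpa using h1
    linarith
  set dd : ℝ := normSq a with hdd_def
  have hdd1 : dd < 1 := by rw [hdd_def, normSq_eq_abs]; nlinarith [Complex.abs.nonneg a]
  have hdd0 : 0 ≤ dd := normSq_nonneg a
  have e3 : (1 : ℂ) - (starRingEnd ℂ) a * a = ((1 - dd : ℝ) : ℂ) := by
    rw [hdd_def, ← Complex.normSq_eq_conj_mul_self]
    push_cast
    ring
  set P : ℝ := ‖deriv φ t₀‖ with hP_def
  have hP0 : 0 ≤ P := norm_nonneg _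
  have nm : ‖((1 : ℂ) - (starRingEnd ℂ) (-β) * (-β)) / (1 + (starRingEnd ℂ) (-β) * β) ^ 2‖
      = (1 - s) / (1 - s) ^ 2 := by
    rw [e1, e2, norm_div, norm_pow, Complex.norm_real, Real.norm_eq_abs,
      abs_of_pos (by linarith : (0:ℝ) < 1 - s)]
  have nc : ‖1 / Complex.cos (L w₀) ^ 2‖ = X := by
    rw [hcosid, hX_def, Complex.norm_eq_abs]
  have nπ : ‖((Real.pi / 4 : ℝ) : ℂ)‖ = Real.pi / 4 := by
    rw [Complex.norm_real, Real.norm_eq_abs, abs_of_pos (by linarith : (0:ℝ) < Real.pi / 4)]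
  have nr : ‖((r : ℝ) : ℂ)‖ = r := by
    rw [Complex.norm_real, Real.norm_eq_abs, abs_of_pos hr]
  have na : ‖(1 : ℂ) - (starRingEnd ℂ) a * a‖ = 1 - dd := by
    rw [e3, Complex.norm_real, Real.norm_eq_abs, abs_of_pos (by linarith : (0:ℝ) < 1 - dd)]
  have hnorm : ((1 - s) / (1 - s) ^ 2) * ((X * (Real.pi / 4)) * (P * (r * (1 - dd)))) ≤ 1 := by
    simp only [norm_mul] at hschwarz
    rw [nm, nc, nπ, nr, na, ← hP_def] at hschwarz
    ring_nf at hschwarz ⊢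
    exact hschwarz
  -- conclude
  have hfrac : (1 - s) / (1 - s) ^ 2 * X ≥ 1 := by
    rw [div_mul_eq_mul_div, ge_iff_le, le_div_iff₀ (by nlinarith : (0:ℝ) < (1 - s) ^ 2)]
    nlinarith
  have hmain : Real.pi / 4 * (P * (r * (1 - dd))) ≤ 1 := by nlinarith
  have hPr : P * (r * (1 - dd)) ≤ 4 / Real.pi := by
    rw [le_div_iff₀ hπ]
    nlinarith
  -- r² - ‖t₀-c‖² = r² (1 - dd)
  have habs_a_eq : ‖t₀ - c‖ ^ 2 = dd * r ^ 2 := by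
    have : Complex.abs a = ‖t₀ - c‖ / r := by
      rw [ha_def, map_div₀, Complex.abs_ofReal, abs_of_pos hr]
      rfl
    rw [hdd_def, normSq_eq_abs, this]
    field_simp
  rw [habs_a_eq]
  calc P * (r ^ 2 - dd * r ^ 2) = (P * (r * (1 - dd))) * r := by ring
    _ ≤ (4 / Real.pi) * r := by nlinarith

lemma fderiv_apply_bound {n : ℕ} {F : EuclideanSpace ℂ (Fin n) → ℂ}
    (hF : DifferentiableOn ℂ F (Metric.ball 0 1))
    (hre : ∀ ξ ∈ Metric.ball (0 : EuclideanSpace ℂ (Fin n)) 1, |(F ξ).re| < 1)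
    {ζ : EuclideanSpace ℂ (Fin n)} (hζ : ‖ζ‖ < 1)
    {u : EuclideanSpace ℂ (Fin n)} (hu : ‖u‖ = 1) :
    ‖fderiv ℂ F ζ u‖ * (1 - ‖ζ‖ ^ 2) ≤ 4 / Real.pi := by
  have hπ := Real.pi_pos
  have hζ0 : 0 ≤ ‖ζ‖ := norm_nonneg ζ
  have hsq : 0 < 1 - ‖ζ‖ ^ 2 := by nlinarith
  set b : ℂ := @inner ℂ _ _ ζ u with hb_def
  have hb : Complex.abs b ≤ ‖ζ‖ := by
    have := norm_inner_le_norm (𝕜 := ℂ) ζ u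
    rwa [hu, mul_one, ← hb_def, Complex.norm_eq_abs] at this
  set c : ℂ := -((starRingEnd ℂ) b) with hc_def
  have habsc : Complex.abs c = Complex.abs b := by
    rw [hc_def, map_neg_eq_map, Complex.abs_conj]
  set r : ℝ := Real.sqrt (1 - ‖ζ‖ ^ 2 + Complex.abs b ^ 2) with hr_def
  have hr2nn : (0:ℝ) ≤ 1 - ‖ζ‖ ^ 2 + Complex.abs b ^ 2 := by nlinarith [Complex.abs.nonneg b]
  have hrsq : r ^ 2 = 1 - ‖ζ‖ ^ 2 + Complex.abs b ^ 2 := Real.sq_sqrt hr2nn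
  have hr0 : 0 ≤ r := Real.sqrt_nonneg _
  have hr1 : r ≤ 1 := by
    rw [← Real.sqrt_one, hr_def]
    apply Real.sqrt_le_sqrt
    nlinarith [hb, Complex.abs.nonneg b]
  -- the key norm identity
  have key : ∀ t : ℂ, ‖ζ + t • u‖ ^ 2 = ‖ζ‖ ^ 2 - Complex.abs b ^ 2 + ‖t - c‖ ^ 2 := by
    intro t
    have h1 : ‖ζ + t • u‖ ^ 2 = ‖ζ‖ ^ 2 + 2 * (t * b).re + Complex.abs t ^ 2 := by
      rw [@norm_add_sq ℂ]
      rw [inner_smul_right]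
      rw [norm_smul, hu, mul_one]
      simp only [RCLike.re_to_complex, Complex.norm_eq_abs, mul_pow]
      try rw [← hb_def]
      try ring
    have h2 : ‖t - c‖ ^ 2 = Complex.abs t ^ 2 + Complex.abs b ^ 2 + 2 * (t * b).re := by
      have : t - c = t + (starRingEnd ℂ) b := by rw [hc_def]; ring
      rw [this, Complex.norm_eq_abs, Complex.sq_abs, Complex.normSq_add]
      rw [Complex.normSq_conj, Complex.normSq_eq_abs, Complex.normSq_eq_abs]
      rw [Complex.conj_conj]
    rw [h1, h2]
    ring
  have hmaps : ∀ t ∈ Metric.ball c r, (ζ + t • u) ∈ Metric.ball (0 : EuclideanSpace ℂ (Fin n)) 1 := by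
    intro t ht
    rw [mem_ball, Complex.dist_eq] at ht
    rw [mem_ball, dist_zero_right]
    have h3 := key t
    have h4 : ‖t - c‖ ^ 2 < r ^ 2 := by
      rw [Complex.norm_eq_abs] at ht ⊢
      nlinarith [Complex.abs.nonneg (t - c)]
    nlinarith [norm_nonneg (ζ + t • u), Complex.abs.nonneg b]
  set φt : ℂ → ℂ := fun t => F (ζ + t • u) with hφt_def
  have hA : ∀ t : ℂ, HasDerivAt (fun x : ℂ => ζ + x • u) u t := by
    intro t
    have h := (hasDerivAt_id t).smul_const u
    rw [one_smul] at h
    exact h.const_add ζ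
  have hder : ∀ t ∈ Metric.ball c r, HasDerivAt φt (fderiv ℂ F (ζ + t • u) u) t := by
    intro t ht
    have hFd : DifferentiableAt ℂ F (ζ + t • u) :=
      hF.differentiableAt (isOpen_ball.mem_nhds (hmaps t ht))
    exact hFd.hasFDerivAt.comp_hasDerivAt t (hA t)
  have h0mem : (0 : ℂ) ∈ Metric.ball c r := by
    rw [mem_ball, Complex.dist_eq, zero_sub, Complex.norm_eq_abs, map_neg_eq_map, habsc]
    nlinarith [Complex.abs.nonneg b]
  have hφdiff : DifferentiableOn ℂ φt (Metric.ball c r) :=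
    fun t ht => ((hder t ht).differentiableAt).differentiableWithinAt
  have hφre : ∀ t ∈ Metric.ball c r, |(φt t).re| < 1 := fun t ht => hre _ (hmaps t ht)
  have hmain := schwarz_strip hφdiff hφre h0mem
  have hd0 : deriv φt 0 = fderiv ℂ F ζ u := by
    have := (hder 0 h0mem).deriv
    rw [this]
    congr 1
    simp
  rw [hd0] at hmain
  have hzc : ‖(0 : ℂ) - c‖ ^ 2 = Complex.abs b ^ 2 := by
    rw [zero_sub, Complex.norm_eq_abs, map_neg_eq_map, habsc]
  rw [hzc, hrsq] at hmain
  have : ‖fderiv ℂ F ζ u‖ * (1 - ‖ζ‖ ^ 2) ≤ 4 / Real.pi * r := by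
    calc ‖fderiv ℂ F ζ u‖ * (1 - ‖ζ‖ ^ 2)
        = ‖fderiv ℂ F ζ u‖ * (1 - ‖ζ‖ ^ 2 + Complex.abs b ^ 2 - Complex.abs b ^ 2) := by ring_nf
      _ ≤ 4 / Real.pi * r := hmain
  calc ‖fderiv ℂ F ζ u‖ * (1 - ‖ζ‖ ^ 2) ≤ 4 / Real.pi * r := this
    _ ≤ 4 / Real.pi := by nlinarith [hr1, hr0, div_pos (show (0:ℝ) < 4 by norm_num) hπ]

lemma fderiv_opNorm_bound {n : ℕ} {F : EuclideanSpace ℂ (Fin n) → ℂ}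
    (hF : DifferentiableOn ℂ F (Metric.ball 0 1))
    (hre : ∀ ξ ∈ Metric.ball (0 : EuclideanSpace ℂ (Fin n)) 1, |(F ξ).re| < 1)
    {ζ : EuclideanSpace ℂ (Fin n)} (hζ : ‖ζ‖ < 1) :
    ‖fderiv ℂ F ζ‖ ≤ 4 / Real.pi / (1 - ‖ζ‖ ^ 2) := by
  have hπ := Real.pi_pos
  have hζ0 : 0 ≤ ‖ζ‖ := norm_nonneg ζ
  have hsq : 0 < 1 - ‖ζ‖ ^ 2 := by nlinarith
  apply ContinuousLinearMap.opNorm_le_bound _ (by positivity)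
  intro v
  rcases eq_or_ne v 0 with rfl | hv
  · simp
  · have hnv : (‖v‖ : ℂ) ≠ 0 := by
      simpa using (norm_ne_zero_iff.mpr hv)
    set u : EuclideanSpace ℂ (Fin n) := ((‖v‖ : ℂ))⁻¹ • v with hu_def
    have hu : ‖u‖ = 1 := by
      rw [hu_def, norm_smul, norm_inv, Complex.norm_real, Real.norm_eq_abs,
        abs_of_pos (norm_pos_iff.mpr hv)]
      field_simp
    have hvu : v = (‖v‖ : ℂ) • u := by
      rw [hu_def, smul_smul, mul_inv_cancel₀ hnv, one_smul]
    have h1 := fderiv_apply_bound hF hre hζ hu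
    have h2 : ‖fderiv ℂ F ζ u‖ ≤ 4 / Real.pi / (1 - ‖ζ‖ ^ 2) := by
      rw [le_div_iff₀ hsq]
      exact h1
    calc ‖fderiv ℂ F ζ v‖ = ‖fderiv ℂ F ζ ((‖v‖ : ℂ) • u)‖ := by rw [← hvu]
      _ = ‖v‖ * ‖fderiv ℂ F ζ u‖ := by
          rw [map_smul, norm_smul, Complex.norm_real, Real.norm_eq_abs, _root_.abs_of_nonneg (norm_nonneg v)]
      _ ≤ ‖v‖ * (4 / Real.pi / (1 - ‖ζ‖ ^ 2)) := by
          exact mul_le_mul_of_nonneg_left h2 (norm_nonneg v)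
      _ = 4 / Real.pi / (1 - ‖ζ‖ ^ 2) * ‖v‖ := by ring

lemma pnormC_nonneg {ν : ℕ} (p : ℝ) (z : Fin ν → ℂ) : 0 ≤ pnormC p z := by
  apply Real.rpow_nonneg
  exact Finset.sum_nonneg fun j _ => Real.rpow_nonneg (norm_nonneg _) _

/-- Hölder: if `∑ ‖λ‖^q ≤ 1` with `q = p/(p-1)`, then `|Re ∑ λ_j y_j| ≤ ‖y‖_p`. -/
lemma holder_re {ν : ℕ} {p : ℝ} (hp : 1 < p) (lam y : Fin ν → ℂ)
    (hl : ∑ j, ‖lam j‖ ^ (p / (p - 1)) ≤ 1) :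
    |(∑ j, lam j * y j).re| ≤ pnormC p y := by
  have hpq : (p / (p - 1)).HolderConjugate p :=
    (Real.HolderConjugate.conjExponent hp).symm
  have h1 : |(∑ j, lam j * y j).re| ≤ ‖∑ j, lam j * y j‖ := by
    rw [Complex.norm_eq_abs]
    exact Complex.abs_re_le_abs _
  have h2 : ‖∑ j, lam j * y j‖ ≤ ∑ j, ‖lam j‖ * ‖y j‖ := by
    refine (norm_sum_le _ _).trans ?_
    apply Finset.sum_le_sum
    intro j _
    rw [norm_mul]
  have h3 := Real.inner_le_Lp_mul_Lq_of_nonneg (s := Finset.univ) hpq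
    (f := fun j => ‖lam j‖) (g := fun j => ‖y j‖)
    (fun j _ => norm_nonneg _) (fun j _ => norm_nonneg _)
  have h4 : (∑ j, ‖lam j‖ ^ (p / (p - 1))) ^ (1 / (p / (p - 1))) ≤ 1 := by
    apply Real.rpow_le_one
    · exact Finset.sum_nonneg fun j _ => Real.rpow_nonneg (norm_nonneg _) _
    · exact hl
    · exact le_of_lt (one_div_pos.mpr (div_pos (by linarith) (by linarith)))
  have h5 : 0 ≤ (∑ j, ‖y j‖ ^ p) ^ (1 / p) :=
    Real.rpow_nonneg (Finset.sum_nonneg fun j _ => Real.rpow_nonneg (norm_nonneg _) _) _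
  calc |(∑ j, lam j * y j).re| ≤ ∑ j, ‖lam j‖ * ‖y j‖ := h1.trans h2
    _ ≤ (∑ j, ‖lam j‖ ^ (p / (p - 1))) ^ (1 / (p / (p - 1))) * (∑ j, ‖y j‖ ^ p) ^ (1 / p) := h3
    _ ≤ 1 * (∑ j, ‖y j‖ ^ p) ^ (1 / p) := by
        exact mul_le_mul_of_nonneg_right h4 h5
    _ = pnormC p y := by rw [one_mul, pnormC]

/-- Norm attaining dual vector for the `p`-norm. -/
lemma attain {ν : ℕ} {p : ℝ} (hp : 1 < p) (x : Fin ν → ℂ) :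
    ∃ lam : Fin ν → ℂ, (∑ j, ‖lam j‖ ^ (p / (p - 1))) ≤ 1 ∧
      (∑ j, lam j * x j).re = pnormC p x := by
  have hp0 : (0:ℝ) < p := by linarith
  have hp1 : (0:ℝ) < p - 1 := by linarith
  have hq0 : (0:ℝ) < p / (p - 1) := div_pos hp0 hp1
  by_cases hx : x = 0
  · refine ⟨0, ?_, ?_⟩
    · simp [Real.zero_rpow (ne_of_gt hq0)]
    · simp [hx, pnormC, Real.zero_rpow (ne_of_gt hp0),
        Real.zero_rpow (ne_of_gt (one_div_pos.mpr hp0))]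
      exact (Real.zero_rpow (inv_ne_zero (ne_of_gt hp0))).symm
  · set S : ℝ := ∑ j, ‖x j‖ ^ p with hS_def
    have hS0 : 0 < S := by
      obtain ⟨j, hj⟩ : ∃ j, x j ≠ 0 := by
        by_contra hcon
        push_neg at hcon
        exact hx (funext hcon)
      apply Finset.sum_pos' (fun i _ => Real.rpow_nonneg (norm_nonneg _) _)
      exact ⟨j, Finset.mem_univ j, Real.rpow_pos_of_pos (norm_pos_iff.mpr hj) p⟩
    set N : ℝ := S ^ (1/p) with hN_def
    have hN0 : 0 < N := Real.rpow_pos_of_pos hS0 _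
    have hNp1 : 0 < N ^ (p-1) := Real.rpow_pos_of_pos hN0 _
    set lam : Fin ν → ℂ :=
      fun j => (starRingEnd ℂ) (x j) * (((‖x j‖ ^ (p - 2)) / N ^ (p - 1) : ℝ) : ℂ) with hlam_def
    have hA : ∀ j, ‖lam j‖ = ‖x j‖ ^ (p-1) / N ^ (p-1) := by
      intro j
      rw [hlam_def]
      simp only
      have ht : (0:ℝ) ≤ ‖x j‖ ^ (p - 2) / N ^ (p - 1) := by positivity
      rw [norm_mul, Complex.norm_real, Real.norm_eq_abs, _root_.abs_of_nonneg ht,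
        RCLike.norm_conj]
      rcases eq_or_ne (x j) 0 with h0 | h0
      · rw [h0]
        simp [Real.zero_rpow (ne_of_gt hp1)]
      · have hpos : 0 < ‖x j‖ := norm_pos_iff.mpr h0
        rw [← mul_div_assoc]
        congr 1
        nth_rewrite 1 [← Real.rpow_one ‖x j‖]
        rw [← Real.rpow_add hpos]
        norm_num
        congr 1
        ring
    have hq_mul : (p - 1) * (p / (p - 1)) = p := by field_simp
    have hB : ∀ j, ‖lam j‖ ^ (p/(p-1)) = ‖x j‖ ^ p / N ^ p := by
      intro j
      rw [hA j, Real.div_rpow (Real.rpow_nonneg (norm_nonneg _) _) (le_of_lt hNp1)]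
      rw [← Real.rpow_mul (norm_nonneg _), ← Real.rpow_mul (le_of_lt hN0), hq_mul]
    have hNpS : N ^ p = S := by
      rw [hN_def, ← Real.rpow_mul (le_of_lt hS0)]
      rw [one_div, inv_mul_cancel₀ (ne_of_gt hp0), Real.rpow_one]
    have hsum1 : ∑ j, ‖lam j‖ ^ (p/(p-1)) = 1 := by
      simp only [hB]
      rw [← Finset.sum_div, ← hS_def, hNpS, div_self (ne_of_gt hS0)]
    have hCj : ∀ j, (lam j * x j) = ((‖x j‖ ^ p / N ^ (p-1) : ℝ) : ℂ) := by
      intro j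
      rw [hlam_def]
      simp only
      rcases eq_or_ne (x j) 0 with h0 | h0
      · rw [h0]
        simp [Real.zero_rpow (ne_of_gt hp0)]
      · have hpos : 0 < ‖x j‖ := norm_pos_iff.mpr h0
        have hid : ((starRingEnd ℂ) (x j)) * x j = ((‖x j‖^(2:ℕ) : ℝ) : ℂ) := by
          rw [← Complex.normSq_eq_conj_mul_self, Complex.normSq_eq_abs, ← Complex.norm_eq_abs]
        have hpow : (‖x j‖:ℝ)^(2:ℕ) * ‖x j‖^(p-2) = ‖x j‖^p := by
          rw [← Real.rpow_natCast ‖x j‖ 2, ← Real.rpow_add hpos]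
          norm_num
        calc (starRingEnd ℂ) (x j) * (((‖x j‖ ^ (p - 2)) / N ^ (p - 1) : ℝ) : ℂ) * x j
            = ((starRingEnd ℂ) (x j) * x j) * (((‖x j‖ ^ (p - 2)) / N ^ (p - 1) : ℝ) : ℂ) := by
              ring
          _ = ((‖x j‖^(2:ℕ) * (‖x j‖ ^ (p - 2) / N ^ (p - 1)) : ℝ) : ℂ) := by
              rw [hid, ← Complex.ofReal_mul]
          _ = ((‖x j‖ ^ p / N ^ (p-1) : ℝ) : ℂ) := by
              rw [← mul_div_assoc, hpow]
    have hCsum : (∑ j, lam j * x j).re = S / N ^ (p-1) := by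
      rw [Complex.re_sum]
      calc ∑ j, (lam j * x j).re = ∑ j, ‖x j‖^p / N^(p-1) := by
            refine Finset.sum_congr rfl fun j _ => ?_
            rw [hCj j, Complex.ofReal_re]
        _ = S / N^(p-1) := by rw [← Finset.sum_div, ← hS_def]
    have hfinal : S / N ^ (p-1) = N := by
      have e1 : N ^ (p - 1) = S ^ ((1/p) * (p-1)) := by
        rw [hN_def, ← Real.rpow_mul (le_of_lt hS0)]
      have e2 : S / S ^ ((1/p) * (p-1)) = S ^ (1 - (1/p) * (p-1)) := by
        rw [Real.rpow_sub hS0, Real.rpow_one]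
      have e3 : 1 - (1/p) * (p-1) = 1/p := by field_simp; ring
      rw [e1, e2, e3, ← hN_def]
    have hpn : pnormC p x = N := by rw [pnormC, ← hS_def, hN_def]
    exact ⟨lam, le_of_eq hsum1, by rw [hCsum, hfinal, hpn]⟩

lemma onesided {n ν : ℕ} {p : ℝ} (hp : 1 < p)
    (f h g : EuclideanSpace ℂ (Fin n) → (Fin ν → ℂ))
    (hh : DifferentiableOn ℂ h (Metric.ball 0 1))
    (hg : DifferentiableOn ℂ g (Metric.ball 0 1))
    (hfd : ∀ z ∈ Metric.ball (0 : EuclideanSpace ℂ (Fin n)) 1,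
      ∀ j, f z j = h z j + (starRingEnd ℂ) (g z j))
    (hmap : ∀ z ∈ Metric.ball (0 : EuclideanSpace ℂ (Fin n)) 1, pnormC p (f z) < 1)
    {ρ : ℝ} (hρ : ρ < 1) {w w' : EuclideanSpace ℂ (Fin n)}
    (hw : w ∈ Metric.ball (0 : EuclideanSpace ℂ (Fin n)) ρ)
    (hw' : w' ∈ Metric.ball (0 : EuclideanSpace ℂ (Fin n)) ρ) :
    pnormC p (f w) - pnormC p (f w') ≤ (4 / Real.pi / (1 - ρ ^ 2)) * ‖w - w'‖ := by
  have hπ := Real.pi_pos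
  have hρ0 : 0 < ρ := lt_of_le_of_lt dist_nonneg (mem_ball.1 hw)
  have hρsq : 0 < 1 - ρ ^ 2 := by nlinarith
  have hsub : Metric.ball (0 : EuclideanSpace ℂ (Fin n)) ρ ⊆ Metric.ball 0 1 :=
    Metric.ball_subset_ball hρ.le
  obtain ⟨lam, hlam1, hlam2⟩ := attain hp (f w)
  set F : EuclideanSpace ℂ (Fin n) → ℂ :=
    fun ζ => ∑ j, (lam j * h ζ j + (starRingEnd ℂ) (lam j) * g ζ j) with hF_def
  have hFdiff : DifferentiableOn ℂ F (Metric.ball 0 1) := by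
    apply DifferentiableOn.fun_sum
    intro j _
    have hhj : DifferentiableOn ℂ (fun ζ => h ζ j) (Metric.ball 0 1) :=
      (ContinuousLinearMap.proj (R := ℂ) (φ := fun _ : Fin ν => ℂ)
        j).differentiable.comp_differentiableOn hh
    have hgj : DifferentiableOn ℂ (fun ζ => g ζ j) (Metric.ball 0 1) :=
      (ContinuousLinearMap.proj (R := ℂ) (φ := fun _ : Fin ν => ℂ)
        j).differentiable.comp_differentiableOn hg
    exact (hhj.const_mul (lam j)).add (hgj.const_mul ((starRingEnd ℂ) (lam j)))
  have hrel : ∀ ζ ∈ Metric.ball (0 : EuclideanSpace ℂ (Fin n)) 1,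
      (F ζ).re = (∑ j, lam j * f ζ j).re := by
    intro ζ hζ
    rw [hF_def]
    simp only
    rw [Complex.re_sum, Complex.re_sum]
    apply Finset.sum_congr rfl
    intro j _
    rw [hfd ζ hζ j]
    simp only [Complex.mul_re, Complex.add_re, Complex.add_im, Complex.conj_re, Complex.conj_im,
      Complex.mul_im]
    ring
  have hre : ∀ ζ ∈ Metric.ball (0 : EuclideanSpace ℂ (Fin n)) 1, |(F ζ).re| < 1 := by
    intro ζ hζ
    rw [hrel ζ hζ]
    exact lt_of_le_of_lt (holder_re hp lam (f ζ) hlam1) (hmap ζ hζ)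
  have hlip : ‖F w - F w'‖ ≤ (4 / Real.pi / (1 - ρ ^ 2)) * ‖w - w'‖ := by
    apply Convex.norm_image_sub_le_of_norm_hasFDerivWithin_le
      (f' := fun ζ => fderiv ℂ F ζ)
      (fun ζ hζ => ((hFdiff.differentiableAt
        (isOpen_ball.mem_nhds (hsub hζ))).hasFDerivAt).hasFDerivWithinAt)
      ?_ (convex_ball 0 ρ) hw' hw
    intro ζ hζ
    have hζ1 : ‖ζ‖ < 1 := by
      have := mem_ball.1 (hsub hζ); rwa [dist_zero_right] at this
    have hζρ : ‖ζ‖ < ρ := by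
      have := mem_ball.1 hζ; rwa [dist_zero_right] at this
    refine (fderiv_opNorm_bound hFdiff hre hζ1).trans ?_
    apply div_le_div_of_nonneg_left (by positivity) (by nlinarith [norm_nonneg ζ])
    nlinarith [norm_nonneg ζ]
  have h1 : pnormC p (f w) = (F w).re := by rw [hrel w (hsub hw), hlam2]
  have h2 : (F w').re ≤ pnormC p (f w') := by
    rw [hrel w' (hsub hw')]
    exact le_trans (le_abs_self _) (holder_re hp lam (f w') hlam1)
  calc pnormC p (f w) - pnormC p (f w') ≤ (F w).re - (F w').re := by linarith
    _ = (F w - F w').re := (Complex.sub_re _ _).symm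
    _ ≤ ‖F w - F w'‖ := by rw [Complex.norm_eq_abs]; exact Complex.re_le_abs _
    _ ≤ (4 / Real.pi / (1 - ρ ^ 2)) * ‖w - w'‖ := hlip

end Auxiliary

open Complex Metric Filter in
theorem stmt1 (n ν : ℕ) (hn : 1 ≤ n) (hν : 1 ≤ ν) (p : ℝ) (hp : 1 < p)
    (f h g : EuclideanSpace ℂ (Fin n) → (Fin ν → ℂ))
    (hh : DifferentiableOn ℂ h (Metric.ball 0 1))
    (hg : DifferentiableOn ℂ g (Metric.ball 0 1))
    (hg0 : g 0 = 0)
    (hfd : ∀ z ∈ Metric.ball (0 : EuclideanSpace ℂ (Fin n)) 1,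
      ∀ j, f z j = h z j + (starRingEnd ℂ) (g z j))
    (hmap : ∀ z ∈ Metric.ball (0 : EuclideanSpace ℂ (Fin n)) 1, pnormC p (f z) < 1)
    (z : EuclideanSpace ℂ (Fin n)) (hz : ‖z‖ < 1) :
    gradPnormC p f z ≤ (4 / Real.pi) * (1 / (1 - ‖z‖ ^ 2)) := by
  have hπ := Real.pi_pos
  haveI : Nontrivial (EuclideanSpace ℂ (Fin n)) := by
    refine ⟨EuclideanSpace.single ⟨0, hn⟩ 1, 0, ?_⟩
    intro hcon
    have := congrArg (fun x : EuclideanSpace ℂ (Fin n) => x ⟨0, hn⟩) hcon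
    simp [EuclideanSpace.single] at this
  haveI : Filter.NeBot (𝓝[≠] z) := Module.punctured_nhds_neBot ℂ (EuclideanSpace ℂ (Fin n)) z
  have hQ0 : ∀ w, 0 ≤ |pnormC p (f w) - pnormC p (f z)| / ‖w - z‖ :=
    fun w => div_nonneg (abs_nonneg _) (norm_nonneg _)
  have hcob : Filter.IsCoboundedUnder (· ≤ ·) (𝓝[≠] z)
      (fun w => |pnormC p (f w) - pnormC p (f z)| / ‖w - z‖) :=
    Filter.isCoboundedUnder_le_of_le _ (x := 0) (fun w => hQ0 w)
  -- per-ρ bound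
  have key : ∀ ρ ∈ Set.Ioo ‖z‖ 1, gradPnormC p f z ≤ 4 / Real.pi / (1 - ρ ^ 2) := by
    rintro ρ ⟨hρ1, hρ2⟩
    apply Filter.limsup_le_of_le hcob
    have hmem : Metric.ball (0 : EuclideanSpace ℂ (Fin n)) ρ ∈ 𝓝[≠] z := by
      apply mem_nhdsWithin_of_mem_nhds
      apply isOpen_ball.mem_nhds
      rw [mem_ball, dist_zero_right]
      exact hρ1
    filter_upwards [hmem, self_mem_nhdsWithin] with w hwmem hwne
    have hzmem : z ∈ Metric.ball (0 : EuclideanSpace ℂ (Fin n)) ρ := by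
      rw [mem_ball, dist_zero_right]; exact hρ1
    have hwz : (0:ℝ) < ‖w - z‖ := by
      rw [norm_pos_iff, sub_ne_zero]
      exact hwne
    rw [div_le_iff₀ hwz, abs_sub_le_iff]
    constructor
    · exact onesided hp f h g hh hg hfd hmap hρ2 hwmem hzmem
    · have := onesided hp f h g hh hg hfd hmap hρ2 hzmem hwmem
      rwa [norm_sub_rev] at this
  -- pass to the limit ρ → ‖z‖⁺
  have hzsq : 0 < 1 - ‖z‖ ^ 2 := by nlinarith [norm_nonneg z]
  have hcont : Filter.Tendsto (fun ρ : ℝ => 4 / Real.pi / (1 - ρ ^ 2)) (𝓝[>] ‖z‖)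
      (𝓝 (4 / Real.pi / (1 - ‖z‖ ^ 2))) := by
    apply Filter.Tendsto.mono_left _ nhdsWithin_le_nhds
    apply ContinuousAt.tendsto
    apply ContinuousAt.div continuousAt_const
    · exact (continuous_const.sub (continuous_pow 2)).continuousAt
    · exact ne_of_gt hzsq
  have hev : ∀ᶠ ρ in 𝓝[>] ‖z‖, gradPnormC p f z ≤ 4 / Real.pi / (1 - ρ ^ 2) := by
    filter_upwards [Ioo_mem_nhdsGT_of_mem (Set.left_mem_Ico.mpr hz)] with ρ hρ
    exact key ρ hρ
  have := le_of_tendsto_of_tendsto tendsto_const_nhds hcont hev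
  calc gradPnormC p f z ≤ 4 / Real.pi / (1 - ‖z‖ ^ 2) := this
    _ = (4 / Real.pi) * (1 / (1 - ‖z‖ ^ 2)) := by ring
end

section
/- Let n ≥ 1 and let ν be a positive integer. If f = (f₁,…,f_ν) : 𝔹_{ℓ_∞ⁿ} → 𝔹_{ℓ₂^ν} is a pluriharmonic function on the unit polydisc, then for every z ∈ 𝔹_{ℓ_∞ⁿ}, Σ_{j=1}^{ν} Σ_{k=1}^{n} ( |∂f_j(z)/∂z_k|² + |∂f_j(z)/∂z̄_k|² ) ≤ (1 − ‖f(z)‖₂²)/(1 − ‖z‖_∞²)². -/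
open scoped BigOperators

/-- The Euclidean (ℓ²) norm on `ℂ^ν`. -/
noncomputable def eNorm2 {ν : ℕ} (w : Fin ν → ℂ) : ℝ :=
  Real.sqrt (∑ j, ‖w j‖ ^ 2)

open Complex intervalIntegral Metric


noncomputable def cexp1 (θ : ℝ) : ℂ := Complex.exp (θ * Complex.I)

lemma cexp1_cont : Continuous cexp1 := by
  unfold cexp1; fun_prop

lemma em_conj (θ : ℝ) : (starRingEnd ℂ) (cexp1 θ) = (cexp1 θ)⁻¹ := by
  rw [cexp1, ← Complex.exp_conj, ← Complex.exp_neg]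
  congr 1
  simp

lemma em_mul_conj (θ : ℝ) : cexp1 θ * (starRingEnd ℂ) (cexp1 θ) = 1 := by
  rw [em_conj]
  exact mul_inv_cancel₀ (by simp [cexp1, Complex.exp_ne_zero])

lemma integral_em_pow (m : ℤ) (hm : m ≠ 0) :
    ∫ θ in (0:ℝ)..(2*Real.pi), (cexp1 θ)^m = 0 := by
  have h : ∀ θ : ℝ, (cexp1 θ)^m = Complex.exp ((m * Complex.I) * θ) := by
    intro θ
    rw [cexp1, ← Complex.exp_int_mul]
    ring_nf
  simp only [h]
  rw [integral_exp_mul_complex (by simp [Complex.I_ne_zero, hm])]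
  have : Complex.exp (m * Complex.I * (2 * Real.pi)) = 1 := by
    have : (m : ℂ) * Complex.I * (2 * Real.pi) = (m : ℤ) * (2 * Real.pi * Complex.I) := by ring
    rw [this, Complex.exp_int_mul_two_pi_mul_I]
  simp [this]

lemma integral_em : ∫ θ in (0:ℝ)..(2*Real.pi), cexp1 θ = 0 := by
  simpa using integral_em_pow 1 one_ne_zero

lemma integral_em_conj : ∫ θ in (0:ℝ)..(2*Real.pi), (starRingEnd ℂ) (cexp1 θ) = 0 := by
  simp only [em_conj]
  simpa [zpow_neg, zpow_one] using integral_em_pow (-1) (by norm_num)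

lemma integral_em_sq : ∫ θ in (0:ℝ)..(2*Real.pi), cexp1 θ * cexp1 θ = 0 := by
  have := integral_em_pow 2 (by norm_num)
  simpa [zpow_two, sq] using this

lemma integral_em_conj_sq :
    ∫ θ in (0:ℝ)..(2*Real.pi), (starRingEnd ℂ) (cexp1 θ) * (starRingEnd ℂ) (cexp1 θ) = 0 := by
  simp only [em_conj]
  have h : ∀ θ : ℝ, (cexp1 θ)⁻¹ * (cexp1 θ)⁻¹ = (cexp1 θ)^(-2:ℤ) := by
    intro θ
    rw [zpow_neg, zpow_two, mul_inv]
  simp only [h]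
  exact integral_em_pow (-2) (by norm_num)

section
variable {u : ℝ → ℂ} (c0 c1 cm1 : ℂ)

lemma integral_mul_conj_s (hu : Continuous u)
    (H0 : ∫ θ in (0:ℝ)..(2*Real.pi), u θ = 2*Real.pi*c0)
    (H1 : ∫ θ in (0:ℝ)..(2*Real.pi), (starRingEnd ℂ) (cexp1 θ) * u θ = 2*Real.pi*c1)
    (H2 : ∫ θ in (0:ℝ)..(2*Real.pi), cexp1 θ * u θ = 2*Real.pi*cm1) :
    ∫ θ in (0:ℝ)..(2*Real.pi),
        u θ * (starRingEnd ℂ) (c0 + c1 * cexp1 θ + cm1 * (starRingEnd ℂ) (cexp1 θ))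
      = 2*Real.pi*(Complex.normSq c0 + Complex.normSq c1 + Complex.normSq cm1) := by
  have hptw : ∀ θ : ℝ,
      u θ * (starRingEnd ℂ) (c0 + c1 * cexp1 θ + cm1 * (starRingEnd ℂ) (cexp1 θ))
      = (starRingEnd ℂ) c0 * u θ + (starRingEnd ℂ) c1 * ((starRingEnd ℂ) (cexp1 θ) * u θ)
        + (starRingEnd ℂ) cm1 * (cexp1 θ * u θ) := by
    intro θ
    simp only [map_add, map_mul, Complex.conj_conj]
    ring
  simp only [hptw]
  have i1 : IntervalIntegrable (fun θ => (starRingEnd ℂ) c0 * u θ) MeasureTheory.volume 0 (2*Real.pi) :=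
    (by fun_prop : Continuous fun θ => (starRingEnd ℂ) c0 * u θ).intervalIntegrable _ _
  have i2 : IntervalIntegrable (fun θ => (starRingEnd ℂ) c1 * ((starRingEnd ℂ) (cexp1 θ) * u θ))
      MeasureTheory.volume 0 (2*Real.pi) :=
    (continuous_const.mul ((Complex.continuous_conj.comp cexp1_cont).mul hu)).intervalIntegrable _ _
  have i3 : IntervalIntegrable (fun θ => (starRingEnd ℂ) cm1 * (cexp1 θ * u θ))
      MeasureTheory.volume 0 (2*Real.pi) :=
    (continuous_const.mul (cexp1_cont.mul hu)).intervalIntegrable _ _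
  rw [intervalIntegral.integral_add (i1.add i2) i3, intervalIntegral.integral_add i1 i2,
    intervalIntegral.integral_const_mul, intervalIntegral.integral_const_mul,
    intervalIntegral.integral_const_mul, H0, H1, H2]
  rw [← Complex.mul_conj, ← Complex.mul_conj, ← Complex.mul_conj]
  ring
end

section
variable (c0 c1 cm1 : ℂ)

lemma s_cont : Continuous (fun θ => c0 + c1 * cexp1 θ + cm1 * (starRingEnd ℂ) (cexp1 θ)) :=
  (continuous_const.add (continuous_const.mul cexp1_cont)).add
    (continuous_const.mul (Complex.continuous_conj.comp cexp1_cont))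

lemma sM0 : ∫ θ in (0:ℝ)..(2*Real.pi),
    (c0 + c1 * cexp1 θ + cm1 * (starRingEnd ℂ) (cexp1 θ)) = 2*Real.pi*c0 := by
  have i1 : IntervalIntegrable (fun _ : ℝ => c0) MeasureTheory.volume 0 (2*Real.pi) :=
    intervalIntegrable_const
  have i2 : IntervalIntegrable (fun θ => c1 * cexp1 θ) MeasureTheory.volume 0 (2*Real.pi) :=
    (continuous_const.mul cexp1_cont).intervalIntegrable _ _
  have i3 : IntervalIntegrable (fun θ => cm1 * (starRingEnd ℂ) (cexp1 θ))
      MeasureTheory.volume 0 (2*Real.pi) :=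
    (continuous_const.mul (Complex.continuous_conj.comp cexp1_cont)).intervalIntegrable _ _
  rw [intervalIntegral.integral_add (i1.add i2) i3, intervalIntegral.integral_add i1 i2,
    intervalIntegral.integral_const_mul, intervalIntegral.integral_const_mul,
    integral_em, integral_em_conj, intervalIntegral.integral_const]
  simp [Complex.real_smul]

lemma sM1 : ∫ θ in (0:ℝ)..(2*Real.pi),
    (starRingEnd ℂ) (cexp1 θ) * (c0 + c1 * cexp1 θ + cm1 * (starRingEnd ℂ) (cexp1 θ))
      = 2*Real.pi*c1 := by
  have hptw : ∀ θ : ℝ,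
      (starRingEnd ℂ) (cexp1 θ) * (c0 + c1 * cexp1 θ + cm1 * (starRingEnd ℂ) (cexp1 θ))
      = c0 * (starRingEnd ℂ) (cexp1 θ) + c1
        + cm1 * ((starRingEnd ℂ) (cexp1 θ) * (starRingEnd ℂ) (cexp1 θ)) := by
    intro θ
    linear_combination c1 * (em_mul_conj θ)
  simp only [hptw]
  have i1 : IntervalIntegrable (fun θ => c0 * (starRingEnd ℂ) (cexp1 θ))
      MeasureTheory.volume 0 (2*Real.pi) :=
    (continuous_const.mul (Complex.continuous_conj.comp cexp1_cont)).intervalIntegrable _ _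
  have i2 : IntervalIntegrable (fun _ : ℝ => c1) MeasureTheory.volume 0 (2*Real.pi) :=
    intervalIntegrable_const
  have i3 : IntervalIntegrable
      (fun θ => cm1 * ((starRingEnd ℂ) (cexp1 θ) * (starRingEnd ℂ) (cexp1 θ)))
      MeasureTheory.volume 0 (2*Real.pi) :=
    (continuous_const.mul ((Complex.continuous_conj.comp cexp1_cont).mul
      (Complex.continuous_conj.comp cexp1_cont))).intervalIntegrable _ _
  rw [intervalIntegral.integral_add (i1.add i2) i3, intervalIntegral.integral_add i1 i2,
    intervalIntegral.integral_const_mul, intervalIntegral.integral_const_mul,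
    integral_em_conj, integral_em_conj_sq, intervalIntegral.integral_const]
  simp [Complex.real_smul]

lemma sM2 : ∫ θ in (0:ℝ)..(2*Real.pi),
    cexp1 θ * (c0 + c1 * cexp1 θ + cm1 * (starRingEnd ℂ) (cexp1 θ))
      = 2*Real.pi*cm1 := by
  have hptw : ∀ θ : ℝ,
      cexp1 θ * (c0 + c1 * cexp1 θ + cm1 * (starRingEnd ℂ) (cexp1 θ))
      = c0 * cexp1 θ + c1 * (cexp1 θ * cexp1 θ) + cm1 := by
    intro θ
    linear_combination cm1 * (em_mul_conj θ)
  simp only [hptw]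
  have i1 : IntervalIntegrable (fun θ => c0 * cexp1 θ) MeasureTheory.volume 0 (2*Real.pi) :=
    (continuous_const.mul cexp1_cont).intervalIntegrable _ _
  have i2 : IntervalIntegrable (fun θ => c1 * (cexp1 θ * cexp1 θ))
      MeasureTheory.volume 0 (2*Real.pi) :=
    (continuous_const.mul (cexp1_cont.mul cexp1_cont)).intervalIntegrable _ _
  have i3 : IntervalIntegrable (fun _ : ℝ => cm1) MeasureTheory.volume 0 (2*Real.pi) :=
    intervalIntegrable_const
  rw [intervalIntegral.integral_add (i1.add i2) i3, intervalIntegral.integral_add i1 i2,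
    intervalIntegral.integral_const_mul, intervalIntegral.integral_const_mul,
    integral_em, integral_em_sq, intervalIntegral.integral_const]
  simp [Complex.real_smul]

end

lemma norm_sub_sq_c (z w : ℂ) :
    ‖z - w‖^2 = ‖z‖^2 - 2*(z * (starRingEnd ℂ) w).re + (w * (starRingEnd ℂ) w).re := by
  rw [Complex.sq_norm, Complex.sq_norm,
    Complex.normSq_sub, Complex.mul_conj, Complex.ofReal_re]
  ring

lemma bessel {u : ℝ → ℂ} (hu : Continuous u) (c0 c1 cm1 : ℂ)
    (H0 : ∫ θ in (0:ℝ)..(2*Real.pi), u θ = 2*Real.pi*c0)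
    (H1 : ∫ θ in (0:ℝ)..(2*Real.pi), (starRingEnd ℂ) (cexp1 θ) * u θ = 2*Real.pi*c1)
    (H2 : ∫ θ in (0:ℝ)..(2*Real.pi), cexp1 θ * u θ = 2*Real.pi*cm1) :
    2*Real.pi*(‖c0‖^2 + ‖c1‖^2 + ‖cm1‖^2) ≤ ∫ θ in (0:ℝ)..(2*Real.pi), ‖u θ‖^2 := by
  set s : ℝ → ℂ := fun θ => c0 + c1 * cexp1 θ + cm1 * (starRingEnd ℂ) (cexp1 θ) with hs
  have hsc : Continuous s := s_cont c0 c1 cm1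
  have hus := integral_mul_conj_s c0 c1 cm1 hu H0 H1 H2
  have hss := integral_mul_conj_s c0 c1 cm1 hsc (sM0 c0 c1 cm1) (sM1 c0 c1 cm1) (sM2 c0 c1 cm1)
  set Sr : ℝ := Complex.normSq c0 + Complex.normSq c1 + Complex.normSq cm1 with hSr
  have hcast : (2 * (Real.pi:ℂ) * ((Complex.normSq c0 : ℂ) + (Complex.normSq c1 : ℂ)
      + (Complex.normSq cm1 : ℂ))) = ((2*Real.pi*Sr : ℝ) : ℂ) := by
    rw [hSr]
    push_cast
    ring
  have hire : ∀ {v : ℝ → ℂ}, Continuous v →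
      (∫ θ in (0:ℝ)..(2*Real.pi), v θ * (starRingEnd ℂ) (s θ) = ((2*Real.pi*Sr : ℝ) : ℂ)) →
      ∫ θ in (0:ℝ)..(2*Real.pi), (v θ * (starRingEnd ℂ) (s θ)).re = 2*Real.pi*Sr := by
    intro v hv hint
    have hint' : IntervalIntegrable (fun θ => v θ * (starRingEnd ℂ) (s θ))
        MeasureTheory.volume 0 (2*Real.pi) :=
      (hv.mul (Complex.continuous_conj.comp hsc)).intervalIntegrable _ _
    have h2 : (∫ θ in (0:ℝ)..(2*Real.pi), (v θ * (starRingEnd ℂ) (s θ)).re)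
        = Complex.reCLM (∫ θ in (0:ℝ)..(2*Real.pi), v θ * (starRingEnd ℂ) (s θ)) :=
      Complex.reCLM.intervalIntegral_comp_comm hint'
    rw [h2, hint]
    simp
  have hure : ∫ θ in (0:ℝ)..(2*Real.pi), (u θ * (starRingEnd ℂ) (s θ)).re = 2*Real.pi*Sr :=
    hire hu (by rw [hus, hcast])
  have hsre : ∫ θ in (0:ℝ)..(2*Real.pi), (s θ * (starRingEnd ℂ) (s θ)).re = 2*Real.pi*Sr :=
    hire hsc (by rw [hss, hcast])
  have iu : IntervalIntegrable (fun θ => ‖u θ‖^2) MeasureTheory.volume 0 (2*Real.pi) :=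
    ((hu.norm.pow 2)).intervalIntegrable _ _
  have iur : IntervalIntegrable (fun θ => (u θ * (starRingEnd ℂ) (s θ)).re)
      MeasureTheory.volume 0 (2*Real.pi) :=
    ((Complex.continuous_re.comp (hu.mul (Complex.continuous_conj.comp hsc)))).intervalIntegrable _ _
  have isr : IntervalIntegrable (fun θ => (s θ * (starRingEnd ℂ) (s θ)).re)
      MeasureTheory.volume 0 (2*Real.pi) :=
    ((Complex.continuous_re.comp (hsc.mul (Complex.continuous_conj.comp hsc)))).intervalIntegrable _ _
  have key : ∫ θ in (0:ℝ)..(2*Real.pi), ‖u θ - s θ‖^2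
      = (∫ θ in (0:ℝ)..(2*Real.pi), ‖u θ‖^2) - 2*(2*Real.pi*Sr) + 2*Real.pi*Sr := by
    have hptw : ∀ θ : ℝ, ‖u θ - s θ‖^2
        = ‖u θ‖^2 - 2*(u θ * (starRingEnd ℂ) (s θ)).re + (s θ * (starRingEnd ℂ) (s θ)).re :=
      fun θ => norm_sub_sq_c (u θ) (s θ)
    simp only [hptw]
    rw [intervalIntegral.integral_add (iu.sub (iur.const_mul 2)) isr,
      intervalIntegral.integral_sub iu (iur.const_mul 2),
      intervalIntegral.integral_const_mul, hure, hsre]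
  have hnn : 0 ≤ ∫ θ in (0:ℝ)..(2*Real.pi), ‖u θ - s θ‖^2 :=
    intervalIntegral.integral_nonneg (by positivity) (fun x _ => by positivity)
  rw [key] at hnn
  have hfin : 2*Real.pi*Sr ≤ ∫ θ in (0:ℝ)..(2*Real.pi), ‖u θ‖^2 := by linarith
  have : ‖c0‖^2 + ‖c1‖^2 + ‖cm1‖^2 = Sr := by
    rw [hSr]
    simp [Complex.sq_norm]
  rw [this]
  exact hfin



lemma circleMap_eq (r θ : ℝ) : circleMap 0 r θ = r * cexp1 θ := by
  simp [circleMap, cexp1]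

lemma moment0 {φ : ℂ → ℂ} {r : ℝ} (hr : 0 < r)
    (hd : DifferentiableOn ℂ φ (closedBall 0 r)) :
    ∫ θ in (0:ℝ)..(2*Real.pi), φ (circleMap 0 r θ) = 2 * Real.pi * φ 0 := by
  have hdc : DiffContOnCl ℂ φ (ball 0 r) :=
    ⟨hd.mono ball_subset_closedBall, hd.continuousOn.mono closure_ball_subset_closedBall⟩
  have h := hdc.circleIntegral_sub_inv_smul (mem_ball_self hr)
  rw [circleIntegral] at h
  have h2 : ∀ θ : ℝ, deriv (circleMap 0 r) θ • ((circleMap 0 r θ - 0)⁻¹ • φ (circleMap 0 r θ))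
      = Complex.I * φ (circleMap 0 r θ) := by
    intro θ
    have hne : circleMap 0 r θ ≠ 0 := circleMap_ne_center hr.ne'
    simp only [deriv_circleMap, smul_eq_mul, sub_zero]
    field_simp
  simp only [h2] at h
  rw [intervalIntegral.integral_const_mul] at h
  have hI : (Complex.I : ℂ) ≠ 0 := Complex.I_ne_zero
  apply mul_left_cancel₀ hI
  rw [h]
  simp [smul_eq_mul]
  ring

lemma moment2 {φ : ℂ → ℂ} {r : ℝ} (hr : 0 < r)
    (hd : DifferentiableOn ℂ φ (closedBall 0 r)) :
    ∫ θ in (0:ℝ)..(2*Real.pi), cexp1 θ * φ (circleMap 0 r θ) = 0 := by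
  have h := circleIntegral_eq_zero_of_differentiable_on_off_countable hr.le
    Set.countable_empty (hd.continuousOn)
    (fun z hz => (hd.mono ball_subset_closedBall).differentiableAt (isOpen_ball.mem_nhds hz.1))
  rw [circleIntegral] at h
  have h2 : ∀ θ : ℝ, deriv (circleMap 0 r) θ • φ (circleMap 0 r θ)
      = (Complex.I * r) * (cexp1 θ * φ (circleMap 0 r θ)) := by
    intro θ
    simp only [deriv_circleMap, smul_eq_mul, circleMap_eq]
    ring
  simp only [h2] at h
  rw [intervalIntegral.integral_const_mul] at h
  rcases mul_eq_zero.1 h with h' | h'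
  · exact absurd h' (by simp [Complex.I_ne_zero, hr.ne'])
  · exact h'

lemma moment1 {φ : ℂ → ℂ} {r : ℝ} (hr : 0 < r)
    (hd : DifferentiableOn ℂ φ (closedBall 0 r)) :
    ∫ θ in (0:ℝ)..(2*Real.pi), (cexp1 θ)⁻¹ * φ (circleMap 0 r θ)
      = 2 * Real.pi * r * deriv φ 0 := by
  lift r to NNReal using hr.le with R hR
  have hR0 : 0 < R := by exact_mod_cast hr
  have hp := hd.hasFPowerSeriesOnBall hR0
  have hder : deriv φ 0 = (cauchyPowerSeries φ 0 R).coeff 1 :=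
    hp.hasFPowerSeriesAt.deriv
  have hco : (cauchyPowerSeries φ 0 R).coeff 1
      = (2 * Real.pi * Complex.I : ℂ)⁻¹ •
        ∮ z in C(0, (R:ℝ)), ((1:ℂ) / (z - 0)) ^ 1 • (z - 0)⁻¹ • φ z := by
    rw [FormalMultilinearSeries.coeff]
    exact cauchyPowerSeries_apply φ 0 R 1 1
  have h2 : ∀ θ : ℝ, deriv (circleMap 0 (R:ℝ)) θ •
        (((1:ℂ) / (circleMap 0 (R:ℝ) θ - 0)) ^ 1 • (circleMap 0 (R:ℝ) θ - 0)⁻¹ •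
          φ (circleMap 0 (R:ℝ) θ))
      = (Complex.I / (R:ℝ)) * ((cexp1 θ)⁻¹ * φ (circleMap 0 (R:ℝ) θ)) := by
    intro θ
    have hne : cexp1 θ ≠ 0 := by simp [cexp1, Complex.exp_ne_zero]
    have hRne : ((R:ℝ) : ℂ) ≠ 0 := by exact_mod_cast hr.ne'
    simp only [deriv_circleMap, smul_eq_mul, sub_zero, circleMap_eq, pow_one]
    field_simp
  rw [circleIntegral] at hco
  simp only [h2] at hco
  rw [intervalIntegral.integral_const_mul] at hco
  rw [hco] at hder
  rw [hder]
  have hπ : (Real.pi : ℂ) ≠ 0 := by exact_mod_cast Real.pi_ne_zero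
  have hRne : ((R:ℝ) : ℂ) ≠ 0 := by exact_mod_cast hr.ne'
  rw [smul_eq_mul]
  field_simp

lemma conj_intervalIntegral {w : ℝ → ℂ} (hw : Continuous w) :
    (∫ θ in (0:ℝ)..(2*Real.pi), (starRingEnd ℂ) (w θ))
      = (starRingEnd ℂ) (∫ θ in (0:ℝ)..(2*Real.pi), w θ) :=
  Complex.conjCLE.toContinuousLinearMap.intervalIntegral_comp_comm
    (hw.intervalIntegrable _ _)

lemma key1 {ν : ℕ} {A B : ℂ → Fin ν → ℂ}
    (hA : DifferentiableOn ℂ A (ball 0 1)) (hB : DifferentiableOn ℂ B (ball 0 1))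
    (hbd : ∀ w ∈ ball (0:ℂ) 1, ∑ j, ‖A w j + (starRingEnd ℂ) (B w j)‖^2 ≤ 1)
    {a b : Fin ν → ℂ}
    (hA' : ∀ j, HasDerivAt (fun w => A w j) (a j) 0)
    (hB' : ∀ j, HasDerivAt (fun w => B w j) (b j) 0) :
    (∑ j, ‖A 0 j + (starRingEnd ℂ) (B 0 j)‖^2) + ∑ j, (‖a j‖^2 + ‖b j‖^2) ≤ 1 := by
  set C : ℝ := ∑ j, ‖A 0 j + (starRingEnd ℂ) (B 0 j)‖^2 with hC
  set D : ℝ := ∑ j, (‖a j‖^2 + ‖b j‖^2) with hD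
  have claim : ∀ r ∈ Set.Ioo (0:ℝ) 1, C + r^2 * D ≤ 1 := by
    intro r hr
    have hsub : closedBall (0:ℂ) r ⊆ ball 0 1 :=
      (closedBall_subset_ball hr.2)
    have hAr : DifferentiableOn ℂ A (closedBall 0 r) := hA.mono hsub
    have hBr : DifferentiableOn ℂ B (closedBall 0 r) := hB.mono hsub
    have hAj : ∀ j, DifferentiableOn ℂ (fun w => A w j) (closedBall 0 r) := by
      intro j w hw
      exact (differentiableWithinAt_pi.1 (hAr w hw)) j
    have hBj : ∀ j, DifferentiableOn ℂ (fun w => B w j) (closedBall 0 r) := by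
      intro j w hw
      exact (differentiableWithinAt_pi.1 (hBr w hw)) j
    have hmem : ∀ θ : ℝ, circleMap 0 r θ ∈ ball (0:ℂ) 1 := by
      intro θ
      rw [mem_ball_zero_iff]
      calc ‖circleMap 0 r θ‖ = |r| := by
            exact norm_circleMap_zero r θ
        _ < 1 := by rw [abs_of_pos hr.1]; exact hr.2
    have hcm : Continuous (circleMap 0 r) := continuous_circleMap 0 r
    have hAc : ∀ j, Continuous (fun θ : ℝ => A (circleMap 0 r θ) j) := by
      intro j
      exact (continuous_apply j).comp
        ((hA.continuousOn.comp_continuous hcm) fun θ => hmem θ)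
    have hBc : ∀ j, Continuous (fun θ : ℝ => B (circleMap 0 r θ) j) := by
      intro j
      exact (continuous_apply j).comp
        ((hB.continuousOn.comp_continuous hcm) fun θ => hmem θ)
    -- per-component Bessel
    have main : ∀ j, 2*Real.pi*(‖A 0 j + (starRingEnd ℂ) (B 0 j)‖^2
          + r^2*‖a j‖^2 + r^2*‖b j‖^2)
        ≤ ∫ θ in (0:ℝ)..(2*Real.pi),
            ‖A (circleMap 0 r θ) j + (starRingEnd ℂ) (B (circleMap 0 r θ) j)‖^2 := by
      intro j
      set u : ℝ → ℂ :=
        fun θ => A (circleMap 0 r θ) j + (starRingEnd ℂ) (B (circleMap 0 r θ) j) with hu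
      have huc : Continuous u := (hAc j).add (Complex.continuous_conj.comp (hBc j))
      have hconj2pi : ∀ w : ℂ, (starRingEnd ℂ) (2*(Real.pi:ℂ)*w)
          = 2*(Real.pi:ℂ)*(starRingEnd ℂ) w := by
        intro w
        simp [map_mul, map_ofNat, Complex.conj_ofReal]
      have H0 : ∫ θ in (0:ℝ)..(2*Real.pi), u θ
          = 2*Real.pi*(A 0 j + (starRingEnd ℂ) (B 0 j)) := by
        have i1 : IntervalIntegrable (fun θ => A (circleMap 0 r θ) j)
            MeasureTheory.volume 0 (2*Real.pi) := (hAc j).intervalIntegrable _ _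
        have i2 : IntervalIntegrable (fun θ => (starRingEnd ℂ) (B (circleMap 0 r θ) j))
            MeasureTheory.volume 0 (2*Real.pi) :=
          (Complex.continuous_conj.comp (hBc j)).intervalIntegrable _ _
        simp only [hu]
        rw [intervalIntegral.integral_add i1 i2,
          moment0 hr.1 (hAj j), conj_intervalIntegral (hBc j), moment0 hr.1 (hBj j),
          hconj2pi]
        ring
      have H1 : ∫ θ in (0:ℝ)..(2*Real.pi), (starRingEnd ℂ) (cexp1 θ) * u θ
          = 2*Real.pi*((r:ℂ) * a j) := by
        have hptw : ∀ θ : ℝ, (starRingEnd ℂ) (cexp1 θ) * u θ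
            = (cexp1 θ)⁻¹ * A (circleMap 0 r θ) j
              + (starRingEnd ℂ) (cexp1 θ * B (circleMap 0 r θ) j) := by
          intro θ
          rw [hu]
          simp only [map_mul, em_conj]
          ring
        simp only [hptw]
        have i1 : IntervalIntegrable (fun θ => (cexp1 θ)⁻¹ * A (circleMap 0 r θ) j)
            MeasureTheory.volume 0 (2*Real.pi) := by
          apply Continuous.intervalIntegrable
          exact (Continuous.inv₀ cexp1_cont (by
            intro x; simp [cexp1, Complex.exp_ne_zero])).mul (hAc j)
        have i2 : IntervalIntegrable
            (fun θ => (starRingEnd ℂ) (cexp1 θ * B (circleMap 0 r θ) j))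
            MeasureTheory.volume 0 (2*Real.pi) := by
          apply Continuous.intervalIntegrable
          exact Complex.continuous_conj.comp (cexp1_cont.mul (hBc j))
        rw [intervalIntegral.integral_add i1 i2, moment1 hr.1 (hAj j),
          conj_intervalIntegral (w := fun θ => cexp1 θ * B (circleMap 0 r θ) j) (cexp1_cont.mul (hBc j)), moment2 hr.1 (hBj j),
          (hA' j).deriv]
        simp only [map_zero, add_zero]
        ring
      have H2 : ∫ θ in (0:ℝ)..(2*Real.pi), cexp1 θ * u θ
          = 2*Real.pi*((r:ℂ) * (starRingEnd ℂ) (b j)) := by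
        have hptw : ∀ θ : ℝ, cexp1 θ * u θ
            = cexp1 θ * A (circleMap 0 r θ) j
              + (starRingEnd ℂ) ((cexp1 θ)⁻¹ * B (circleMap 0 r θ) j) := by
          intro θ
          have he : (starRingEnd ℂ) ((cexp1 θ)⁻¹) = cexp1 θ := by
            rw [map_inv₀, em_conj, inv_inv]
          simp only [hu, map_mul, he]
          ring
        simp only [hptw]
        have i1 : IntervalIntegrable (fun θ => cexp1 θ * A (circleMap 0 r θ) j)
            MeasureTheory.volume 0 (2*Real.pi) :=
          (cexp1_cont.mul (hAc j)).intervalIntegrable _ _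
        have hBinv : Continuous (fun θ => (cexp1 θ)⁻¹ * B (circleMap 0 r θ) j) :=
          (Continuous.inv₀ cexp1_cont (by
            intro x; simp [cexp1, Complex.exp_ne_zero])).mul (hBc j)
        have i2 : IntervalIntegrable
            (fun θ => (starRingEnd ℂ) ((cexp1 θ)⁻¹ * B (circleMap 0 r θ) j))
            MeasureTheory.volume 0 (2*Real.pi) :=
          (Complex.continuous_conj.comp hBinv).intervalIntegrable _ _
        rw [intervalIntegral.integral_add i1 i2, moment2 hr.1 (hAj j),
          conj_intervalIntegral hBinv, moment1 hr.1 (hBj j), (hB' j).deriv]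
        rw [show (starRingEnd ℂ) (2*(Real.pi:ℂ)*(r:ℂ)*(b j))
            = 2*(Real.pi:ℂ)*(r:ℂ)*(starRingEnd ℂ) (b j) from by
          simp [map_mul, map_ofNat, Complex.conj_ofReal]]
        ring
      have hb := bessel huc _ _ _ H0 H1 H2
      have e1 : ‖(r:ℂ) * a j‖^2 = r^2 * ‖a j‖^2 := by
        rw [norm_mul, mul_pow, Complex.norm_real, Real.norm_eq_abs, _root_.sq_abs]
      have e2 : ‖(r:ℂ) * (starRingEnd ℂ) (b j)‖^2 = r^2 * ‖b j‖^2 := by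
        rw [norm_mul, mul_pow, Complex.norm_real, Real.norm_eq_abs, _root_.sq_abs,
          RCLike.norm_conj]
      rw [e1, e2] at hb
      exact hb
    -- sum over j
    have hsum : ∑ j, ∫ θ in (0:ℝ)..(2*Real.pi),
          ‖A (circleMap 0 r θ) j + (starRingEnd ℂ) (B (circleMap 0 r θ) j)‖^2
        ≤ 2*Real.pi := by
      have hcont : ∀ j : Fin ν, Continuous
          (fun θ => ‖A (circleMap 0 r θ) j + (starRingEnd ℂ) (B (circleMap 0 r θ) j)‖^2) :=
        fun j => (((hAc j).add (Complex.continuous_conj.comp (hBc j))).norm.pow 2)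
      have hint : ∀ j : Fin ν, IntervalIntegrable
          (fun θ => ‖A (circleMap 0 r θ) j + (starRingEnd ℂ) (B (circleMap 0 r θ) j)‖^2)
          MeasureTheory.volume 0 (2*Real.pi) := fun j => (hcont j).intervalIntegrable _ _
      have heq := intervalIntegral.integral_finset_sum (μ := MeasureTheory.volume)
        (a := (0:ℝ)) (b := 2*Real.pi) (s := Finset.univ) (fun j _ => hint j)
      rw [← heq]
      have hmono : (∫ θ in (0:ℝ)..(2*Real.pi), ∑ j : Fin ν,
            ‖A (circleMap 0 r θ) j + (starRingEnd ℂ) (B (circleMap 0 r θ) j)‖^2)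
          ≤ ∫ _ in (0:ℝ)..(2*Real.pi), (1:ℝ) := by
        apply intervalIntegral.integral_mono_on Real.two_pi_pos.le
          ((continuous_finset_sum _ (fun j _ => hcont j)).intervalIntegrable _ _)
          intervalIntegrable_const
        intro θ _
        exact hbd _ (hmem θ)
      refine le_trans hmono ?_
      simp
    have hCD : 2*Real.pi*(C + r^2*D)
        = ∑ j, 2*Real.pi*(‖A 0 j + (starRingEnd ℂ) (B 0 j)‖^2
            + r^2*‖a j‖^2 + r^2*‖b j‖^2) := by
      rw [hC, hD, Finset.mul_sum, ← Finset.sum_add_distrib, Finset.mul_sum]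
      apply Finset.sum_congr rfl
      intros
      ring
    have hfin : 2*Real.pi * (C + r^2 * D) ≤ 2*Real.pi := by
      rw [hCD]
      exact le_trans (Finset.sum_le_sum (fun j _ => main j)) hsum
    nlinarith [Real.two_pi_pos]
  -- limit r → 1
  have htend : Filter.Tendsto (fun r : ℝ => C + r^2 * D) (nhdsWithin 1 (Set.Iio 1))
      (nhds (C + D)) := by
    have : Filter.Tendsto (fun r : ℝ => C + r^2 * D) (nhds 1) (nhds (C + 1^2 * D)) := by
      apply Filter.Tendsto.add tendsto_const_nhds
      exact ((continuous_pow 2).tendsto 1).mul tendsto_const_nhds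
    simpa using this.mono_left nhdsWithin_le_nhds
  apply le_of_tendsto htend
  filter_upwards [Ioo_mem_nhdsLT_of_mem (by norm_num : (1:ℝ) ∈ Set.Ioc 0 1)] with r hr
  exact claim r hr


noncomputable def mob (a w : ℂ) : ℂ := (a + w) / (1 + (starRingEnd ℂ) a * w)

lemma mob_denom_ne {a w : ℂ} (ha : ‖a‖ < 1) (hw : ‖w‖ < 1) :
    1 + (starRingEnd ℂ) a * w ≠ 0 := by
  intro hcon
  have h1 : (starRingEnd ℂ) a * w = -1 := by linear_combination hcon
  have h2 : ‖(starRingEnd ℂ) a * w‖ < 1 := by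
    rw [norm_mul, RCLike.norm_conj]
    calc ‖a‖ * ‖w‖ ≤ 1 * ‖w‖ := by
          apply mul_le_mul_of_nonneg_right ha.le (norm_nonneg _)
      _ = ‖w‖ := one_mul _
      _ < 1 := hw
  rw [h1] at h2
  simp at h2

lemma normSq_mob_identity (a w : ℂ) :
    Complex.normSq (1 + (starRingEnd ℂ) a * w) - Complex.normSq (a + w)
      = (1 - Complex.normSq a) * (1 - Complex.normSq w) := by
  simp only [Complex.normSq_apply, Complex.add_re, Complex.add_im, Complex.mul_re,
    Complex.mul_im, Complex.conj_re, Complex.conj_im, Complex.one_re, Complex.one_im]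
  ring

lemma mob_lt_one {a w : ℂ} (ha : ‖a‖ < 1) (hw : ‖w‖ < 1) : ‖mob a w‖ < 1 := by
  rw [mob, norm_div]
  rw [div_lt_one (by
    rw [norm_pos_iff]
    exact mob_denom_ne ha hw)]
  have hsq : Complex.normSq (a + w) < Complex.normSq (1 + (starRingEnd ℂ) a * w) := by
    have h1 : 0 < (1 - Complex.normSq a) * (1 - Complex.normSq w) := by
      apply mul_pos
      · have h2 : ‖a‖^2 < 1 := by nlinarith [norm_nonneg a]
        rw [Complex.sq_norm] at h2
        linarith
      · have h2 : ‖w‖^2 < 1 := by nlinarith [norm_nonneg w]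
        rw [Complex.sq_norm] at h2
        linarith
    nlinarith [normSq_mob_identity a w]
  have := Real.sqrt_lt_sqrt (Complex.normSq_nonneg _) hsq
  simpa [Complex.norm_def] using this

lemma mob_zero (a : ℂ) : mob a 0 = a := by simp [mob]

lemma mob_hasDerivAt (a c : ℂ) :
    HasDerivAt (fun w => mob a (c * w)) (c * (1 - (Complex.normSq a : ℂ))) 0 := by
  have hnum : HasDerivAt (fun w : ℂ => a + c * w) c 0 := by
    simpa using ((hasDerivAt_id (0:ℂ)).const_mul c).const_add a
  have hden : HasDerivAt (fun w : ℂ => 1 + (starRingEnd ℂ) a * (c * w))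
      ((starRingEnd ℂ) a * c) 0 := by
    have : HasDerivAt (fun w : ℂ => (starRingEnd ℂ) a * (c * w)) ((starRingEnd ℂ) a * c) 0 := by
      have h2 : HasDerivAt (fun w : ℂ => ((starRingEnd ℂ) a * c) * w)
          ((starRingEnd ℂ) a * c) 0 := by
        simpa using (hasDerivAt_id (0:ℂ)).const_mul ((starRingEnd ℂ) a * c)
      convert h2 using 2
      ring
    simpa using this.const_add (1:ℂ)
  have hd0 : (fun w : ℂ => 1 + (starRingEnd ℂ) a * (c * w)) 0 ≠ 0 := by
    simp
  have := hnum.div hden hd0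
  refine this.congr_deriv ?_
  simp only [mul_zero, add_zero, mul_one, one_pow, div_one, ← Complex.mul_conj]
  ring

noncomputable def U4 : Fin 4 → ℂ := ![1, Complex.I, -1, -Complex.I]

lemma U4_norm (i : Fin 4) : ‖U4 i‖ = 1 := by
  fin_cases i <;> simp [U4]

lemma U4_mul_conj (i : Fin 4) : U4 i * (starRingEnd ℂ) (U4 i) = 1 := by
  rw [Complex.mul_conj]
  have := U4_norm i
  rw [← Complex.sq_norm, this]
  norm_num

lemma U4_sum : ∑ i, U4 i = 0 := by
  simp [Fin.sum_univ_four, U4]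

lemma orth_ne {n : ℕ} {k l : Fin n} (hkl : k ≠ l) :
    ∑ ε : Fin n → Fin 4, U4 (ε k) * (starRingEnd ℂ) (U4 (ε l)) = 0 := by
  have hptw : ∀ ε : Fin n → Fin 4, U4 (ε k) * (starRingEnd ℂ) (U4 (ε l))
      = ∏ i, ((if i = k then U4 (ε i) else 1) * (if i = l then (starRingEnd ℂ) (U4 (ε i)) else 1)) := by
    intro ε
    rw [Finset.prod_mul_distrib, Finset.prod_ite_eq' Finset.univ k (fun i => U4 (ε i)),
      Finset.prod_ite_eq' Finset.univ l (fun i => (starRingEnd ℂ) (U4 (ε i)))]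
    simp
  simp only [hptw]
  rw [← Fintype.prod_sum (fun i a => ((if i = k then U4 a else 1) * (if i = l then (starRingEnd ℂ) (U4 a) else 1)))]
  apply Finset.prod_eq_zero (Finset.mem_univ k)
  simp only [if_pos rfl, if_neg hkl]
  simpa using U4_sum

lemma orth_eq {n : ℕ} (k : Fin n) :
    ∑ ε : Fin n → Fin 4, U4 (ε k) * (starRingEnd ℂ) (U4 (ε k)) = (4^n : ℂ) := by
  have hptw : ∀ ε : Fin n → Fin 4, U4 (ε k) * (starRingEnd ℂ) (U4 (ε k)) = 1 :=
    fun ε => U4_mul_conj (ε k)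
  simp only [hptw, Finset.sum_const, Finset.card_univ]
  simp [Fintype.card_pi]

lemma orth {n : ℕ} (c : Fin n → ℂ) :
    ∑ ε : Fin n → Fin 4, ‖∑ k, U4 (ε k) * c k‖^2 = 4^n * ∑ k, ‖c k‖^2 := by
  have hnorm : ∀ w : ℂ, ‖w‖^2 = (w * (starRingEnd ℂ) w).re := by
    intro w
    rw [Complex.mul_conj, Complex.sq_norm, Complex.ofReal_re]
  simp only [hnorm]
  rw [← Complex.re_sum]
  have hsum : ∑ ε : Fin n → Fin 4, ((∑ k, U4 (ε k) * c k) * (starRingEnd ℂ) (∑ k, U4 (ε k) * c k))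
      = (4^n : ℂ) * ∑ k, (Complex.normSq (c k) : ℂ) := by
    have hexp : ∀ ε : Fin n → Fin 4,
        ((∑ k, U4 (ε k) * c k) * (starRingEnd ℂ) (∑ k, U4 (ε k) * c k))
        = ∑ k, ∑ l, (c k * (starRingEnd ℂ) (c l)) * (U4 (ε k) * (starRingEnd ℂ) (U4 (ε l))) := by
      intro ε
      rw [map_sum, Finset.sum_mul_sum]
      apply Finset.sum_congr rfl
      intro k _
      apply Finset.sum_congr rfl
      intro l _
      simp only [map_mul]
      ring
    simp only [hexp]
    rw [Finset.sum_comm]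
    have : ∀ k : Fin n, (∑ ε : Fin n → Fin 4, ∑ l,
          (c k * (starRingEnd ℂ) (c l)) * (U4 (ε k) * (starRingEnd ℂ) (U4 (ε l))))
        = (4^n : ℂ) * (Complex.normSq (c k) : ℂ) := by
      intro k
      rw [Finset.sum_comm]
      have hl : ∀ l : Fin n, (∑ ε : Fin n → Fin 4,
            (c k * (starRingEnd ℂ) (c l)) * (U4 (ε k) * (starRingEnd ℂ) (U4 (ε l))))
          = if l = k then (4^n : ℂ) * (Complex.normSq (c k) : ℂ) else 0 := by
        intro l
        rw [← Finset.mul_sum]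
        by_cases hlk : l = k
        · subst hlk
          rw [orth_eq, if_pos rfl, Complex.mul_conj]
          ring
        · rw [orth_ne (fun hc => hlk hc.symm), if_neg hlk, mul_zero]
      simp only [hl]
      simp
    simp only [this]
    rw [← Finset.mul_sum]
  rw [hsum]
  have h4 : ((4:ℂ)^n) = (((4:ℝ)^n : ℝ) : ℂ) := by push_cast; ring
  rw [h4, ← Complex.ofReal_sum, ← Complex.ofReal_mul, Complex.ofReal_re]
  simp [Complex.mul_conj]

lemma eNorm2_sq {ν : ℕ} (w : Fin ν → ℂ) : eNorm2 w ^ 2 = ∑ j, ‖w j‖^2 :=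
  Real.sq_sqrt (Finset.sum_nonneg fun j _ => sq_nonneg _)

lemma eNorm2_nonneg {ν : ℕ} (w : Fin ν → ℂ) : 0 ≤ eNorm2 w := Real.sqrt_nonneg _

lemma clm_apply_sum {n ν : ℕ} (T : (Fin n → ℂ) →L[ℂ] (Fin ν → ℂ)) (v : Fin n → ℂ) (j : Fin ν) :
    T v j = ∑ k, v k * T (Pi.single k 1) j := by
  have hv : v = ∑ k, v k • (Pi.single k (1:ℂ) : Fin n → ℂ) := by
    funext m
    rw [Finset.sum_apply]
    simp [Pi.single_apply, mul_ite, Finset.sum_ite_eq]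
  conv_lhs => rw [hv]
  rw [map_sum]
  rw [Finset.sum_apply]
  apply Finset.sum_congr rfl
  intro k _
  rw [map_smul]
  simp

set_option maxHeartbeats 1000000 in
theorem stmt4 (n ν : ℕ) (hn : 1 ≤ n) (hν : 1 ≤ ν)
    (f h g : (Fin n → ℂ) → (Fin ν → ℂ))
    -- the sup (ℓ^∞) norm on `Fin n → ℂ` is the Pi norm, so `Metric.ball 0 1` is the polydisc
    (hh : DifferentiableOn ℂ h (Metric.ball 0 1))
    (hg : DifferentiableOn ℂ g (Metric.ball 0 1))
    (hg0 : g 0 = 0)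
    (hfd : ∀ z ∈ Metric.ball (0 : Fin n → ℂ) 1,
      ∀ j, f z j = h z j + (starRingEnd ℂ) (g z j))
    (hmap : ∀ z ∈ Metric.ball (0 : Fin n → ℂ) 1, eNorm2 (f z) < 1)
    (z : Fin n → ℂ) (hz : z ∈ Metric.ball (0 : Fin n → ℂ) 1) :
    ∑ j, ∑ k,
        (‖fderiv ℂ h z (Pi.single k 1) j‖ ^ 2 + ‖fderiv ℂ g z (Pi.single k 1) j‖ ^ 2)
      ≤ (1 - eNorm2 (f z) ^ 2) / (1 - ‖z‖ ^ 2) ^ 2 := by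
  have hz1 : ‖z‖ < 1 := mem_ball_zero_iff.1 hz
  have hzk : ∀ k, ‖z k‖ < 1 := fun k => lt_of_le_of_lt (norm_le_pi_norm z k) hz1
  set T := fderiv ℂ h z with hT
  set S := fderiv ℂ g z with hS
  have hTd : HasFDerivAt h T z := (hh.differentiableAt (isOpen_ball.mem_nhds hz)).hasFDerivAt
  have hSd : HasFDerivAt g S z := (hg.differentiableAt (isOpen_ball.mem_nhds hz)).hasFDerivAt
  set M : ℝ := 1 - eNorm2 (f z)^2 with hM
  set d : Fin n → ℝ := fun k => 1 - Complex.normSq (z k) with hd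
  have hnsq : ∀ k, Complex.normSq (z k) = ‖z k‖^2 := by
    intro k
    rw [Complex.sq_norm]
  have hdlb : ∀ k, 1 - ‖z‖^2 ≤ d k := by
    intro k
    rw [hd]
    simp only
    rw [hnsq k]
    have := norm_le_pi_norm z k
    nlinarith [norm_nonneg (z k)]
  have hzpos : 0 < 1 - ‖z‖^2 := by nlinarith [norm_nonneg z]
  have hdpos : ∀ k, 0 < d k := fun k => lt_of_lt_of_le hzpos (hdlb k)
  set ch : Fin ν → Fin n → ℂ := fun j k => ((d k : ℝ) : ℂ) * T (Pi.single k 1) j with hch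
  set cg : Fin ν → Fin n → ℂ := fun j k => ((d k : ℝ) : ℂ) * S (Pi.single k 1) j with hcg
  -- Step B: the bound for each ε
  have keyε : ∀ ε : Fin n → Fin 4,
      (∑ j, (‖∑ k, U4 (ε k) * ch j k‖^2 + ‖∑ k, U4 (ε k) * cg j k‖^2)) ≤ M := by
    intro ε
    set Φ : ℂ → Fin n → ℂ := fun lam k => mob (z k) (U4 (ε k) * lam) with hΦ
    set v : Fin n → ℂ := fun k => U4 (ε k) * ((d k : ℝ) : ℂ) with hv
    have hUw : ∀ (k : Fin n) (w : ℂ), ‖w‖ < 1 → ‖U4 (ε k) * w‖ < 1 := by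
      intro k w hw
      rw [norm_mul, U4_norm, one_mul]
      exact hw
    have hΦmem : ∀ w ∈ ball (0:ℂ) 1, Φ w ∈ ball (0 : Fin n → ℂ) 1 := by
      intro w hw
      rw [mem_ball_zero_iff, pi_norm_lt_iff zero_lt_one]
      intro k
      exact mob_lt_one (hzk k) (hUw k w (mem_ball_zero_iff.1 hw))
    have hΦdiff : DifferentiableOn ℂ Φ (ball 0 1) := by
      rw [differentiableOn_pi]
      intro k
      have : (fun lam => Φ lam k)
          = fun lam => (z k + U4 (ε k) * lam) / (1 + (starRingEnd ℂ) (z k) * (U4 (ε k) * lam)) := by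
        funext lam
        simp only [hΦ, mob]
      rw [this]
      apply DifferentiableOn.div
      · exact (differentiableOn_const _).add ((differentiable_id.const_mul _).differentiableOn)
      · exact (differentiableOn_const _).add
          (((differentiable_id.const_mul (U4 (ε k))).const_mul _).differentiableOn)
      · intro w hw
        exact mob_denom_ne (hzk k) (hUw k w (mem_ball_zero_iff.1 hw))
    have hΦ0 : Φ 0 = z := by
      funext k
      rw [hΦ]
      simp only [mul_zero]
      exact mob_zero (z k)
    have hΦder : HasDerivAt Φ v 0 := by
      rw [hasDerivAt_pi]
      intro k
      have := mob_hasDerivAt (z k) (U4 (ε k))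
      refine this.congr_deriv ?_
      rw [hv, hd]
      simp only
      push_cast
      ring
    have hA : DifferentiableOn ℂ (fun w => h (Φ w)) (ball 0 1) :=
      hh.comp hΦdiff (fun w hw => hΦmem w hw)
    have hB : DifferentiableOn ℂ (fun w => g (Φ w)) (ball 0 1) :=
      hg.comp hΦdiff (fun w hw => hΦmem w hw)
    have hbd : ∀ w ∈ ball (0:ℂ) 1,
        ∑ j, ‖h (Φ w) j + (starRingEnd ℂ) (g (Φ w) j)‖^2 ≤ 1 := by
      intro w hw
      have hm := hΦmem w hw
      have heq : ∀ j, h (Φ w) j + (starRingEnd ℂ) (g (Φ w) j) = f (Φ w) j :=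
        fun j => (hfd _ hm j).symm
      simp only [heq]
      rw [← eNorm2_sq]
      nlinarith [hmap _ hm, eNorm2_nonneg (f (Φ w))]
    have hAder : HasDerivAt (fun w => h (Φ w)) (T v) 0 := by
      have hTd' : HasFDerivAt h T (Φ 0) := by rw [hΦ0]; exact hTd
      exact hTd'.comp_hasDerivAt 0 hΦder
    have hBder : HasDerivAt (fun w => g (Φ w)) (S v) 0 := by
      have hSd' : HasFDerivAt g S (Φ 0) := by rw [hΦ0]; exact hSd
      exact hSd'.comp_hasDerivAt 0 hΦder
    have hA' : ∀ j, HasDerivAt (fun w => h (Φ w) j) (T v j) 0 :=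
      fun j => hasDerivAt_pi.1 hAder j
    have hB' : ∀ j, HasDerivAt (fun w => g (Φ w) j) (S v j) 0 :=
      fun j => hasDerivAt_pi.1 hBder j
    have hk := key1 hA hB hbd hA' hB'
    have hc0 : (∑ j, ‖h (Φ 0) j + (starRingEnd ℂ) (g (Φ 0) j)‖^2) = eNorm2 (f z)^2 := by
      rw [eNorm2_sq]
      apply Finset.sum_congr rfl
      intro j _
      rw [hΦ0, ← hfd z hz j]
    rw [hc0] at hk
    have hTvj : ∀ j, T v j = ∑ k, U4 (ε k) * ch j k := by
      intro j
      rw [clm_apply_sum T v j]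
      apply Finset.sum_congr rfl
      intro k _
      rw [hv, hch]
      ring
    have hSvj : ∀ j, S v j = ∑ k, U4 (ε k) * cg j k := by
      intro j
      rw [clm_apply_sum S v j]
      apply Finset.sum_congr rfl
      intro k _
      rw [hv, hcg]
      ring
    have : ∑ j, (‖∑ k, U4 (ε k) * ch j k‖^2 + ‖∑ k, U4 (ε k) * cg j k‖^2)
        = ∑ j, (‖T v j‖^2 + ‖S v j‖^2) := by
      apply Finset.sum_congr rfl
      intro j _
      rw [hTvj j, hSvj j]
    rw [this, hM]
    linarith
  -- Step C : averaging over ε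
  have havg : (4:ℝ)^n * (∑ j, ∑ k, (‖ch j k‖^2 + ‖cg j k‖^2)) ≤ (4:ℝ)^n * M := by
    have hle : ∑ ε : Fin n → Fin 4, (∑ j, (‖∑ k, U4 (ε k) * ch j k‖^2
          + ‖∑ k, U4 (ε k) * cg j k‖^2)) ≤ (4:ℝ)^n * M := by
      calc ∑ ε : Fin n → Fin 4, (∑ j, (‖∑ k, U4 (ε k) * ch j k‖^2
            + ‖∑ k, U4 (ε k) * cg j k‖^2))
          ≤ ∑ _ε : Fin n → Fin 4, M := Finset.sum_le_sum (fun ε _ => keyε ε)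
        _ = (4:ℝ)^n * M := by
            have hcard : Fintype.card (Fin n → Fin 4) = 4^n := by
              simp [Fintype.card_fun]
            rw [Finset.sum_const, Finset.card_univ, hcard, nsmul_eq_mul]
            push_cast
            ring
    have heq : ∑ ε : Fin n → Fin 4, (∑ j, (‖∑ k, U4 (ε k) * ch j k‖^2
          + ‖∑ k, U4 (ε k) * cg j k‖^2))
        = (4:ℝ)^n * (∑ j, ∑ k, (‖ch j k‖^2 + ‖cg j k‖^2)) := by
      rw [Finset.sum_comm]
      rw [Finset.mul_sum]
      apply Finset.sum_congr rfl
      intro j _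
      rw [Finset.sum_add_distrib, orth (ch j), orth (cg j)]
      simp only [hch, hcg, hd]
      rw [Finset.sum_add_distrib]
      ring
    rw [← heq]
    exact hle
  have hmain : (∑ j, ∑ k, (‖ch j k‖^2 + ‖cg j k‖^2)) ≤ M :=
    le_of_mul_le_mul_left havg (by positivity)
  -- Step E : lower bound
  have hterm : ∀ j k, (1 - ‖z‖^2)^2 * (‖T (Pi.single k 1) j‖^2 + ‖S (Pi.single k 1) j‖^2)
      ≤ ‖ch j k‖^2 + ‖cg j k‖^2 := by
    intro j k
    have h1 : ‖ch j k‖^2 = (d k)^2 * ‖T (Pi.single k 1) j‖^2 := by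
      rw [hch]
      simp only
      rw [norm_mul, mul_pow, Complex.norm_real, Real.norm_eq_abs, _root_.sq_abs]
    have h2 : ‖cg j k‖^2 = (d k)^2 * ‖S (Pi.single k 1) j‖^2 := by
      rw [hcg]
      simp only
      rw [norm_mul, mul_pow, Complex.norm_real, Real.norm_eq_abs, _root_.sq_abs]
    rw [h1, h2]
    have hdk := hdlb k
    have hsq : (1-‖z‖^2)^2 ≤ (d k)^2 := pow_le_pow_left₀ hzpos.le hdk 2
    have hnn : (0:ℝ) ≤ ‖T (Pi.single k 1) j‖^2 + ‖S (Pi.single k 1) j‖^2 := by positivity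
    nlinarith [mul_le_mul_of_nonneg_right hsq hnn]
  have hlow : (1 - ‖z‖^2)^2 * (∑ j, ∑ k, (‖T (Pi.single k 1) j‖^2 + ‖S (Pi.single k 1) j‖^2))
      ≤ M := by
    calc (1 - ‖z‖^2)^2 * (∑ j, ∑ k, (‖T (Pi.single k 1) j‖^2 + ‖S (Pi.single k 1) j‖^2))
        = ∑ j, ∑ k, (1 - ‖z‖^2)^2 * (‖T (Pi.single k 1) j‖^2 + ‖S (Pi.single k 1) j‖^2) := by
          rw [Finset.mul_sum]
          apply Finset.sum_congr rfl
          intro j _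
          rw [Finset.mul_sum]
      _ ≤ ∑ j, ∑ k, (‖ch j k‖^2 + ‖cg j k‖^2) :=
          Finset.sum_le_sum (fun j _ => Finset.sum_le_sum (fun k _ => hterm j k))
      _ ≤ M := hmain
  rw [le_div_iff₀ (by positivity)]
  calc (∑ j, ∑ k, (‖T (Pi.single k 1) j‖^2 + ‖S (Pi.single k 1) j‖^2)) * (1 - ‖z‖^2)^2
      = (1 - ‖z‖^2)^2 * (∑ j, ∑ k, (‖T (Pi.single k 1) j‖^2 + ‖S (Pi.single k 1) j‖^2)) := by
        ring
    _ ≤ M := hlow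
end

section
/- Let p ∈ [1,∞] and let f(z) = Σ_α a_α z^α + Σ_α conj(b_α) conj(z)^α be a pluriharmonic function on 𝔹_{ℓ_pⁿ} with sup_{z ∈ 𝔹_{ℓ_pⁿ}} Re(f(z)) ≤ 1. Then for every integer k ≥ 1, sup_{z ∈ 𝔹_{ℓ_pⁿ}} | Σ_{|α|=k} (a_α + b_α) z^α | ≤ 2 (1 − Re(f(0))). -/
open scoped BigOperators ENNReal NNReal

open scoped Classical in
/-- The `p`-norm on `ℂ^n` for `p ∈ [1,∞]` (`ℝ≥0∞`-valued exponent):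
the sup norm if `p = ∞`, and `(∑ ‖z j‖^p)^(1/p)` otherwise. -/
noncomputable def pnormE {n : ℕ} (p : ℝ≥0∞) (z : Fin n → ℂ) : ℝ :=
  if p = ∞ then ⨆ j, ‖z j‖ else (∑ j, ‖z j‖ ^ p.toReal) ^ (1 / p.toReal)

lemma pnormE_nonneg {n : ℕ} (p : ℝ≥0∞) (z : Fin n → ℂ) : 0 ≤ pnormE p z := by
  unfold pnormE
  split_ifs
  · exact Real.iSup_nonneg fun j => norm_nonneg _
  · exact Real.rpow_nonneg (Finset.sum_nonneg fun j _ => Real.rpow_nonneg (norm_nonneg _) _) _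

lemma pnormE_smul_le {n : ℕ} (hn : 1 ≤ n) (p : ℝ≥0∞) (hp : 1 ≤ p) (l : ℂ) (z : Fin n → ℂ) :
    pnormE p (fun i => l * z i) ≤ ‖l‖ * pnormE p z := by
  have : Nonempty (Fin n) := ⟨⟨0, hn⟩⟩
  unfold pnormE
  split_ifs with hinf
  · refine ciSup_le fun j => ?_
    rw [norm_mul]
    exact mul_le_mul_of_nonneg_left (le_ciSup (f := fun j => ‖z j‖) (Set.Finite.bddAbove (Set.finite_range _)) j)
      (norm_nonneg l)
  · have hp0 : p ≠ 0 := (lt_of_lt_of_le zero_lt_one hp).ne'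
    have ht : 0 < p.toReal := ENNReal.toReal_pos hp0 hinf
    have h1 : (∑ j, ‖l * z j‖ ^ p.toReal) = ‖l‖ ^ p.toReal * ∑ j, ‖z j‖ ^ p.toReal := by
      rw [Finset.mul_sum]
      refine Finset.sum_congr rfl fun j _ => ?_
      rw [norm_mul, Real.mul_rpow (norm_nonneg _) (norm_nonneg _)]
    rw [h1, Real.mul_rpow (Real.rpow_nonneg (norm_nonneg _) _)
        (Finset.sum_nonneg fun j _ => Real.rpow_nonneg (norm_nonneg _) _),
      ← Real.rpow_mul (norm_nonneg l), mul_one_div, div_self ht.ne', Real.rpow_one]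

set_option maxHeartbeats 1000000 in
theorem stmt7 (n : ℕ) (hn : 1 ≤ n) (p : ℝ≥0∞) (hp : 1 ≤ p)
    (f h g : (Fin n → ℂ) → ℂ) (a b : (Fin n → ℕ) → ℂ) (hb0 : b 0 = 0)
    (hh : DifferentiableOn ℂ h {z | pnormE p z < 1})
    (hg : DifferentiableOn ℂ g {z | pnormE p z < 1})
    (hg0 : g 0 = 0)
    (hfd : ∀ z : Fin n → ℂ, pnormE p z < 1 → f z = h z + (starRingEnd ℂ) (g z))
    (hha : ∀ z : Fin n → ℂ, pnormE p z < 1 →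
      HasSum (fun α : Fin n → ℕ => a α * ∏ k, z k ^ α k) (h z))
    (hgb : ∀ z : Fin n → ℂ, pnormE p z < 1 →
      HasSum (fun α : Fin n → ℕ => b α * ∏ k, z k ^ α k) (g z))
    (hre : ∀ z : Fin n → ℂ, pnormE p z < 1 → (f z).re ≤ 1)
    (k : ℕ) (hk : 1 ≤ k) (z : Fin n → ℂ) (hz : pnormE p z < 1) :
    ‖∑' β : {β : Fin n → ℕ // ∑ i, β i = k}, (a β.1 + b β.1) * ∏ i, z i ^ β.1 i‖ ≤
      2 * (1 - (f 0).re) := by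
  classical
  obtain ⟨j, hj1⟩ : ∃ j, j + 1 = k := ⟨k - 1, Nat.sub_add_cancel hk⟩
  have hNE : Nonempty (Fin n) := ⟨⟨0, hn⟩⟩
  -- zero is in the ball
  have h0le : pnormE p (0 : Fin n → ℂ) ≤ 0 := by
    have h2 := pnormE_smul_le hn p hp 0 (0 : Fin n → ℂ)
    have h00 : (fun i => (0 : ℂ) * (0 : Fin n → ℂ) i) = (0 : Fin n → ℂ) := by funext i; simp
    rw [h00] at h2; simpa using h2
  have h0ball : pnormE p (0 : Fin n → ℂ) < 1 := lt_of_le_of_lt h0le one_pos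
  set s : ℝ := pnormE p z with hsdef
  have hs0 : 0 ≤ s := pnormE_nonneg p z
  have hs1 : s < 1 := hz
  set t0 : ℝ := 2 / (1 + s) with ht0def
  have hden : (0 : ℝ) < 1 + s := by linarith
  have ht0 : 1 < t0 := by rw [ht0def, lt_div_iff₀ hden]; linarith
  have ht0pos : (0 : ℝ) < t0 := lt_trans one_pos ht0
  have ht0s : t0 * s < 1 := by
    rw [ht0def, div_mul_eq_mul_div, div_lt_one hden]; linarith
  set φ : ℂ → ℂ := fun l => h (fun i => l * z i) + g (fun i => l * z i) with hφdef
  have hmem : ∀ l : ℂ, ‖l‖ ≤ t0 → pnormE p (fun i => l * z i) < 1 := fun l hl =>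
    (pnormE_smul_le hn p hp l z).trans_lt
      ((mul_le_mul_of_nonneg_right hl hs0).trans_lt ht0s)
  have hu : Differentiable ℂ (fun l : ℂ => (fun i => l * z i)) :=
    differentiable_pi.mpr fun i => differentiable_id.mul (differentiable_const _)
  have hφdiff : DifferentiableOn ℂ φ (Metric.ball 0 t0) := by
    have hmaps : Set.MapsTo (fun l : ℂ => (fun i => l * z i)) (Metric.ball 0 t0)
        {w : Fin n → ℂ | pnormE p w < 1} := fun l hl =>
      hmem l (le_of_lt (mem_ball_zero_iff.mp hl))
    exact (hh.comp hu.differentiableOn hmaps).add (hg.comp hu.differentiableOn hmaps)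
  -- summability of fibers at z itself
  have hsum1 : HasSum (fun α : Fin n → ℕ => (a α + b α) * ∏ i, z i ^ α i) (h z + g z) := by
    have hfe : (fun α : Fin n → ℕ => (a α + b α) * ∏ i, z i ^ α i)
        = fun α => a α * ∏ i, z i ^ α i + b α * ∏ i, z i ^ α i := by
      funext α; ring
    rw [hfe]; exact (hha z hz).add (hgb z hz)
  have hSm : ∀ m : ℕ, Summable (fun β : {β : Fin n → ℕ // ∑ i, β i = m} =>
      (a β.1 + b β.1) * ∏ i, z i ^ β.1 i) := fun m =>
    hsum1.summable.subtype _
  set c : ℕ → ℂ := fun m =>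
    ∑' β : {β : Fin n → ℕ // ∑ i, β i = m}, (a β.1 + b β.1) * ∏ i, z i ^ β.1 i with hcdef
  have hcm : ∀ m, HasSum (fun β : {β : Fin n → ℕ // ∑ i, β i = m} =>
      (a β.1 + b β.1) * ∏ i, z i ^ β.1 i) (c m) := fun m => (hSm m).hasSum
  -- one-variable power series expansion
  have hkey : ∀ l : ℂ, pnormE p (fun i => l * z i) < 1 →
      HasSum (fun m : ℕ => c m * l ^ m) (φ l) := by
    intro l hl
    have hA : HasSum (fun α : Fin n → ℕ =>
        (a α + b α) * (l ^ (∑ i, α i) * ∏ i, z i ^ α i)) (φ l) := by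
      have h1 := (hha _ hl).add (hgb _ hl)
      have hfe : (fun α : Fin n → ℕ =>
          a α * ∏ i, (l * z i) ^ α i + b α * ∏ i, (l * z i) ^ α i)
          = fun α => (a α + b α) * (l ^ (∑ i, α i) * ∏ i, z i ^ α i) := by
        funext α
        have hprod : ∏ i, (l * z i) ^ α i = l ^ (∑ i, α i) * ∏ i, z i ^ α i := by
          rw [← Finset.prod_pow_eq_pow_sum, ← Finset.prod_mul_distrib]
          exact Finset.prod_congr rfl fun i _ => mul_pow _ _ _
        rw [hprod]; ring
      rw [hfe] at h1
      exact h1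
    have hAs : HasSum (fun x : Σ m : ℕ, {β : Fin n → ℕ // ∑ i, β i = m} =>
        (a x.2.1 + b x.2.1) * (l ^ (∑ i, x.2.1 i) * ∏ i, z i ^ x.2.1 i)) (φ l) :=
      (Equiv.hasSum_iff (Equiv.sigmaFiberEquiv (fun β : Fin n → ℕ => ∑ i, β i))).mpr hA
    refine HasSum.sigma hAs ?_
    intro m
    have h2 := (hcm m).mul_left (l ^ m)
    have hfe2 : (fun β : {β : Fin n → ℕ // ∑ i, β i = m} =>
        (a β.1 + b β.1) * (l ^ (∑ i, β.1 i) * ∏ i, z i ^ β.1 i))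
        = fun β => l ^ m * ((a β.1 + b β.1) * ∏ i, z i ^ β.1 i) := by
      funext β
      rw [β.2]; ring
    rw [← hfe2] at h2
    simpa [mul_comm] using h2
    -- radius setup
  set R : ℝ := (1 + t0) / 2 with hRdef
  have hR1 : 1 < R := by rw [hRdef]; linarith
  have hR0 : (0 : ℝ) < R := lt_trans one_pos hR1
  have hRt0 : R < t0 := by rw [hRdef]; linarith
  -- the formal power series q
  set q : FormalMultilinearSeries ℂ ℂ ℂ :=
    fun m => ContinuousMultilinearMap.mkPiRing ℂ (Fin m) (c m) with hqdef
  have ht0norm : ‖((t0 : ℝ) : ℂ)‖ = t0 := by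
    simp [Complex.norm_real, Real.norm_eq_abs, abs_of_pos ht0pos]
  have hsummt0 : Summable (fun m : ℕ => ‖c m‖ * t0 ^ m) := by
    have h4 := (hkey ((t0 : ℝ) : ℂ) (hmem _ (le_of_eq ht0norm))).summable
    have h5 := summable_norm_iff.mpr h4
    refine h5.congr fun m => ?_
    rw [norm_mul, norm_pow, ht0norm]
  have hrad : (1 : ℝ≥0∞) ≤ q.radius := by
    have h6 : ((t0.toNNReal : ℝ≥0∞)) ≤ q.radius := by
      apply q.le_radius_of_summable
      refine hsummt0.congr fun m => ?_
      rw [hqdef]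
      rw [ContinuousMultilinearMap.norm_mkPiRing, Real.coe_toNNReal _ ht0pos.le]
    refine le_trans ?_ h6
    have h7 : (1 : ℝ≥0) ≤ t0.toNNReal := by
      rw [← Real.toNNReal_one]; exact Real.toNNReal_mono ht0.le
    exact_mod_cast h7
  have hqball : HasFPowerSeriesOnBall φ q 0 1 :=
    { r_le := hrad
      r_pos := zero_lt_one
      hasSum := by
        intro y hy
        have hy1 : ‖y‖ < 1 := by
          rw [mem_emetric_ball_zero_iff] at hy
          have hy' : ‖y‖₊ < 1 := by exact_mod_cast (show ((‖y‖₊ : ℝ≥0) : ℝ≥0∞) < 1 from hy)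
          exact_mod_cast hy'
        have h7 := hkey y (hmem y (le_of_lt (lt_trans hy1 ht0)))
        rw [zero_add]
        have hfe3 : (fun m : ℕ => q m fun _ => y) = fun m => c m * y ^ m := by
          funext m
          rw [hqdef]
          rw [ContinuousMultilinearMap.mkPiRing_apply]
          simp [Finset.prod_const, smul_eq_mul, mul_comm]
        rw [hfe3]; exact h7 }
  set R' : ℝ≥0 := ⟨R, hR0.le⟩ with hR'def
  have hcauchy : HasFPowerSeriesOnBall φ (cauchyPowerSeries φ 0 R') 0 R' := by
    refine DifferentiableOn.hasFPowerSeriesOnBall ?_ ?_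
    · exact hφdiff.mono (Metric.closedBall_subset_ball (show ((R' : ℝ≥0) : ℝ) < t0 from hRt0))
    · exact_mod_cast hR0
  have hq_eq : q = cauchyPowerSeries φ 0 R' :=
    hqball.hasFPowerSeriesAt.eq_formalMultilinearSeries hcauchy.hasFPowerSeriesAt
  have hcoef : ∀ m : ℕ, c m = (2 * (Real.pi : ℂ) * Complex.I)⁻¹ •
      ∮ w in C(0, R), w⁻¹ ^ m • w⁻¹ • φ w := by
    intro m
    have h8 : q m (fun _ => (1 : ℂ)) = cauchyPowerSeries φ 0 R' m (fun _ => 1) := by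
      rw [hq_eq]
    rw [cauchyPowerSeries_apply] at h8
    simp only [hqdef, ContinuousMultilinearMap.mkPiRing_apply, Finset.prod_const, one_pow,
      one_smul, sub_zero, one_div] at h8
    exact h8
    -- circle parametrization
  set E : ℝ → ℂ := fun θ => Complex.exp ((θ : ℂ) * Complex.I) with hEdef
  have hEne : ∀ θ : ℝ, E θ ≠ 0 := fun θ => Complex.exp_ne_zero _
  have hEnorm : ∀ θ : ℝ, ‖E θ‖ = 1 := fun θ => by
    simp [hEdef, Complex.norm_exp_ofReal_mul_I]
  have hRC : ((R : ℝ) : ℂ) ≠ 0 := by exact_mod_cast hR0.ne'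
  have hcmap : ∀ θ : ℝ, circleMap 0 R θ = ((R : ℝ) : ℂ) * E θ := fun θ => by
    simp [circleMap, hEdef]
  have hOint : ∀ m : ℕ, (∮ w in C(0, R), w⁻¹ ^ m • w⁻¹ • φ w)
      = Complex.I * ((((R : ℝ) : ℂ))⁻¹ ^ m *
        ∫ θ in (0:ℝ)..2 * Real.pi, (E θ)⁻¹ ^ m * φ (((R : ℝ) : ℂ) * E θ)) := by
    intro m
    unfold circleIntegral
    rw [← mul_assoc, ← intervalIntegral.integral_const_mul]
    refine intervalIntegral.integral_congr fun θ _ => ?_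
    rw [deriv_circleMap, hcmap θ]
    simp only [smul_eq_mul]
    rw [show (((R : ℝ) : ℂ) * E θ)⁻¹ = ((R : ℝ) : ℂ)⁻¹ * (E θ)⁻¹ from mul_inv _ _, mul_pow]
    field_simp [hRC, hEne θ]
  set K : ℕ → ℂ :=
    fun m => ∫ θ in (0:ℝ)..2 * Real.pi, (E θ)⁻¹ ^ m * φ (((R : ℝ) : ℂ) * E θ) with hKdef
  have hcoef' : ∀ m : ℕ, c m = (2 * (Real.pi : ℂ) * Complex.I)⁻¹ *
      (Complex.I * ((((R : ℝ) : ℂ))⁻¹ ^ m * K m)) := by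
    intro m
    rw [hcoef m, hOint m, smul_eq_mul]
  -- mean value data
  have hzmap : (fun i => (0 : ℂ) * z i) = (0 : Fin n → ℂ) := by funext i; simp
  have hc0 : c 0 = φ 0 := by
    have h10 := hkey 0 (by rw [hzmap]; exact h0ball)
    have h11 : HasSum (fun m : ℕ => c m * (0 : ℂ) ^ m) (c 0) := by
      have h12 := hasSum_single (f := fun m : ℕ => c m * (0 : ℂ) ^ m) 0
        (fun m hm => by simp [zero_pow hm])
      simpa using h12
    exact h11.unique h10
  have hφ0 : φ 0 = f 0 := by
    have : φ 0 = h (fun i => (0 : ℂ) * z i) + g (fun i => (0 : ℂ) * z i) := rfl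
    rw [this, hzmap, hfd 0 h0ball, hg0]
    simp
  have hπC : ((Real.pi : ℝ) : ℂ) ≠ 0 := by
    exact_mod_cast Real.pi_ne_zero
  have hK0 : K 0 = 2 * (Real.pi : ℂ) * c 0 := by
    have h12 := hcoef' 0
    rw [pow_zero, one_mul] at h12
    rw [h12]
    field_simp [Complex.I_ne_zero]
  have h02 : (0 : ℝ) ≤ 2 * Real.pi := by positivity
  -- continuity facts
  have hEcont : Continuous E := by
    exact Complex.continuous_exp.comp (Complex.continuous_ofReal.mul continuous_const)
  have hφcont : Continuous fun θ : ℝ => φ (((R : ℝ) : ℂ) * E θ) := by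
    refine hφdiff.continuousOn.comp_continuous (continuous_const.mul hEcont) ?_
    intro θ
    rw [mem_ball_zero_iff, norm_mul, hEnorm, mul_one]
    calc ‖((R : ℝ) : ℂ)‖ = R := by
          simp [Complex.norm_real, Real.norm_eq_abs, abs_of_pos hR0]
      _ < t0 := hRt0
  have hEinv : ∀ m : ℕ, Continuous fun θ : ℝ => (E θ)⁻¹ ^ m := fun m =>
    (hEcont.inv₀ hEne).pow m
  have hI1 : IntervalIntegrable (fun θ : ℝ => (E θ)⁻¹ ^ k * φ (((R : ℝ) : ℂ) * E θ))
      MeasureTheory.volume 0 (2 * Real.pi) :=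
    ((hEinv k).mul hφcont).intervalIntegrable _ _
  have hI2 : IntervalIntegrable
      (fun θ : ℝ => (E θ)⁻¹ ^ k * (starRingEnd ℂ) (φ (((R : ℝ) : ℂ) * E θ)))
      MeasureTheory.volume 0 (2 * Real.pi) :=
    ((hEinv k).mul (Complex.continuous_conj.comp hφcont)).intervalIntegrable _ _
  have hI3 : IntervalIntegrable (fun θ : ℝ => (2 : ℂ) * (E θ)⁻¹ ^ k)
      MeasureTheory.volume 0 (2 * Real.pi) :=
    (continuous_const.mul (hEinv k)).intervalIntegrable _ _
  -- positive-frequency integral vanishes (Cauchy)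
  have hpos0 : (∫ θ in (0:ℝ)..2 * Real.pi, (E θ) ^ (j + 1) * φ (((R : ℝ) : ℂ) * E θ)) = 0 := by
    have hO : (∮ w in C(0, R), w ^ j * φ w) = 0 := by
      refine Complex.circleIntegral_eq_zero_of_differentiable_on_off_countable hR0.le
        (Set.countable_empty) ?_ ?_
      · exact ((continuous_pow j).continuousOn).mul
          (hφdiff.continuousOn.mono (Metric.closedBall_subset_ball hRt0))
      · intro w hw
        have hwball : w ∈ Metric.ball (0 : ℂ) t0 := Metric.ball_subset_ball hRt0.le hw.1
        exact (differentiableAt_pow j).mul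
          (hφdiff.differentiableAt (Metric.isOpen_ball.mem_nhds hwball))
    have hO2 : (∮ w in C(0, R), w ^ j * φ w)
        = (Complex.I * ((R : ℝ) : ℂ) ^ (j + 1)) *
          ∫ θ in (0:ℝ)..2 * Real.pi, (E θ) ^ (j + 1) * φ (((R : ℝ) : ℂ) * E θ) := by
      unfold circleIntegral
      rw [← intervalIntegral.integral_const_mul]
      refine intervalIntegral.integral_congr fun θ _ => ?_
      rw [deriv_circleMap, hcmap θ]
      simp only [smul_eq_mul]
      ring
    have hne : (Complex.I * ((R : ℝ) : ℂ) ^ (j + 1)) ≠ 0 :=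
      mul_ne_zero Complex.I_ne_zero (pow_ne_zero _ hRC)
    have := hO2.symm.trans hO
    exact (mul_eq_zero.mp this).resolve_left hne
  -- conjugate integral vanishes
  have hconjE : ∀ θ : ℝ, (starRingEnd ℂ) (E θ) = (E θ)⁻¹ := by
    intro θ
    rw [hEdef]
    rw [← Complex.exp_conj]
    simp [map_mul, Complex.conj_ofReal, Complex.conj_I, mul_neg, Complex.exp_neg]
  have hconj0 : (∫ θ in (0:ℝ)..2 * Real.pi,
      (E θ)⁻¹ ^ k * (starRingEnd ℂ) (φ (((R : ℝ) : ℂ) * E θ))) = 0 := by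
    have h13 : (starRingEnd ℂ)
          (∫ θ in (0:ℝ)..2 * Real.pi, (E θ) ^ (j + 1) * φ (((R : ℝ) : ℂ) * E θ))
        = ∫ θ in (0:ℝ)..2 * Real.pi,
          (E θ)⁻¹ ^ (j + 1) * (starRingEnd ℂ) (φ (((R : ℝ) : ℂ) * E θ)) := by
      rw [intervalIntegral.integral_of_le h02, intervalIntegral.integral_of_le h02,
        ← integral_conj]
      refine MeasureTheory.integral_congr_ae (Filter.Eventually.of_forall fun θ => ?_)
      simp only [map_mul, map_pow, hconjE]
    rw [hpos0, map_zero] at h13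
    rw [← hj1]
    exact h13.symm
  -- pure exponential integral vanishes
  have hexp0 : (∫ θ in (0:ℝ)..2 * Real.pi, (E θ)⁻¹ ^ k) = 0 := by
    have hfe4 : ∀ θ : ℝ, (E θ)⁻¹ ^ k = Complex.exp ((-(k : ℂ) * Complex.I) * (θ : ℂ)) := by
      intro θ
      rw [hEdef]
      rw [show (-(k : ℂ) * Complex.I) * (θ : ℂ) = (k : ℕ) * (-((θ : ℂ) * Complex.I)) by
        push_cast; ring]
      rw [Complex.exp_nat_mul, Complex.exp_neg]
    have hcne : (-(k : ℂ) * Complex.I) ≠ 0 := by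
      exact mul_ne_zero (neg_ne_zero.mpr (Nat.cast_ne_zero.mpr (by omega))) Complex.I_ne_zero
    rw [intervalIntegral.integral_congr (fun θ _ => hfe4 θ)]
    rw [integral_exp_mul_complex hcne]
    have h14 : Complex.exp ((-(k : ℂ) * Complex.I) * ((2 * Real.pi : ℝ) : ℂ)) = 1 := by
      rw [show (-(k : ℂ) * Complex.I) * ((2 * Real.pi : ℝ) : ℂ)
          = ((-(k : ℤ) : ℤ) : ℂ) * (2 * (Real.pi : ℂ) * Complex.I) by push_cast; ring]
      exact_mod_cast Complex.exp_int_mul_two_pi_mul_I (-(k : ℤ))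
    rw [h14]
    simp
  -- combination identity
  have hcomb : K k = ∫ θ in (0:ℝ)..2 * Real.pi, (E θ)⁻¹ ^ k *
      (φ (((R : ℝ) : ℂ) * E θ) + (starRingEnd ℂ) (φ (((R : ℝ) : ℂ) * E θ)) - 2) := by
    rw [show (fun θ : ℝ => (E θ)⁻¹ ^ k *
        (φ (((R : ℝ) : ℂ) * E θ) + (starRingEnd ℂ) (φ (((R : ℝ) : ℂ) * E θ)) - 2))
        = fun θ : ℝ => ((E θ)⁻¹ ^ k * φ (((R : ℝ) : ℂ) * E θ)
          + (E θ)⁻¹ ^ k * (starRingEnd ℂ) (φ (((R : ℝ) : ℂ) * E θ)))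
          - (2 : ℂ) * (E θ)⁻¹ ^ k from funext fun θ => by ring]
    rw [intervalIntegral.integral_sub (hI1.add hI2) hI3,
      intervalIntegral.integral_add hI1 hI2, hconj0]
    rw [intervalIntegral.integral_const_mul, hexp0]
    simp [hKdef]
    -- real part bound on circle
  have hRnorm : ‖((R : ℝ) : ℂ)‖ = R := by
    simp [Complex.norm_real, Real.norm_eq_abs, abs_of_pos hR0]
  have hreφ : ∀ θ : ℝ, (φ (((R : ℝ) : ℂ) * E θ)).re ≤ 1 := by
    intro θ
    have hmem2 : pnormE p (fun i => (((R : ℝ) : ℂ) * E θ) * z i) < 1 := by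
      refine hmem _ ?_
      rw [norm_mul, hEnorm, mul_one, hRnorm]
      exact hRt0.le
    have h15 := hre _ hmem2
    rw [hfd _ hmem2] at h15
    simpa [hφdef, Complex.add_re, Complex.conj_re] using h15
  -- pointwise norm computation
  have hnormpt : ∀ θ : ℝ, ‖(E θ)⁻¹ ^ k * (φ (((R : ℝ) : ℂ) * E θ)
      + (starRingEnd ℂ) (φ (((R : ℝ) : ℂ) * E θ)) - 2)‖
      = 2 - 2 * (φ (((R : ℝ) : ℂ) * E θ)).re := by
    intro θ
    rw [norm_mul, norm_pow, norm_inv, hEnorm, inv_one, one_pow, one_mul]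
    have h16 : φ (((R : ℝ) : ℂ) * E θ) + (starRingEnd ℂ) (φ (((R : ℝ) : ℂ) * E θ)) - 2
        = (((2 * (φ (((R : ℝ) : ℂ) * E θ)).re - 2 : ℝ)) : ℂ) := by
      rw [Complex.add_conj]
      push_cast
      ring
    rw [h16, Complex.norm_real, Real.norm_eq_abs,
      abs_of_nonpos (by linarith [hreφ θ])]
    ring
  -- norm bound for K k
  have hKbound : ‖K k‖ ≤ ∫ θ in (0:ℝ)..2 * Real.pi,
      (2 - 2 * (φ (((R : ℝ) : ℂ) * E θ)).re) := by
    rw [hcomb]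
    refine (intervalIntegral.norm_integral_le_integral_norm h02).trans_eq ?_
    exact intervalIntegral.integral_congr fun θ _ => hnormpt θ
  -- compute the real integral
  have hintre : (∫ θ in (0:ℝ)..2 * Real.pi, (φ (((R : ℝ) : ℂ) * E θ)).re)
      = 2 * Real.pi * (c 0).re := by
    have hIcont : IntervalIntegrable (fun θ : ℝ => φ (((R : ℝ) : ℂ) * E θ))
        MeasureTheory.volume 0 (2 * Real.pi) := hφcont.intervalIntegrable _ _
    have h17 : (∫ θ in (0:ℝ)..2 * Real.pi, φ (((R : ℝ) : ℂ) * E θ)).re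
        = ∫ θ in (0:ℝ)..2 * Real.pi, (φ (((R : ℝ) : ℂ) * E θ)).re := by
      rw [intervalIntegral.integral_of_le h02, intervalIntegral.integral_of_le h02]
      have h18 := integral_re (μ := MeasureTheory.volume.restrict
        (Set.Ioc (0:ℝ) (2 * Real.pi)))
        ((intervalIntegrable_iff_integrableOn_Ioc_of_le h02).mp hIcont)
      simpa using h18.symm
    have hKnegzero : K 0 = ∫ θ in (0:ℝ)..2 * Real.pi, φ (((R : ℝ) : ℂ) * E θ) := by
      rw [hKdef]
      simp only [pow_zero, one_mul]
    rw [← h17, ← hKnegzero, hK0]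
    rw [show (2 : ℂ) * (Real.pi : ℂ) * c 0 = ((2 * Real.pi : ℝ) : ℂ) * c 0 by push_cast; ring]
    rw [Complex.re_ofReal_mul]
  have hintfinal : (∫ θ in (0:ℝ)..2 * Real.pi,
      (2 - 2 * (φ (((R : ℝ) : ℂ) * E θ)).re)) = 4 * Real.pi * (1 - (c 0).re) := by
    have hrecont : Continuous fun θ : ℝ => (φ (((R : ℝ) : ℂ) * E θ)).re :=
      Complex.continuous_re.comp hφcont
    rw [intervalIntegral.integral_sub (f := fun _ => (2 : ℝ))
      (g := fun θ : ℝ => 2 * (φ (((R : ℝ) : ℂ) * E θ)).re) (intervalIntegrable_const)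
      ((continuous_const.mul hrecont).intervalIntegrable _ _)]
    rw [intervalIntegral.integral_const_mul, hintre, intervalIntegral.integral_const]
    simp only [smul_eq_mul, sub_zero]
    ring
  -- assembling the final bound
  have hKb2 : ‖K k‖ ≤ 4 * Real.pi * (1 - (c 0).re) := hintfinal ▸ hKbound
  have hnormck : ‖c k‖ ≤ (2 * Real.pi)⁻¹ * ((R⁻¹) ^ k * (4 * Real.pi * (1 - (c 0).re))) := by
    rw [hcoef' k, norm_mul, norm_mul, norm_mul, norm_inv, norm_pow, norm_inv, hRnorm]
    have hn1 : ‖(2 : ℂ) * (Real.pi : ℂ) * Complex.I‖ = 2 * Real.pi := by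
      rw [norm_mul, norm_mul, Complex.norm_I, mul_one]
      simp [Complex.norm_real, Real.norm_eq_abs, abs_of_pos Real.pi_pos]
    rw [hn1, Complex.norm_I, one_mul]
    have hKpos : (0:ℝ) ≤ (R⁻¹) ^ k := by positivity
    have h2πpos : (0:ℝ) < (2 * Real.pi)⁻¹ := by positivity
    exact mul_le_mul_of_nonneg_left (mul_le_mul_of_nonneg_left hKb2 hKpos) h2πpos.le
  have hc0re : (c 0).re = (f 0).re := by rw [hc0, hφ0]
  have h1f : 0 ≤ 1 - (f 0).re := by linarith [hre 0 h0ball]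
  have hRk : (R⁻¹ : ℝ) ^ k ≤ 1 :=
    pow_le_one₀ (by positivity) (inv_le_one_of_one_le₀ hR1.le)
  have hgoal : (∑' β : {β : Fin n → ℕ // ∑ i, β i = k}, (a β.1 + b β.1) * ∏ i, z i ^ β.1 i)
      = c k := rfl
  rw [hgoal]
  rw [hc0re] at hnormck
  calc ‖c k‖ ≤ (2 * Real.pi)⁻¹ * ((R⁻¹) ^ k * (4 * Real.pi * (1 - (f 0).re))) := hnormck
    _ = 2 * (R⁻¹) ^ k * (1 - (f 0).re) := by
        field_simp
        ring
    _ ≤ 2 * 1 * (1 - (f 0).re) := by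
        have := mul_le_mul_of_nonneg_right (mul_le_mul_of_nonneg_left hRk (by norm_num : (0:ℝ) ≤ 2)) h1f
        simpa using this
    _ = 2 * (1 - (f 0).re) := by ring
end

section
/- Let p ∈ [1,∞] and let f(z) = Σ_α a_α z^α + Σ_α conj(b_α) conj(z)^α be a pluriharmonic function on 𝔹_{ℓ_pⁿ} with sup_{z ∈ 𝔹_{ℓ_pⁿ}} Re(f(z)) ≤ 1. Then for every multi-index α with |α| ≥ 1, |a_α + b_α| ≤ 2 ( |α|^{|α|} / α^α )^{1/p} (1 − Re(f(0))) (with the convention that the exponent 1/p equals 0 when p = ∞). -/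
open MeasureTheory intervalIntegral Complex Real Filter
open scoped ENNReal NNReal

lemma intExp (k : ℤ) : ∫ θ in (0:ℝ)..(2*Real.pi), Complex.exp (k * θ * Complex.I)
    = if k = 0 then (2*Real.pi : ℂ) else 0 := by
  split_ifs with hk
  · subst hk; simp
  · have hc : (k : ℂ) * Complex.I ≠ 0 := by
      simp [Complex.ext_iff, hk, Complex.I_ne_zero]
    have : ∀ θ : ℝ, (k : ℂ) * θ * Complex.I = ((k:ℂ)*Complex.I) * θ := fun θ => by ring
    simp_rw [this]
    rw [integral_exp_mul_complex hc]
    have h1 : Complex.exp ((k:ℂ)*Complex.I*(2*Real.pi)) = 1 := by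
      rw [show (k:ℂ)*Complex.I*(2*Real.pi) = k * (2*Real.pi*Complex.I) by ring]
      exact Complex.exp_int_mul_two_pi_mul_I k
    simp [h1]

section core
variable {ι : Type*} [Countable ι]

lemma core (d : ι → ℂ) (e : ι → ℕ) (v : ℂ → ℂ)
    (hsum : ∀ w : ℂ, ‖w‖ < 1 → HasSum (fun i => d i * w ^ e i) (v w))
    (hrev : ∀ w : ℂ, ‖w‖ < 1 → (v w).re ≤ 1)
    (N : ℕ) (hN : 1 ≤ N) (i0 iα : ι)
    (he0 : ∀ i, e i = 0 ↔ i = i0) (heN : ∀ i, e i = N ↔ i = iα)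
    (ρ : ℝ) (h0ρ : 0 < ρ) (hρ : ρ < 1) :
    ‖d iα‖ * ρ ^ N ≤ 2 * (1 - (d i0).re) := by
  have hπ : (0:ℝ) < Real.pi := Real.pi_pos
  have hle : (0:ℝ) ≤ 2 * Real.pi := by positivity
  set w : ℝ → ℂ := fun θ => (ρ:ℂ) * Complex.exp (θ * Complex.I) with hwdef
  have hwnorm : ∀ θ : ℝ, ‖w θ‖ = ρ := by
    intro θ
    simp [hwdef, Complex.norm_exp, abs_of_pos h0ρ]
  have hwlt : ∀ θ : ℝ, ‖w θ‖ < 1 := fun θ => by rw [hwnorm]; exact hρ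
  have hsum' := (hsum (ρ:ℂ) (by simpa [Complex.norm_real, abs_of_pos h0ρ] using hρ)).summable
  have hM : Summable (fun i => ‖d i‖ * ρ ^ e i) := by
    have := summable_norm_iff.mpr hsum'
    convert this using 2 with i
    rw [norm_mul, norm_pow, Complex.norm_real, Real.norm_eq_abs, abs_of_pos h0ρ]
  set V : ℝ → ℂ := fun θ => ∑' i, d i * (w θ) ^ e i with hVdef
  have htermcont : ∀ i, Continuous (fun θ : ℝ => d i * (w θ) ^ e i) := by
    intro i; fun_prop
  have hVcont : Continuous V := by
    refine continuous_tsum htermcont hM (fun i θ => ?_)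
    rw [norm_mul, norm_pow, hwnorm]
  have hVeq : ∀ θ : ℝ, V θ = v (w θ) := fun θ => (hsum _ (hwlt θ)).tsum_eq
  have hVre : ∀ θ : ℝ, (V θ).re ≤ 1 := fun θ => (hVeq θ) ▸ hrev _ (hwlt θ)
  have hexpnorm : ∀ (k : ℤ) (θ : ℝ), ‖Complex.exp ((k:ℂ) * θ * Complex.I)‖ = 1 := by
    intro k θ
    rw [Complex.norm_exp]
    have : ((k:ℂ) * θ * Complex.I).re = 0 := by simp
    rw [this, Real.exp_zero]
  -- key integral computation
  have key : ∀ k : ℤ, (∫ θ in (0:ℝ)..(2*Real.pi), V θ * Complex.exp (k * θ * Complex.I))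
      = ∑' i, (d i * (ρ:ℂ) ^ e i) * (if (e i : ℤ) + k = 0 then (2*Real.pi : ℂ) else 0) := by
    intro k
    have hpt : ∀ θ : ℝ, V θ * Complex.exp (k * θ * Complex.I)
        = ∑' i, (d i * (w θ) ^ e i * Complex.exp (k * θ * Complex.I)) := by
      intro θ; rw [hVdef]; exact (tsum_mul_right).symm
    have hcont2 : ∀ i, Continuous (fun θ : ℝ => d i * (w θ) ^ e i * Complex.exp (k * θ * Complex.I)) := by
      intro i; fun_prop
    have hnorm2 : ∀ i (θ : ℝ), ‖d i * (w θ) ^ e i * Complex.exp (k * θ * Complex.I)‖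
        = ‖d i‖ * ρ ^ e i := by
      intro i θ
      rw [norm_mul, norm_mul, norm_pow, hwnorm, hexpnorm, mul_one]
    rw [intervalIntegral.integral_of_le hle]
    simp_rw [hpt]
    rw [MeasureTheory.integral_tsum (fun i => (hcont2 i).aestronglyMeasurable) ?_]
    · congr 1
      funext i
      rw [← intervalIntegral.integral_of_le hle]
      have hterm : ∀ θ : ℝ, d i * (w θ) ^ e i * Complex.exp (k * θ * Complex.I)
          = (d i * (ρ:ℂ) ^ e i) * Complex.exp ((((e i : ℤ) + k : ℤ) : ℂ) * θ * Complex.I) := by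
        intro θ
        have h1 : (w θ) ^ e i = (ρ:ℂ) ^ e i * Complex.exp ((e i : ℂ) * (θ * Complex.I)) := by
          rw [hwdef]; simp [mul_pow, ← Complex.exp_nat_mul]
        calc d i * (w θ) ^ e i * Complex.exp (k * θ * Complex.I)
            = (d i * (ρ:ℂ) ^ e i) * (Complex.exp ((e i : ℂ) * (θ * Complex.I))
                * Complex.exp ((k:ℂ) * θ * Complex.I)) := by rw [h1]; ring
          _ = (d i * (ρ:ℂ) ^ e i) * Complex.exp ((((e i : ℤ) + k : ℤ) : ℂ) * θ * Complex.I) := by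
              rw [← Complex.exp_add]; congr 1; push_cast; ring
      simp_rw [hterm]
      rw [intervalIntegral.integral_const_mul, intExp ((e i : ℤ) + k)]
    · have hvol : (volume (Set.Ioc (0:ℝ) (2*Real.pi))) = ENNReal.ofReal (2*Real.pi) := by
        simp [Real.volume_Ioc]
      have heq : ∀ i, (∫⁻ θ in Set.Ioc (0:ℝ) (2*Real.pi),
          ‖d i * (w θ) ^ e i * Complex.exp (k * θ * Complex.I)‖ₑ ∂volume)
          = ENNReal.ofReal (‖d i‖ * ρ ^ e i) * ENNReal.ofReal (2*Real.pi) := by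
        intro i
        have h2 : (fun θ : ℝ => (‖d i * (w θ) ^ e i * Complex.exp (k * θ * Complex.I)‖ₑ : ℝ≥0∞))
            = fun _ => ENNReal.ofReal (‖d i‖ * ρ ^ e i) := by
          funext θ
          rw [← hnorm2 i θ, ofReal_norm_eq_enorm]
        rw [h2, MeasureTheory.lintegral_const, Measure.restrict_apply_univ, hvol]
      rw [tsum_congr heq, ENNReal.tsum_mul_right]
      refine ENNReal.mul_ne_top ?_ ENNReal.ofReal_ne_top
      rw [← ENNReal.ofReal_tsum_of_nonneg (fun i => by positivity) hM]
      simp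
  -- specialized integrals
  have hJN : (∫ θ in (0:ℝ)..(2*Real.pi), V θ * Complex.exp ((-((N:ℕ):ℂ)) * θ * Complex.I))
      = 2 * (Real.pi:ℂ) * (d iα * (ρ:ℂ) ^ N) := by
    have hk := key (-(N:ℤ))
    simp only [Int.cast_neg, Int.cast_natCast] at hk
    rw [hk, tsum_eq_single iα ?_]
    · have h1 : ((e iα : ℤ)) + -(N:ℤ) = 0 := by
        rw [(heN iα).mpr rfl]; ring
      rw [if_pos h1, (heN iα).mpr rfl]; ring
    · intro b hb
      have h1 : ¬ ((e b : ℤ) + -(N:ℤ) = 0) := by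
        intro hcon
        exact hb ((heN b).mp (by omega))
      rw [if_neg h1, mul_zero]
  have hJP : (∫ θ in (0:ℝ)..(2*Real.pi), V θ * Complex.exp (((N:ℕ):ℂ) * θ * Complex.I)) = 0 := by
    have hk := key (N:ℤ)
    simp only [Int.cast_natCast] at hk
    rw [hk]
    convert tsum_zero with i
    have h1 : ¬((e i : ℤ) + (N:ℤ) = 0) := by omega
    rw [if_neg h1, mul_zero]
  have hJ0 : (∫ θ in (0:ℝ)..(2*Real.pi), V θ) = 2*(Real.pi:ℂ) * d i0 := by
    have hk0 := key 0
    simp only [Int.cast_zero, zero_mul, Complex.exp_zero, mul_one, add_zero] at hk0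
    rw [hk0, tsum_eq_single i0 ?_]
    · have h1 : e i0 = 0 := (he0 i0).mpr rfl
      simp [h1]
      ring
    · intro b hb
      have h1 : ¬((e b : ℤ) = 0) := by
        intro hcon
        exact hb ((he0 b).mp (by omega))
      rw [if_neg h1, mul_zero]
  -- the main integral I
  set I : ℂ := ∫ θ in (0:ℝ)..(2*Real.pi),
      ((1:ℂ) - ((V θ).re : ℂ)) * Complex.exp ((-((N:ℕ):ℂ)) * θ * Complex.I) with hI
  have hIeq : I = -((Real.pi:ℂ) * (d iα * (ρ:ℂ)^N)) := by
    have hsplit : ∀ θ:ℝ, ((1:ℂ) - ((V θ).re : ℂ)) * Complex.exp ((-((N:ℕ):ℂ)) * θ * Complex.I)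
        = Complex.exp ((-((N:ℕ):ℂ)) * θ * Complex.I)
          - (1/2 : ℂ) * (V θ * Complex.exp ((-((N:ℕ):ℂ)) * θ * Complex.I))
          - (1/2 : ℂ) * ((starRingEnd ℂ) (V θ * Complex.exp (((N:ℕ):ℂ) * θ * Complex.I))) := by
      intro θ
      have hconjexp : (starRingEnd ℂ) (Complex.exp (((N:ℕ):ℂ) * θ * Complex.I))
          = Complex.exp ((-((N:ℕ):ℂ)) * θ * Complex.I) := by
        rw [← Complex.exp_conj]
        congr 1
        simp only [map_mul, Complex.conj_I]
        push_cast
        simp [Complex.conj_ofReal]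
      have hre2 : ((V θ).re : ℂ) = (V θ + (starRingEnd ℂ) (V θ))/2 := by
        rw [Complex.add_conj]
        push_cast
        ring
      rw [map_mul, hconjexp, hre2]
      ring
    rw [hI, intervalIntegral.integral_congr (fun θ _ => hsplit θ)]
    have int1 : IntervalIntegrable (fun θ:ℝ => Complex.exp ((-((N:ℕ):ℂ)) * θ * Complex.I))
        volume 0 (2*Real.pi) := by apply Continuous.intervalIntegrable; fun_prop
    have int2 : IntervalIntegrable (fun θ:ℝ => (1/2 : ℂ) * (V θ * Complex.exp ((-((N:ℕ):ℂ)) * θ * Complex.I)))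
        volume 0 (2*Real.pi) := by
      apply Continuous.intervalIntegrable
      exact continuous_const.mul (hVcont.mul (by fun_prop))
    have int3 : IntervalIntegrable (fun θ:ℝ => (1/2 : ℂ) * ((starRingEnd ℂ) (V θ * Complex.exp (((N:ℕ):ℂ) * θ * Complex.I))))
        volume 0 (2*Real.pi) := by
      apply Continuous.intervalIntegrable
      exact continuous_const.mul (Complex.continuous_conj.comp (hVcont.mul (by fun_prop)))
    rw [intervalIntegral.integral_sub (int1.sub int2) int3,
        intervalIntegral.integral_sub int1 int2]
    have hconjint : (∫ θ in (0:ℝ)..(2*Real.pi), (starRingEnd ℂ) (V θ * Complex.exp (((N:ℕ):ℂ) * θ * Complex.I)))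
        = (starRingEnd ℂ) (∫ θ in (0:ℝ)..(2*Real.pi), V θ * Complex.exp (((N:ℕ):ℂ) * θ * Complex.I)) := by
      rw [intervalIntegral.integral_of_le hle, intervalIntegral.integral_of_le hle,
        ← integral_conj]
    have hA : (∫ θ in (0:ℝ)..(2*Real.pi), Complex.exp ((-((N:ℕ):ℂ)) * θ * Complex.I)) = 0 := by
      have h6 := intExp (-(N:ℤ))
      simp only [Int.cast_neg, Int.cast_natCast] at h6
      rw [h6, if_neg (by omega)]
    rw [intervalIntegral.integral_const_mul, intervalIntegral.integral_const_mul, hconjint,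
        hA, hJN, hJP]
    simp
    ring
  -- norm bound
  have hnormint : ∀ θ : ℝ, ‖((1:ℂ) - ((V θ).re : ℂ)) * Complex.exp ((-((N:ℕ):ℂ)) * θ * Complex.I)‖
      = 1 - (V θ).re := by
    intro θ
    have hexpnorm' : ‖Complex.exp (-((N:ℕ):ℂ) * θ * Complex.I)‖ = 1 := by
      rw [Complex.norm_exp]
      have : (-((N:ℕ):ℂ) * θ * Complex.I).re = 0 := by simp
      rw [this, Real.exp_zero]
    rw [norm_mul, hexpnorm', mul_one]
    rw [show (1:ℂ) - ((V θ).re : ℂ) = (((1 - (V θ).re : ℝ)):ℂ) by push_cast; ring]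
    rw [Complex.norm_real, Real.norm_eq_abs]
    exact abs_of_nonneg (by linarith [hVre θ])
  have hIbound : ‖I‖ ≤ 2*Real.pi*(1 - (d i0).re) := by
    have h1 : ‖I‖ ≤ ∫ θ in (0:ℝ)..(2*Real.pi),
        ‖((1:ℂ) - ((V θ).re:ℂ)) * Complex.exp ((-((N:ℕ):ℂ)) * θ * Complex.I)‖ := by
      rw [hI]; exact intervalIntegral.norm_integral_le_integral_norm hle
    rw [intervalIntegral.integral_congr (fun θ _ => hnormint θ)] at h1
    have hVint : IntervalIntegrable (fun θ : ℝ => (V θ).re) volume 0 (2*Real.pi) := by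
      apply Continuous.intervalIntegrable
      exact Complex.continuous_re.comp hVcont
    have h3 : (∫ θ in (0:ℝ)..(2*Real.pi), (1 - (V θ).re))
        = 2*Real.pi - ∫ θ in (0:ℝ)..(2*Real.pi), (V θ).re := by
      rw [intervalIntegral.integral_sub (by apply Continuous.intervalIntegrable; fun_prop) hVint]
      simp
    have h4 : (∫ θ in (0:ℝ)..(2*Real.pi), (V θ).re)
        = (∫ θ in (0:ℝ)..(2*Real.pi), V θ).re := by
      rw [intervalIntegral.integral_of_le hle, intervalIntegral.integral_of_le hle]
      have h7 := integral_re (μ := volume.restrict (Set.Ioc (0:ℝ) (2*Real.pi))) (f := V)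
        ((intervalIntegrable_iff_integrableOn_Ioc_of_le hle).mp (hVcont.intervalIntegrable _ _))
      simpa using h7
    rw [h3, h4, hJ0] at h1
    have h5 : ((2*(Real.pi:ℂ)) * d i0).re = 2*Real.pi*(d i0).re := by
      simp [Complex.mul_re]
    rw [h5] at h1
    linarith
  have hInorm : ‖I‖ = Real.pi * (‖d iα‖ * ρ ^ N) := by
    rw [hIeq, norm_neg, norm_mul, norm_mul, norm_pow, Complex.norm_real, Complex.norm_real,
      Real.norm_eq_abs, Real.norm_eq_abs, abs_of_pos hπ, abs_of_pos h0ρ]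
  rw [hInorm] at hIbound
  have : Real.pi * (‖d iα‖ * ρ ^ N) ≤ Real.pi * (2 * (1 - (d i0).re)) := by linarith
  exact le_of_mul_le_mul_left this hπ

end core
lemma digits_inj (q : ℕ) : ∀ (n : ℕ) (β γ : Fin n → ℕ), (∀ k, β k < q) → (∀ k, γ k < q) →
    (∑ k, β k * q^(k:ℕ)) = ∑ k, γ k * q^(k:ℕ) → β = γ := by
  intro n
  induction n with
  | zero => intro β γ _ _ _; funext k; exact absurd k.2 (by omega)
  | succ n ih =>
    intro β γ hβ hγ hsum
    have hq : 0 < q := lt_of_le_of_lt (Nat.zero_le _) (hβ 0)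
    rw [Fin.sum_univ_succ, Fin.sum_univ_succ] at hsum
    simp only [Fin.val_zero, pow_zero, mul_one, Fin.val_succ] at hsum
    have hre : ∀ δ : Fin (n+1) → ℕ, (∑ k : Fin n, δ k.succ * q ^ ((k:ℕ)+1))
        = q * ∑ k : Fin n, δ k.succ * q ^ (k:ℕ) := by
      intro δ
      rw [Finset.mul_sum]
      exact Finset.sum_congr rfl (fun k _ => by ring)
    rw [hre β, hre γ] at hsum
    have hmod : ∀ (x : ℕ) (A : ℕ), x < q → (x + q * A) % q = x := by
      intro x A hx
      rw [Nat.add_mul_mod_self_left, Nat.mod_eq_of_lt hx]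
    have h0 : β 0 = γ 0 := by
      rw [← hmod (β 0) _ (hβ 0), ← hmod (γ 0) _ (hγ 0), hsum]
    have h1 : (∑ k : Fin n, β k.succ * q ^ (k:ℕ)) = ∑ k : Fin n, γ k.succ * q ^ (k:ℕ) := by
      rw [h0] at hsum
      exact Nat.eq_of_mul_eq_mul_left hq (by omega)
    have h2 := ih (fun k => β k.succ) (fun k => γ k.succ) (fun k => hβ _) (fun k => hγ _) h1
    funext k
    rcases Fin.eq_zero_or_eq_succ k with rfl | ⟨j, rfl⟩
    · exact h0
    · exact congrFun h2 j

lemma freq_inj (n m : ℕ) (α β : Fin n → ℕ) (hαm : ∑ k, α k = m)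
    (h : ∑ k, β k * ((m*(m+1)^n+1) + (m+1)^(k:ℕ))
       = ∑ k, α k * ((m*(m+1)^n+1) + (m+1)^(k:ℕ))) :
    β = α := by
  set q := m + 1 with hq
  set P := q ^ n with hP
  set L := m * P + 1 with hL
  have hsplit : ∀ δ : Fin n → ℕ,
      ∑ k, δ k * (L + q^(k:ℕ)) = (∑ k, δ k) * L + ∑ k, δ k * q^(k:ℕ) := by
    intro δ
    rw [Finset.sum_mul, ← Finset.sum_add_distrib]
    exact Finset.sum_congr rfl (fun k _ => by ring)
  rw [hsplit, hsplit, hαm] at h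
  have hbound : ∀ δ : Fin n → ℕ, ∑ k, δ k * q^(k:ℕ) ≤ (∑ k, δ k) * P := by
    intro δ
    rw [Finset.sum_mul]
    refine Finset.sum_le_sum (fun k _ => Nat.mul_le_mul_left _ ?_)
    exact Nat.pow_le_pow_right (Nat.le_add_left _ _) (le_of_lt k.2)
  have hA : ∑ k, α k * q^(k:ℕ) ≤ m * P := hαm ▸ hbound α
  have hB := hbound β
  rcases Nat.lt_trichotomy (∑ k, β k) m with hc | hc | hc
  · exfalso
    have h1 : (∑ k, β k) * L + L ≤ m * L := by
      calc (∑ k, β k) * L + L = ((∑ k, β k) + 1) * L := by ring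
        _ ≤ m * L := Nat.mul_le_mul_right _ hc
    have h2 : (∑ k, β k) * P ≤ m * P := Nat.mul_le_mul_right _ hc.le
    omega
  · rw [hc] at h hB
    have hdig : ∑ k, β k * q^(k:ℕ) = ∑ k, α k * q^(k:ℕ) := by omega
    refine digits_inj q n β α (fun k => ?_) (fun k => ?_) hdig
    · have : β k ≤ ∑ j, β j := Finset.single_le_sum (fun i _ => Nat.zero_le _) (Finset.mem_univ k)
      omega
    · have : α k ≤ ∑ j, α j := Finset.single_le_sum (fun i _ => Nat.zero_le _) (Finset.mem_univ k)
      omega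
  · exfalso
    have h1 : m * L + L ≤ (∑ k, β k) * L := by
      calc m * L + L = (m + 1) * L := by ring
        _ ≤ (∑ k, β k) * L := Nat.mul_le_mul_right _ hc
    omega

open scoped BigOperators ENNReal

theorem stmt8 (n : ℕ) (hn : 1 ≤ n) (p : ℝ≥0∞) (hp : 1 ≤ p)
    (f h g : (Fin n → ℂ) → ℂ) (a b : (Fin n → ℕ) → ℂ) (hb0 : b 0 = 0)
    (hh : DifferentiableOn ℂ h {z | pnormE p z < 1})
    (hg : DifferentiableOn ℂ g {z | pnormE p z < 1})
    (hg0 : g 0 = 0)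
    (hfd : ∀ z : Fin n → ℂ, pnormE p z < 1 → f z = h z + (starRingEnd ℂ) (g z))
    (hha : ∀ z : Fin n → ℂ, pnormE p z < 1 →
      HasSum (fun α : Fin n → ℕ => a α * ∏ k, z k ^ α k) (h z))
    (hgb : ∀ z : Fin n → ℂ, pnormE p z < 1 →
      HasSum (fun α : Fin n → ℕ => b α * ∏ k, z k ^ α k) (g z))
    (hre : ∀ z : Fin n → ℂ, pnormE p z < 1 → (f z).re ≤ 1)
    (α : Fin n → ℕ) (hα : 1 ≤ ∑ k, α k) :
    ‖a α + b α‖ ≤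
      2 * (((((∑ k, α k : ℕ) : ℝ) ^ (∑ k, α k)) / ∏ k, ((α k : ℝ) ^ (α k))) ^ (p.toReal)⁻¹) *
        (1 - (f 0).re) := by
  haveI : Nonempty (Fin n) := ⟨⟨0, hn⟩⟩
  set m : ℕ := ∑ k, α k with hm
  set q : ℕ := m + 1 with hq
  set L : ℕ := m * q ^ n + 1 with hL
  set Nf : Fin n → ℕ := fun k => L + q ^ (k:ℕ) with hNf
  set efun : (Fin n → ℕ) → ℕ := fun β => ∑ k, β k * Nf k with hefun
  set Nt : ℕ := efun α with hNt
  have hNfge : ∀ k, 1 ≤ Nf k := by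
    intro k
    rw [hNf, hL]
    simp only
    omega
  have hNt1 : 1 ≤ Nt := by
    calc 1 ≤ m := hα
    _ = ∑ k, α k * 1 := by simp [hm]
    _ ≤ ∑ k, α k * Nf k := Finset.sum_le_sum (fun k _ => Nat.mul_le_mul_left _ (hNfge k))
  have heNt : ∀ β, efun β = Nt ↔ β = α := by
    intro β
    constructor
    · intro hb
      exact freq_inj n m α β hm.symm hb
    · rintro rfl; rfl
  have he0 : ∀ β : Fin n → ℕ, efun β = 0 ↔ β = 0 := by
    intro β
    rw [hefun]
    simp only [Finset.sum_eq_zero_iff, Finset.mem_univ, true_implies, Nat.mul_eq_zero]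
    constructor
    · intro hb
      funext k
      rcases hb k with h1 | h1
      · exact h1
      · exact absurd h1 (by have := hNfge k; omega)
    · rintro rfl; intro k; exact Or.inl rfl
  -- exponent facts
  have hptnn : (0:ℝ) ≤ p.toReal := ENNReal.toReal_nonneg
  have hpt1 : p ≠ ∞ → 1 ≤ p.toReal := by
    intro hpi
    rw [show (1:ℝ) = (1:ℝ≥0∞).toReal by simp]
    exact (ENNReal.toReal_le_toReal (by simp) hpi).mpr hp
  set pt : ℝ := p.toReal with hptdef
  -- the weights
  set t : Fin n → ℝ := fun k => ((α k : ℝ) / m) ^ pt⁻¹ with ht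
  have hm0 : (0:ℝ) < m := by positivity
  have hαk : ∀ k, (0:ℝ) ≤ (α k : ℝ) / m := fun k => by positivity
  have hαk1 : ∀ k, (α k : ℝ) / m ≤ 1 := by
    intro k
    rw [div_le_one hm0]
    exact_mod_cast Finset.single_le_sum (f := fun j => α j) (fun j _ => Nat.zero_le _)
      (Finset.mem_univ k)
  have ht0 : ∀ k, 0 ≤ t k := fun k => Real.rpow_nonneg (hαk k) _
  have ht1 : ∀ k, t k ≤ 1 := fun k => Real.rpow_le_one (hαk k) (hαk1 k) (by positivity)
  -- the ball bound
  have hball : ∀ (z : Fin n → ℂ) (s : ℝ), 0 < s → s < 1 → (∀ k, ‖z k‖ ≤ s * t k) →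
      pnormE p z < 1 := by
    intro z s hs0 hs1 hz
    have hzs : ∀ k, ‖z k‖ ≤ s := by
      intro k
      refine le_trans (hz k) ?_
      nlinarith [ht0 k, ht1 k]
    rw [pnormE]
    split_ifs with hpi
    · exact lt_of_le_of_lt (ciSup_le hzs) hs1
    · have h1pt : 1 ≤ pt := hpt1 hpi
      have hptpos : 0 < pt := by linarith
      have hsumt : ∑ k, (t k) ^ pt = 1 := by
        have : ∀ k : Fin n, (t k) ^ pt = (α k : ℝ) / m := by
          intro k
          rw [ht]
          rw [← Real.rpow_mul (hαk k), inv_mul_cancel₀ hptpos.ne', Real.rpow_one]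
        rw [Finset.sum_congr rfl (fun k _ => this k), ← Finset.sum_div]
        rw [show ∑ k, ((α k : ℝ)) = ((∑ k, α k : ℕ) : ℝ) by push_cast; rfl, ← hm]
        field_simp
      have hsum1 : ∑ k, ‖z k‖ ^ pt ≤ s ^ pt := by
        calc ∑ k, ‖z k‖ ^ pt ≤ ∑ k, (s * t k) ^ pt :=
            Finset.sum_le_sum (fun k _ => Real.rpow_le_rpow (norm_nonneg _) (hz k) hptnn)
          _ = ∑ k, s ^ pt * (t k) ^ pt := by
            refine Finset.sum_congr rfl (fun k _ => ?_)
            rw [Real.mul_rpow hs0.le (ht0 k)]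
          _ = s ^ pt * ∑ k, (t k) ^ pt := by rw [Finset.mul_sum]
          _ = s ^ pt := by rw [hsumt, mul_one]
      have hsnn : (0:ℝ) ≤ ∑ k, ‖z k‖ ^ pt :=
        Finset.sum_nonneg (fun k _ => Real.rpow_nonneg (norm_nonneg _) _)
      calc (∑ k, ‖z k‖ ^ pt) ^ (1/pt) ≤ (s ^ pt) ^ (1/pt) :=
          Real.rpow_le_rpow hsnn hsum1 (by positivity)
        _ = s := by
          rw [one_div, ← Real.rpow_mul hs0.le, mul_inv_cancel₀ hptpos.ne', Real.rpow_one]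
        _ < 1 := hs1
  have h00 : pnormE p (0 : Fin n → ℂ) < 1 := by
    refine hball 0 (1/2) (by norm_num) (by norm_num) (fun k => ?_)
    simp only [Pi.zero_apply, norm_zero]
    positivity
  -- series values at 0
  have hprod0 : ∀ β : Fin n → ℕ, (∏ k, (0:ℂ) ^ β k) = if β = 0 then 1 else 0 := by
    intro β
    split_ifs with hb
    · subst hb; simp
    · have : ∃ k, β k ≠ 0 := by
        by_contra hc
        push_neg at hc
        exact hb (funext hc)
      obtain ⟨k, hk⟩ := this
      refine Finset.prod_eq_zero (Finset.mem_univ k) ?_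
      exact zero_pow hk
  have hval0 : ∀ (F : (Fin n → ℕ) → ℂ) (y : ℂ),
      HasSum (fun β => F β * ∏ k, (0:ℂ) ^ β k) y → y = F 0 := by
    intro F y hy
    have h1 : (fun β : Fin n → ℕ => F β * ∏ k, (0:ℂ) ^ β k)
        = fun β => if β = 0 then F 0 else 0 := by
      funext β
      rw [hprod0 β]
      split_ifs with hb
      · subst hb; simp
      · simp
    rw [h1] at hy
    exact hy.unique (hasSum_ite_eq 0 (F 0))
  have ha0 : h 0 = a 0 := hval0 a (h 0) (by simpa using hha 0 h00)
  have hb00 : g 0 = b 0 := hval0 b (g 0) (by simpa using hgb 0 h00)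
  -- the holomorphic sum function
  set c : (Fin n → ℕ) → ℂ := fun β => a β + b β with hc
  set φ : (Fin n → ℂ) → ℂ := fun z => h z + g z with hφ
  have hφsum : ∀ z, pnormE p z < 1 → HasSum (fun β => c β * ∏ k, z k ^ β k) (φ z) := by
    intro z hz
    have := (hha z hz).add (hgb z hz)
    simpa [hc, add_mul] using this
  have hφre : ∀ z, pnormE p z < 1 → (φ z).re ≤ 1 := by
    intro z hz
    have h1 := hre z hz
    rw [hfd z hz] at h1
    simpa [hφ, Complex.add_re, Complex.conj_re] using h1
  have hf0 : (f 0).re = (c 0).re := by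
    rw [hfd 0 h00, hc]
    simp [Complex.add_re, Complex.conj_re, ha0, hb00]
  -- main inequality for each radius s
  set T : ℝ := ∏ k, t k ^ α k with hT
  have main : ∀ s : ℝ, 0 < s → s < 1 →
      (‖c α‖ * (s ^ m * T)) * s ^ Nt ≤ 2 * (1 - (c 0).re) := by
    intro s hs0 hs1
    set zf : ℂ → (Fin n → ℂ) := fun w => fun k => ((s * t k : ℝ) : ℂ) * w ^ Nf k with hzf
    have hzball : ∀ w : ℂ, ‖w‖ < 1 → pnormE p (zf w) < 1 := by
      intro w hw
      refine hball (zf w) s hs0 hs1 (fun k => ?_)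
      rw [hzf]
      simp only
      rw [norm_mul, norm_pow, Complex.norm_real, Real.norm_eq_abs,
        _root_.abs_of_nonneg (by positivity : (0:ℝ) ≤ s * t k)]
      have h2 : ‖w‖ ^ Nf k ≤ 1 := pow_le_one₀ (norm_nonneg _) hw.le
      nlinarith [ht0 k, mul_nonneg hs0.le (ht0 k)]
    set d : (Fin n → ℕ) → ℂ := fun β => c β * ∏ k, ((s * t k : ℝ) : ℂ) ^ β k with hd
    set v : ℂ → ℂ := fun w => φ (zf w) with hv
    have hvsum : ∀ w : ℂ, ‖w‖ < 1 → HasSum (fun β => d β * w ^ efun β) (v w) := by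
      intro w hw
      have h1 := hφsum (zf w) (hzball w hw)
      have h2 : (fun β => c β * ∏ k, (zf w) k ^ β k)
          = fun β => d β * w ^ efun β := by
        funext β
        rw [hzf, hd, hefun]
        simp only
        rw [show (∏ k, (((s * t k : ℝ) : ℂ) * w ^ Nf k) ^ β k)
            = (∏ k, ((s * t k : ℝ) : ℂ) ^ β k) * ∏ k, (w ^ Nf k) ^ β k by
          rw [← Finset.prod_mul_distrib]
          exact Finset.prod_congr rfl (fun k _ => mul_pow _ _ _)]
        rw [show (∏ k, (w ^ Nf k) ^ β k) = w ^ ∑ k, β k * Nf k by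
          rw [← Finset.prod_pow_eq_pow_sum]
          exact Finset.prod_congr rfl (fun k _ => by rw [← pow_mul, mul_comm])]
        ring
      rw [h2] at h1
      exact h1
    have hvre : ∀ w : ℂ, ‖w‖ < 1 → (v w).re ≤ 1 := fun w hw => hφre _ (hzball w hw)
    have hcore := core d efun v hvsum hvre Nt hNt1 0 α he0 heNt s hs0 hs1
    have hd0 : d 0 = c 0 := by rw [hd]; simp
    have hdα : ‖d α‖ = ‖c α‖ * (s ^ m * T) := by
      rw [hd]
      simp only
      rw [norm_mul]
      congr 1
      rw [show ‖∏ k, ((s * t k : ℝ) : ℂ) ^ α k‖ = ∏ k, (s * t k) ^ α k by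
        rw [norm_prod]
        refine Finset.prod_congr rfl (fun k _ => ?_)
        rw [norm_pow, Complex.norm_real, Real.norm_eq_abs,
          _root_.abs_of_nonneg (by positivity : (0:ℝ) ≤ s * t k)]]
      calc ∏ k, (s * t k) ^ α k = ∏ k, (s ^ α k * t k ^ α k) :=
            Finset.prod_congr rfl (fun k _ => mul_pow _ _ _)
        _ = (∏ k, s ^ α k) * ∏ k, t k ^ α k := Finset.prod_mul_distrib
        _ = s ^ m * T := by
            rw [Finset.prod_pow_eq_pow_sum, ← hm, hT]
    rw [hdα, hd0] at hcore
    exact hcore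
  -- pass to the limit s → 1⁻
  have hlim : ‖c α‖ * T ≤ 2 * (1 - (c 0).re) := by
    have hcont : Continuous (fun s : ℝ => (‖c α‖ * T) * s ^ (m + Nt)) :=
      continuous_const.mul (continuous_pow _)
    have htend : Filter.Tendsto (fun s : ℝ => (‖c α‖ * T) * s ^ (m + Nt))
        (nhdsWithin 1 (Set.Iio 1)) (nhds (‖c α‖ * T)) := by
      refine Filter.Tendsto.mono_left ?_ (nhdsWithin_le_nhds (s := Set.Iio (1:ℝ)))
      have h1 := hcont.tendsto 1
      simpa using h1
    refine le_of_tendsto htend ?_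
    filter_upwards [Ioo_mem_nhdsLT_of_mem (show (1:ℝ) ∈ Set.Ioc 0 1 from ⟨one_pos, le_refl _⟩)]
      with s hs
    have h1 := main s hs.1 hs.2
    have h2 : (‖c α‖ * T) * s ^ (m + Nt) = (‖c α‖ * (s ^ m * T)) * s ^ Nt := by
      rw [pow_add]; ring
    rw [h2]
    exact h1
  -- final algebra
  have hX : (0:ℝ) < ∏ k, ((α k : ℝ)) ^ α k := by
    refine Finset.prod_pos (fun k _ => ?_)
    rcases Nat.eq_zero_or_pos (α k) with h1 | h1
    · rw [h1]; norm_num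
    · exact pow_pos (by exact_mod_cast h1) _
  have hTX : T = ((∏ k, ((α k : ℝ)) ^ α k) / (m:ℝ) ^ m) ^ pt⁻¹ := by
    rw [hT]
    have h1 : ∀ k : Fin n, t k ^ α k = (((α k : ℝ) / m) ^ (α k : ℕ)) ^ pt⁻¹ := by
      intro k
      rw [ht]
      rw [← Real.rpow_natCast (((α k : ℝ) / m) ^ pt⁻¹) (α k), ← Real.rpow_mul (hαk k),
        mul_comm, Real.rpow_mul (hαk k), Real.rpow_natCast]
    rw [Finset.prod_congr rfl (fun k _ => h1 k),
      Real.finset_prod_rpow _ _ (fun k _ => pow_nonneg (hαk k) _) _]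
    congr 1
    simp_rw [div_pow]
    rw [Finset.prod_div_distrib]
    congr 1
    exact hm ▸ Finset.prod_pow_eq_pow_sum _ _ _
  have hTpos : 0 < T := by
    rw [hTX]
    exact Real.rpow_pos_of_pos (by positivity) _
  have hfinal : ((((m:ℕ):ℝ) ^ m) / ∏ k, ((α k : ℝ) ^ α k)) ^ pt⁻¹ = T⁻¹ := by
    rw [hTX, ← Real.inv_rpow (by positivity)]
    congr 1
    rw [inv_div]
  calc ‖a α + b α‖ = ‖c α‖ := by rw [hc]
    _ = (‖c α‖ * T) * T⁻¹ := by rw [mul_assoc, mul_inv_cancel₀ hTpos.ne', mul_one]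
    _ ≤ (2 * (1 - (c 0).re)) * T⁻¹ := by
        exact mul_le_mul_of_nonneg_right hlim (inv_nonneg.mpr hTpos.le)
    _ = 2 * (((((∑ k, α k : ℕ) : ℝ) ^ (∑ k, α k)) / ∏ k, ((α k : ℝ) ^ (α k))) ^ (p.toReal)⁻¹) *
        (1 - (f 0).re) := by
        rw [hf0, ← hm, ← hptdef, hfinal]
        ring
end

section
/- Let p ∈ [2,∞] and n ≥ 1. If f(z) = Σ_α a_α z^α + Σ_{|α|≥1} conj(b_α) conj(z)^α is a pluriharmonic function on 𝔹_{ℓ_pⁿ} with sup_{z ∈ 𝔹_{ℓ_pⁿ}} |f(z)| ≤ 1, then for every z with ‖z‖_p ≤ π / ((π + 4√2)√n), one has Σ_{k=1}^{∞} Σ_{|α|=k} (|a_α| + |b_α|) |z^α| ≤ 1. -/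
open scoped BigOperators ENNReal

open scoped Real
open MeasureTheory Complex Finset

namespace Stmt12Aux

noncomputable def nu : Measure ℝ := volume.restrict (Set.Ioc 0 (2*π))

noncomputable def mu (n : ℕ) : Measure (Fin n → ℝ) := Measure.pi fun _ => nu

instance : IsFiniteMeasure nu := by unfold nu; infer_instance
instance (n : ℕ) : IsFiniteMeasure (mu n) := by unfold mu; infer_instance
instance : SigmaFinite nu := by infer_instance

lemma nu_integral_exp (k : ℤ) :
    ∫ x, Complex.exp (k * x * I) ∂nu = if k = 0 then (2*π : ℂ) else 0 := by
  have h2 : (0:ℝ) ≤ 2*π := by positivity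
  have : ∫ x, Complex.exp (k * x * I) ∂nu
      = ∫ x in (0:ℝ)..(2*π), Complex.exp (k * x * I) := by
    rw [intervalIntegral.integral_of_le h2]; rfl
  rw [this]
  rcases eq_or_ne k 0 with hk | hk
  · simp [hk]
  · have hc : (k : ℂ) * I ≠ 0 := by
      simp [Complex.ext_iff, hk]
    have : ∀ x : ℝ, (k : ℂ) * x * I = (k * I) * x := by intro x; ring
    simp only [this]
    rw [integral_exp_mul_complex hc]
    have : (↑k * I) * (2*π : ℝ) = (k:ℂ) * (2 * π * I) := by push_cast; ring
    rw [this, Complex.exp_int_mul_two_pi_mul_I]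
    simp [hk]


noncomputable def eE {n : ℕ} (v : Fin n → ℤ) (θ : Fin n → ℝ) : ℂ :=
  ∏ j, Complex.exp (v j * θ j * I)

lemma eE_norm {n : ℕ} (v : Fin n → ℤ) (θ : Fin n → ℝ) : ‖eE v θ‖ = 1 := by
  unfold eE
  rw [norm_prod]
  refine Finset.prod_eq_one fun j _ => ?_
  rw [Complex.norm_exp]
  norm_num

lemma continuous_eE {n : ℕ} (v : Fin n → ℤ) : Continuous (eE v) := by
  unfold eE
  exact continuous_finset_prod _ fun j _ => Complex.continuous_exp.comp <| by
    exact (continuous_const.mul ((Complex.continuous_ofReal.comp (continuous_apply j)))).mul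
      continuous_const

lemma mu_integral_eE {n : ℕ} (v : Fin n → ℤ) :
    ∫ θ, eE v θ ∂(mu n) = if v = 0 then ((2*π : ℝ)^n : ℂ) else 0 := by
  letI : MeasureSpace ℝ := ⟨nu⟩
  haveI : SigmaFinite (volume : Measure ℝ) := by
    show SigmaFinite nu; infer_instance
  have : ∫ θ, eE v θ ∂(mu n)
      = ∏ j, ∫ x : ℝ, Complex.exp (v j * x * I) := by
    exact MeasureTheory.integral_fintype_prod_eq_prod
      (fun j (x : ℝ) => Complex.exp (v j * x * I))
  rw [this]
  rcases eq_or_ne v 0 with hv | hv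
  · subst hv
    simp only [Pi.zero_apply, if_pos rfl]
    have h0 : ∀ j : Fin n, (∫ x : ℝ, Complex.exp ((0:ℤ) * x * I)) = (2*π : ℂ) := by
      intro j
      rw [show (∫ x : ℝ, Complex.exp ((0:ℤ) * x * I)) = ∫ x, Complex.exp ((0:ℤ) * x * I) ∂nu from rfl,
        nu_integral_exp, if_pos rfl]
    push_cast
    rw [Finset.prod_congr rfl (fun j _ => by push_cast at h0 ⊢; exact h0 j), Finset.prod_const]
    simp
  · obtain ⟨j, hj⟩ : ∃ j, v j ≠ 0 := by
      by_contra hc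
      push_neg at hc
      exact hv (funext hc)
    rw [if_neg hv]
    refine Finset.prod_eq_zero (Finset.mem_univ j) ?_
    rw [show (∫ x : ℝ, Complex.exp (v j * x * I)) = ∫ x, Complex.exp (v j * x * I) ∂nu from rfl,
      nu_integral_exp, if_neg hj]


lemma eE_mul {n : ℕ} (v w : Fin n → ℤ) (θ : Fin n → ℝ) :
    eE v θ * eE w θ = eE (v + w) θ := by
  unfold eE
  rw [← Finset.prod_mul_distrib]
  refine Finset.prod_congr rfl fun j _ => ?_
  rw [← Complex.exp_add]
  congr 1
  simp only [Pi.add_apply]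
  push_cast
  ring

lemma integrable_eE {n : ℕ} (v : Fin n → ℤ) : Integrable (eE v) (mu n) := by
  refine (integrable_const (1 : ℝ)).mono' (continuous_eE v).aestronglyMeasurable ?_
  exact Filter.Eventually.of_forall fun θ => by rw [eE_norm]

/-- Coefficient extraction for a function given by an absolutely convergent
power-type series on the torus. -/
lemma hasSum_integral_mul_eE {n : ℕ} (u : (Fin n → ℕ) → ℂ)
    (hu : Summable fun α => ‖u α‖) (S : (Fin n → ℝ) → ℂ)
    (hS : ∀ θ, HasSum (fun α => u α * eE (fun j => (α j : ℤ)) θ) (S θ))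
    (v : Fin n → ℤ) :
    HasSum (fun α : Fin n → ℕ =>
        u α * (if (fun j => (α j : ℤ)) + v = 0 then ((2*π : ℝ)^n : ℂ) else 0))
      (∫ θ, S θ * eE v θ ∂(mu n)) := by
  have hint : ∀ α : Fin n → ℕ,
      Integrable (fun θ => u α * eE (fun j => (α j : ℤ)) θ * eE v θ) (mu n) := by
    intro α
    simp only [mul_assoc, eE_mul]
    exact (integrable_eE _).const_mul _
  have hnorm : ∀ α (θ : Fin n → ℝ),
      ‖u α * eE (fun j => (α j : ℤ)) θ * eE v θ‖ = ‖u α‖ := by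
    intro α θ
    rw [norm_mul, norm_mul, eE_norm, eE_norm, mul_one, mul_one]
  have hsum : Summable fun α : Fin n → ℕ =>
      ∫ θ, ‖u α * eE (fun j => (α j : ℤ)) θ * eE v θ‖ ∂(mu n) := by
    refine Summable.of_nonneg_of_le (fun α => integral_nonneg fun θ => norm_nonneg _)
      (fun α => ?_) (hu.mul_right ((mu n) Set.univ).toReal)
    have : ∀ θ, ‖u α * eE (fun j => (α j : ℤ)) θ * eE v θ‖ = ‖u α‖ := hnorm α
    simp only [this]
    rw [integral_const]
    simp [mul_comm, Measure.real]
  have key := MeasureTheory.hasSum_integral_of_summable_integral_norm hint hsum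
  have h1 : (∫ θ, (∑' α : Fin n → ℕ, u α * eE (fun j => (α j : ℤ)) θ * eE v θ) ∂(mu n))
      = ∫ θ, S θ * eE v θ ∂(mu n) := by
    congr 1
    funext θ
    exact ((hS θ).mul_right (eE v θ)).tsum_eq
  rw [h1] at key
  convert key using 2 with α
  · rfl
  simp only [mul_assoc, eE_mul]
  rw [MeasureTheory.integral_const_mul, mu_integral_eE]

lemma integral_mul_eE_neg {n : ℕ} (u : (Fin n → ℕ) → ℂ)
    (hu : Summable fun α => ‖u α‖) (S : (Fin n → ℝ) → ℂ)
    (hS : ∀ θ, HasSum (fun α => u α * eE (fun j => (α j : ℤ)) θ) (S θ))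
    (β : Fin n → ℕ) :
    ∫ θ, S θ * eE (-(fun j => (β j : ℤ))) θ ∂(mu n) = u β * ((2*π : ℝ)^n : ℂ) := by
  have key := hasSum_integral_mul_eE u hu S hS (-(fun j => (β j : ℤ)))
  have h2 : (fun α : Fin n → ℕ =>
      u α * (if (fun j => (α j : ℤ)) + (-(fun j => (β j : ℤ))) = 0 then ((2*π : ℝ)^n : ℂ) else 0))
      = fun α => if α = β then u β * ((2*π : ℝ)^n : ℂ) else 0 := by
    funext α
    by_cases hab : α = β
    · subst hab; simp
    · rw [if_neg hab, if_neg, mul_zero]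
      intro hc
      apply hab
      funext j
      have := congrFun hc j
      simp only [Pi.add_apply, Pi.neg_apply, Pi.zero_apply] at this
      omega
  rw [h2] at key
  exact key.unique (hasSum_ite_eq β _)

lemma integral_mul_eE_pos {n : ℕ} (u : (Fin n → ℕ) → ℂ)
    (hu : Summable fun α => ‖u α‖) (S : (Fin n → ℝ) → ℂ)
    (hS : ∀ θ, HasSum (fun α => u α * eE (fun j => (α j : ℤ)) θ) (S θ))
    (β : Fin n → ℕ) (hβ : β ≠ 0) :
    ∫ θ, S θ * eE (fun j => (β j : ℤ)) θ ∂(mu n) = 0 := by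
  have key := hasSum_integral_mul_eE u hu S hS (fun j => (β j : ℤ))
  obtain ⟨j, hj⟩ : ∃ j, β j ≠ 0 := by
    by_contra hc; push_neg at hc; exact hβ (funext hc)
  have h2 : (fun α : Fin n → ℕ =>
      u α * (if (fun j => (α j : ℤ)) + (fun j => (β j : ℤ)) = 0 then ((2*π : ℝ)^n : ℂ) else 0))
      = fun _ => 0 := by
    funext α
    rw [if_neg, mul_zero]
    intro hc
    have := congrFun hc j
    simp only [Pi.add_apply, Pi.zero_apply] at this
    omega
  rw [h2] at key
  exact key.unique hasSum_zero


variable {n : ℕ}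

lemma toReal_ge_two {p : ℝ≥0∞} (hp : 2 ≤ p) (hptop : p ≠ ∞) : (2:ℝ) ≤ p.toReal := by
  have := (ENNReal.toReal_le_toReal (by norm_num) hptop).mpr hp
  simpa using this

lemma pnormE_nonneg {p : ℝ≥0∞} (z : Fin n → ℂ) : 0 ≤ pnormE p z := by
  rw [pnormE]
  split_ifs
  · exact Real.iSup_nonneg fun j => norm_nonneg _
  · exact Real.rpow_nonneg (Finset.sum_nonneg fun j _ => Real.rpow_nonneg (norm_nonneg _) _) _

lemma pnormE_eq_zero {p : ℝ≥0∞} (hp : 2 ≤ p) {z : Fin n → ℂ}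
    (hz : pnormE p z = 0) : z = 0 := by
  rw [pnormE] at hz
  split_ifs at hz with hptop
  · funext j
    have hb : BddAbove (Set.range fun j => ‖z j‖) := Set.Finite.bddAbove (Set.finite_range _)
    have := le_ciSup hb j
    rw [hz] at this
    simpa using le_antisymm this (norm_nonneg _)
  · have hpr : (2:ℝ) ≤ p.toReal := toReal_ge_two hp hptop
    have hpr0 : p.toReal ≠ 0 := by linarith
    have hsumnn : 0 ≤ ∑ j, ‖z j‖ ^ p.toReal :=
      Finset.sum_nonneg fun j _ => Real.rpow_nonneg (norm_nonneg _) _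
    have hsum : ∑ j, ‖z j‖ ^ p.toReal = 0 := by
      have := (Real.rpow_eq_zero hsumnn (by simp [hpr0])).mp hz
      exact this
    funext j
    have := (Finset.sum_eq_zero_iff_of_nonneg
      (fun j _ => Real.rpow_nonneg (norm_nonneg _) _)).mp hsum j (Finset.mem_univ j)
    have := (Real.rpow_eq_zero (norm_nonneg _) hpr0).mp this
    simpa using this

lemma pnormE_scale {p : ℝ≥0∞} (hp : 2 ≤ p) {c : ℝ} (hc : 0 ≤ c)
    (w z : Fin n → ℂ) (hw : ∀ j, ‖w j‖ = c * ‖z j‖) :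
    pnormE p w = c * pnormE p z := by
  rw [pnormE, pnormE]
  split_ifs with hptop
  · simp only [hw]
    exact (Real.mul_iSup_of_nonneg hc _).symm
  · have hpr : (2:ℝ) ≤ p.toReal := toReal_ge_two hp hptop
    have hpr0 : p.toReal ≠ 0 := by linarith
    have h1 : ∀ j : Fin n, ‖w j‖ ^ p.toReal = c ^ p.toReal * ‖z j‖ ^ p.toReal := by
      intro j
      rw [hw j, Real.mul_rpow hc (norm_nonneg _)]
    simp only [h1]
    rw [← Finset.mul_sum,
      Real.mul_rpow (Real.rpow_nonneg hc _)
        (Finset.sum_nonneg fun j _ => Real.rpow_nonneg (norm_nonneg _) _),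
      ← Real.rpow_mul hc, mul_one_div_cancel hpr0, Real.rpow_one]


lemma mu_univ : (mu n) Set.univ = ENNReal.ofReal ((2*π)^n) := by
  unfold mu
  rw [show (Set.univ : Set (Fin n → ℝ)) = Set.pi Set.univ (fun _ => Set.univ) by simp,
    Measure.pi_pi]
  have : nu Set.univ = ENNReal.ofReal (2*π) := by
    unfold nu
    rw [Measure.restrict_apply MeasurableSet.univ, Set.univ_inter, Real.volume_Ioc]
    norm_num
  rw [this, Finset.prod_const]
  rw [← ENNReal.ofReal_pow (by positivity)]
  simp

lemma mu_univ_toReal : ((mu n) Set.univ).toReal = (2*π)^n := by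
  rw [mu_univ, ENNReal.toReal_ofReal (by positivity)]

lemma integrable_of_bounded {E : Type*} [NormedAddCommGroup E] {f : (Fin n → ℝ) → E}
    (hf : Continuous f) (C : ℝ) (hb : ∀ θ, ‖f θ‖ ≤ C) : Integrable f (mu n) :=
  (integrable_const C).mono' hf.aestronglyMeasurable (Filter.Eventually.of_forall hb)

/-- Finite-dimensional Bessel inequality on the torus. -/
lemma bessel {ι : Type*} [DecidableEq ι] (t : Finset ι) (e : ι → (Fin n → ℝ) → ℂ)
    (he : ∀ i ∈ t, Continuous (e i)) (heb : ∀ i ∈ t, ∀ θ, ‖e i θ‖ = 1)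
    (horth : ∀ i ∈ t, ∀ j ∈ t,
      ∫ θ, e i θ * (starRingEnd ℂ) (e j θ) ∂(mu n)
        = if i = j then (((2*π)^n : ℝ) : ℂ) else 0)
    (F : (Fin n → ℝ) → ℂ) (hFc : Continuous F) (hFb : ∀ θ, ‖F θ‖ ≤ 1)
    (c : ι → ℂ)
    (hFe : ∀ i ∈ t, ∫ θ, F θ * (starRingEnd ℂ) (e i θ) ∂(mu n)
        = (((2*π)^n : ℝ) : ℂ) * c i) :
    ∑ i ∈ t, ‖c i‖^2 ≤ 1 := by
  set N : ℝ := (2*π)^n with hN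
  have hNpos : 0 < N := by positivity
  set B : ℝ := ∑ i ∈ t, ‖c i‖^2 with hB
  have hBnn : 0 ≤ B := Finset.sum_nonneg fun i _ => sq_nonneg _
  set P : (Fin n → ℝ) → ℂ := fun θ => ∑ i ∈ t, c i * e i θ with hP
  set CP : ℝ := ∑ i ∈ t, ‖c i‖ with hCP
  have hPc : Continuous P := continuous_finset_sum _ fun i hi => continuous_const.mul (he i hi)
  have hPb : ∀ θ, ‖P θ‖ ≤ CP := by
    intro θ
    refine (norm_sum_le _ _).trans ?_
    refine Finset.sum_le_sum fun i hi => ?_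
    rw [norm_mul, heb i hi θ, mul_one]
  -- integrability of all products
  have hFF : Integrable (fun θ => F θ * (starRingEnd ℂ) (F θ)) (mu n) := by
    refine integrable_of_bounded (hFc.mul (Complex.continuous_conj.comp hFc)) 1 fun θ => ?_
    rw [norm_mul, RCLike.norm_conj]
    exact mul_le_one₀ (hFb θ) (norm_nonneg _) (hFb θ)
  have hFP : Integrable (fun θ => F θ * (starRingEnd ℂ) (P θ)) (mu n) := by
    refine integrable_of_bounded (hFc.mul (Complex.continuous_conj.comp hPc)) CP fun θ => ?_
    rw [norm_mul, RCLike.norm_conj]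
    calc ‖F θ‖ * ‖P θ‖ ≤ 1 * CP := by
          exact mul_le_mul (hFb θ) (hPb θ) (norm_nonneg _) zero_le_one
      _ = CP := one_mul _
  have hPF : Integrable (fun θ => P θ * (starRingEnd ℂ) (F θ)) (mu n) := by
    refine integrable_of_bounded (hPc.mul (Complex.continuous_conj.comp hFc)) CP fun θ => ?_
    rw [norm_mul, RCLike.norm_conj]
    calc ‖P θ‖ * ‖F θ‖ ≤ CP * 1 := by
          refine mul_le_mul (hPb θ) (hFb θ) (norm_nonneg _) ?_
          exact le_trans (norm_nonneg _) (hPb θ)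
      _ = CP := mul_one _
  have hPP : Integrable (fun θ => P θ * (starRingEnd ℂ) (P θ)) (mu n) := by
    refine integrable_of_bounded (hPc.mul (Complex.continuous_conj.comp hPc)) (CP*CP) fun θ => ?_
    rw [norm_mul, RCLike.norm_conj]
    exact mul_le_mul (hPb θ) (hPb θ) (norm_nonneg _) (le_trans (norm_nonneg _) (hPb θ))
  -- value of ∫ F conj P
  have hX : ∫ θ, F θ * (starRingEnd ℂ) (P θ) ∂(mu n) = ((N * B : ℝ) : ℂ) := by
    have h1 : ∀ θ, F θ * (starRingEnd ℂ) (P θ)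
        = ∑ i ∈ t, (starRingEnd ℂ) (c i) * (F θ * (starRingEnd ℂ) (e i θ)) := by
      intro θ
      rw [hP]
      rw [map_sum, Finset.mul_sum]
      refine Finset.sum_congr rfl fun i hi => ?_
      rw [map_mul]
      ring
    simp only [h1]
    rw [integral_finset_sum _ (fun i hi => ?_)]
    · have : ∀ i ∈ t, (∫ θ, (starRingEnd ℂ) (c i) * (F θ * (starRingEnd ℂ) (e i θ)) ∂(mu n))
          = (starRingEnd ℂ) (c i) * ((N : ℂ) * c i) := by
        intro i hi
        rw [MeasureTheory.integral_const_mul, hFe i hi]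
      rw [Finset.sum_congr rfl this]
      have : ∀ i ∈ t, (starRingEnd ℂ) (c i) * ((N:ℂ) * c i) = (N:ℂ) * ((‖c i‖^2 : ℝ) : ℂ) := by
        intro i _
        rw [show (starRingEnd ℂ) (c i) * ((N:ℂ) * c i) = (N:ℂ) * (c i * (starRingEnd ℂ) (c i)) by ring,
          Complex.mul_conj']
        norm_cast
      rw [Finset.sum_congr rfl this, ← Finset.mul_sum, hB]
      push_cast
      ring
    · exact (integrable_of_bounded ((hFc.mul (Complex.continuous_conj.comp (he i hi)))) 1
        (fun θ => by
          simp only [Pi.mul_apply, Function.comp_apply]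
          rw [norm_mul, RCLike.norm_conj, heb i hi θ, mul_one]; exact hFb θ)).const_mul _
  -- value of ∫ P conj P
  have hY : ∫ θ, P θ * (starRingEnd ℂ) (P θ) ∂(mu n) = ((N * B : ℝ) : ℂ) := by
    have h2 : ∀ θ, P θ * (starRingEnd ℂ) (P θ)
        = ∑ i ∈ t, ∑ j ∈ t, (c i * (starRingEnd ℂ) (c j)) * (e i θ * (starRingEnd ℂ) (e j θ)) := by
      intro θ
      rw [hP]
      simp only [map_sum, map_mul]
      rw [Finset.sum_mul_sum]
      refine Finset.sum_congr rfl fun i _ => Finset.sum_congr rfl fun j _ => by ring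
    simp only [h2]
    have hint2 : ∀ i ∈ t, ∀ j ∈ t, Integrable
        (fun θ => (c i * (starRingEnd ℂ) (c j)) * (e i θ * (starRingEnd ℂ) (e j θ))) (mu n) := by
      intro i hi j hj
      refine (integrable_of_bounded ((he i hi).mul (Complex.continuous_conj.comp (he j hj))) 1
        (fun θ => ?_)).const_mul _
      simp only [Pi.mul_apply, Function.comp_apply]
      rw [norm_mul, RCLike.norm_conj, heb i hi θ, heb j hj θ, mul_one]
    rw [integral_finset_sum _ (fun i hi => integrable_finset_sum _ (fun j hj => hint2 i hi j hj))]
    have h3 : ∀ i ∈ t, (∫ θ, ∑ j ∈ t,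
        (c i * (starRingEnd ℂ) (c j)) * (e i θ * (starRingEnd ℂ) (e j θ)) ∂(mu n))
        = c i * (starRingEnd ℂ) (c i) * (N : ℂ) := by
      intro i hi
      rw [integral_finset_sum _ (fun j hj => hint2 i hi j hj)]
      have : ∀ j ∈ t, (∫ θ, (c i * (starRingEnd ℂ) (c j)) * (e i θ * (starRingEnd ℂ) (e j θ)) ∂(mu n))
          = if i = j then c i * (starRingEnd ℂ) (c j) * (N:ℂ) else 0 := by
        intro j hj
        rw [MeasureTheory.integral_const_mul, horth i hi j hj]
        split_ifs <;> simp
      rw [Finset.sum_congr rfl this, Finset.sum_ite_eq t i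
        (fun j => c i * (starRingEnd ℂ) (c j) * (N:ℂ)), if_pos hi]
    rw [Finset.sum_congr rfl h3]
    have h4 : ∀ i ∈ t, c i * (starRingEnd ℂ) (c i) * (N:ℂ) = (N:ℂ) * ((‖c i‖^2 : ℝ):ℂ) := by
      intro i _
      rw [Complex.mul_conj']
      push_cast
      ring
    rw [Finset.sum_congr rfl h4, ← Finset.mul_sum, hB]
    push_cast
    ring
  -- value of ∫ P conj F
  have hZ : ∫ θ, P θ * (starRingEnd ℂ) (F θ) ∂(mu n) = ((N * B : ℝ) : ℂ) := by
    have h5 : (fun θ => P θ * (starRingEnd ℂ) (F θ))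
        = fun θ => (starRingEnd ℂ) (F θ * (starRingEnd ℂ) (P θ)) := by
      funext θ
      rw [map_mul, Complex.conj_conj]
      ring
    rw [h5, integral_conj, hX, Complex.conj_ofReal]
  -- the L² norm of F is at most N
  have hW : (∫ θ, F θ * (starRingEnd ℂ) (F θ) ∂(mu n)).re ≤ N := by
    have h6 : ∀ θ, F θ * (starRingEnd ℂ) (F θ) = ((‖F θ‖^2 : ℝ) : ℂ) := by
      intro θ
      rw [Complex.mul_conj']
      push_cast
      ring
    simp only [h6]
    have h8 : (∫ θ, ((‖F θ‖^2 : ℝ) : ℂ) ∂(mu n)) = ((∫ θ, ‖F θ‖^2 ∂(mu n) : ℝ) : ℂ) :=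
      integral_ofReal
    rw [h8, Complex.ofReal_re]
    have hint : Integrable (fun θ => ‖F θ‖^2) (mu n) := by
      refine integrable_of_bounded (hFc.norm.pow 2) 1 fun θ => ?_
      rw [Real.norm_of_nonneg (sq_nonneg _)]
      exact pow_le_one₀ (norm_nonneg _) (hFb θ)
    calc (∫ θ, ‖F θ‖^2 ∂(mu n)) ≤ ∫ _θ, (1:ℝ) ∂(mu n) := by
          refine integral_mono hint (integrable_const 1) fun θ => ?_
          exact pow_le_one₀ (norm_nonneg _) (hFb θ)
      _ = N := by rw [integral_const, smul_eq_mul, mul_one, Measure.real, mu_univ_toReal]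
  -- Bessel's inequality
  have hexp : ∀ θ, (F θ - P θ) * (starRingEnd ℂ) (F θ - P θ)
      = F θ * (starRingEnd ℂ) (F θ) - F θ * (starRingEnd ℂ) (P θ)
        - P θ * (starRingEnd ℂ) (F θ) + P θ * (starRingEnd ℂ) (P θ) := by
    intro θ
    rw [map_sub]
    ring
  have h0 : (0:ℝ) ≤ (∫ θ, (F θ - P θ) * (starRingEnd ℂ) (F θ - P θ) ∂(mu n)).re := by
    have h7 : ∀ θ, (F θ - P θ) * (starRingEnd ℂ) (F θ - P θ) = ((‖F θ - P θ‖^2 : ℝ) : ℂ) := by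
      intro θ
      rw [Complex.mul_conj']
      push_cast
      ring
    simp only [h7]
    have h8 : (∫ θ, ((‖F θ - P θ‖^2 : ℝ) : ℂ) ∂(mu n))
        = ((∫ θ, ‖F θ - P θ‖^2 ∂(mu n) : ℝ) : ℂ) := integral_ofReal
    rw [h8, Complex.ofReal_re]
    exact integral_nonneg fun θ => sq_nonneg _
  have hsplit : ∫ θ, (F θ - P θ) * (starRingEnd ℂ) (F θ - P θ) ∂(mu n)
      = (∫ θ, F θ * (starRingEnd ℂ) (F θ) ∂(mu n)) - ((N * B : ℝ) : ℂ) := by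
    have i1 : Integrable (fun θ => F θ * (starRingEnd ℂ) (F θ)
        - F θ * (starRingEnd ℂ) (P θ)) (mu n) := hFF.sub hFP
    have i2 : Integrable (fun θ => F θ * (starRingEnd ℂ) (F θ)
        - F θ * (starRingEnd ℂ) (P θ) - P θ * (starRingEnd ℂ) (F θ)) (mu n) := i1.sub hPF
    simp only [hexp]
    rw [integral_add i2 hPP, integral_sub i1 hPF, integral_sub hFF hFP, hX, hY, hZ]
    ring
  rw [hsplit] at h0
  rw [Complex.sub_re, Complex.ofReal_re] at h0
  have : N * B ≤ N * 1 := by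
    rw [mul_one]
    linarith
  exact le_of_mul_le_mul_left this hNpos


lemma eE_conj {n : ℕ} (v : Fin n → ℤ) (θ : Fin n → ℝ) :
    (starRingEnd ℂ) (eE v θ) = eE (-v) θ := by
  unfold eE
  rw [map_prod]
  refine Finset.prod_congr rfl fun j _ => ?_
  rw [← Complex.exp_conj]
  congr 1
  simp only [map_mul, Complex.conj_I, Complex.conj_ofReal, map_intCast, Pi.neg_apply]
  push_cast
  ring

lemma integrable_mul_eE {n : ℕ} {S : (Fin n → ℝ) → ℂ} (hc : Continuous S) (C : ℝ)
    (hb : ∀ θ, ‖S θ‖ ≤ C) (v : Fin n → ℤ) :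
    Integrable (fun θ => S θ * eE v θ) (mu n) :=
  integrable_of_bounded (hc.mul (continuous_eE v)) C fun θ => by
    rw [norm_mul, eE_norm, mul_one]; exact hb θ

lemma integrable_conj_mul_eE {n : ℕ} {S : (Fin n → ℝ) → ℂ} (hc : Continuous S) (C : ℝ)
    (hb : ∀ θ, ‖S θ‖ ≤ C) (v : Fin n → ℤ) :
    Integrable (fun θ => (starRingEnd ℂ) (S θ * eE v θ)) (mu n) :=
  integrable_of_bounded (Complex.continuous_conj.comp (hc.mul (continuous_eE v))) C fun θ => by
    simp only [Function.comp_apply, RCLike.norm_conj]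
    rw [norm_mul, eE_norm, mul_one]; exact hb θ

lemma norm_le_tsum_norm {n : ℕ} {u : (Fin n → ℕ) → ℂ} (hu : Summable fun α => ‖u α‖)
    {S : (Fin n → ℝ) → ℂ}
    (hS : ∀ θ, HasSum (fun α => u α * eE (fun j => (α j : ℤ)) θ) (S θ)) (θ : Fin n → ℝ) :
    ‖S θ‖ ≤ ∑' α, ‖u α‖ := by
  rw [← (hS θ).tsum_eq]
  have hsum : Summable fun α : Fin n → ℕ => ‖u α * eE (fun j => (α j : ℤ)) θ‖ := by
    refine hu.congr fun α => ?_
    rw [norm_mul, eE_norm, mul_one]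
  refine (norm_tsum_le_tsum_norm hsum).trans ?_
  refine le_of_eq (tsum_congr fun α => ?_)
  rw [norm_mul, eE_norm, mul_one]

/-- Bessel inequality for the coefficients of a bounded pluriharmonic-type function
on the torus. -/
lemma bessel_coeffs {n : ℕ} (ua ub : (Fin n → ℕ) → ℂ)
    (hua : Summable fun α => ‖ua α‖) (hub : Summable fun α => ‖ub α‖)
    (S1 S2 : (Fin n → ℝ) → ℂ) (hS1c : Continuous S1) (hS2c : Continuous S2)
    (hSa : ∀ θ, HasSum (fun α => ua α * eE (fun j => (α j : ℤ)) θ) (S1 θ))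
    (hSb : ∀ θ, HasSum (fun α => ub α * eE (fun j => (α j : ℤ)) θ) (S2 θ))
    (hbound : ∀ θ, ‖S1 θ + (starRingEnd ℂ) (S2 θ)‖ ≤ 1)
    (s : Finset (Fin n → ℕ)) (hs : ∀ α ∈ s, α ≠ 0) :
    ∑ α ∈ s, (‖ua α‖^2 + ‖ub α‖^2) ≤ 1 := by
  classical
  set F : (Fin n → ℝ) → ℂ := fun θ => S1 θ + (starRingEnd ℂ) (S2 θ) with hF
  set e : (Fin n → ℕ) ⊕ (Fin n → ℕ) → (Fin n → ℝ) → ℂ :=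
    Sum.elim (fun α => eE (fun j => (α j : ℤ))) (fun α => eE (-(fun j => (α j : ℤ)))) with he
  set c : (Fin n → ℕ) ⊕ (Fin n → ℕ) → ℂ :=
    Sum.elim ua (fun α => (starRingEnd ℂ) (ub α)) with hc
  have hnonzero : ∀ β ∈ s, ∃ j, β j ≠ 0 := by
    intro β hβ
    by_contra hcc; push_neg at hcc; exact (hs β hβ) (funext hcc)
  -- orthogonality of the system
  have horth : ∀ i ∈ s.disjSum s, ∀ j ∈ s.disjSum s,
      ∫ θ, e i θ * (starRingEnd ℂ) (e j θ) ∂(mu n)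
        = if i = j then (((2*π)^n : ℝ) : ℂ) else 0 := by
    rintro (α|α) hα (β|β) hβ <;>
      simp only [Finset.inl_mem_disjSum, Finset.inr_mem_disjSum] at hα hβ <;>
      simp only [he, Sum.elim_inl, Sum.elim_inr, eE_conj, neg_neg, eE_mul, mu_integral_eE]
    · have hiff : ((fun j => (α j : ℤ)) + -(fun j => (β j : ℤ)) = 0) ↔ α = β := by
        constructor
        · intro hcon
          funext j
          have := congrFun hcon j
          simp only [Pi.add_apply, Pi.neg_apply, Pi.zero_apply] at this
          omega
        · rintro rfl; funext j; simp
      rw [if_congr hiff rfl rfl]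
      simp only [Sum.inl.injEq]
      push_cast
      split_ifs <;> rfl
    · obtain ⟨j, hj⟩ := hnonzero β hβ
      rw [if_neg, if_neg (by simp)]
      intro hcon
      have := congrFun hcon j
      simp only [Pi.add_apply, Pi.zero_apply] at this
      omega
    · obtain ⟨j, hj⟩ := hnonzero β hβ
      rw [if_neg, if_neg (by simp)]
      intro hcon
      have := congrFun hcon j
      simp only [Pi.add_apply, Pi.neg_apply, Pi.zero_apply] at this
      omega
    · have hiff : (-(fun j => (α j : ℤ)) + (fun j => (β j : ℤ)) = 0) ↔ α = β := by
        constructor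
        · intro hcon
          funext j
          have := congrFun hcon j
          simp only [Pi.add_apply, Pi.neg_apply, Pi.zero_apply] at this
          omega
        · rintro rfl; funext j; simp
      rw [if_congr hiff rfl rfl]
      simp only [Sum.inr.injEq]
      push_cast
      split_ifs <;> rfl
  -- boundedness constants
  set Ma : ℝ := ∑' α, ‖ua α‖ with hMa
  set Mb : ℝ := ∑' α, ‖ub α‖ with hMb
  have hS1b : ∀ θ, ‖S1 θ‖ ≤ Ma := norm_le_tsum_norm hua hSa
  have hS2b : ∀ θ, ‖S2 θ‖ ≤ Mb := norm_le_tsum_norm hub hSb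
  -- Fourier coefficients of F
  have hFe : ∀ i ∈ s.disjSum s,
      ∫ θ, F θ * (starRingEnd ℂ) (e i θ) ∂(mu n) = (((2*π)^n : ℝ) : ℂ) * c i := by
    rintro (α|α) hα <;>
      simp only [Finset.inl_mem_disjSum, Finset.inr_mem_disjSum] at hα <;>
      simp only [he, hc, Sum.elim_inl, Sum.elim_inr, eE_conj, neg_neg]
    · -- coefficient for `inl α` : e = eE α, conj e = eE (-α)
      have hsplit : ∀ θ : Fin n → ℝ, F θ * eE (-(fun j => (α j : ℤ))) θ
          = S1 θ * eE (-(fun j => (α j : ℤ))) θ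
            + (starRingEnd ℂ) (S2 θ * eE (fun j => (α j : ℤ)) θ) := by
        intro θ
        rw [map_mul, eE_conj]
        rw [hF]
        ring
      simp only [hsplit]
      rw [integral_add (integrable_mul_eE hS1c Ma hS1b _)
        (integrable_conj_mul_eE hS2c Mb hS2b _),
        integral_mul_eE_neg ua hua S1 hSa α, integral_conj,
        integral_mul_eE_pos ub hub S2 hSb α (hs α hα)]
      simp [mul_comm]
    · -- coefficient for `inr α` : e = eE (-α), conj e = eE α
      have hsplit : ∀ θ : Fin n → ℝ, F θ * eE (fun j => (α j : ℤ)) θ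
          = S1 θ * eE (fun j => (α j : ℤ)) θ
            + (starRingEnd ℂ) (S2 θ * eE (-(fun j => (α j : ℤ))) θ) := by
        intro θ
        rw [map_mul, eE_conj, neg_neg]
        rw [hF]
        ring
      simp only [hsplit]
      rw [integral_add (integrable_mul_eE hS1c Ma hS1b _)
        (integrable_conj_mul_eE hS2c Mb hS2b _),
        integral_mul_eE_pos ua hua S1 hSa α (hs α hα), integral_conj,
        integral_mul_eE_neg ub hub S2 hSb α]
      rw [map_mul, ← Complex.ofReal_pow, Complex.conj_ofReal]
      push_cast
      ring
  -- apply Bessel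
  have hbes := bessel (s.disjSum s) e
    (by rintro (α|α) _ <;> simp only [he, Sum.elim_inl, Sum.elim_inr] <;> exact continuous_eE _)
    (by rintro (α|α) _ θ <;> simp only [he, Sum.elim_inl, Sum.elim_inr] <;> exact eE_norm _ _)
    horth F (hS1c.add (Complex.continuous_conj.comp hS2c)) hbound c hFe
  rw [Finset.sum_disjSum] at hbes
  refine le_trans (le_of_eq ?_) hbes
  rw [Finset.sum_add_distrib]
  congr 1
  refine Finset.sum_congr rfl fun α _ => ?_
  simp only [hc, Sum.elim_inr]
  rw [RCLike.norm_conj]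

lemma sum_prod_pow_le {n : ℕ} (hn : 1 ≤ n) (x : ℝ) (hx0 : 0 ≤ x) (hx : (n:ℝ) * x ≤ 1/3)
    (s : Finset (Fin n → ℕ)) (hs : 0 ∉ s) : ∑ α ∈ s, ∏ k, x ^ (α k) ≤ 1/2 := by
  classical
  have hn1 : (1:ℝ) ≤ (n:ℝ) := by exact_mod_cast hn
  have hx13 : x ≤ 1/3 := by nlinarith
  have hx1 : x < 1 := by linarith
  set M : ℕ := s.sup (fun α => Finset.univ.sup α) with hM
  set box : Finset (Fin n → ℕ) := Fintype.piFinset (fun _ : Fin n => Finset.range (M+1))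
    with hbox
  have h0box : (0 : Fin n → ℕ) ∈ box := by
    rw [hbox, Fintype.mem_piFinset]
    intro j
    simp
  have hsub : s ⊆ box.erase 0 := by
    intro α hα
    rw [Finset.mem_erase]
    refine ⟨fun hc => hs (hc ▸ hα), ?_⟩
    rw [hbox, Fintype.mem_piFinset]
    intro j
    rw [Finset.mem_range, Nat.lt_succ_iff]
    exact le_trans (Finset.le_sup (Finset.mem_univ j))
      (Finset.le_sup (f := fun α : Fin n → ℕ => Finset.univ.sup α) hα)
  have hterm_nonneg : ∀ α : Fin n → ℕ, 0 ≤ ∏ k, x ^ (α k) :=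
    fun α => Finset.prod_nonneg fun k _ => pow_nonneg hx0 _
  have h1 : ∑ α ∈ s, ∏ k, x ^ (α k) ≤ ∑ α ∈ box.erase 0, ∏ k, x ^ (α k) :=
    Finset.sum_le_sum_of_subset_of_nonneg hsub fun α _ _ => hterm_nonneg α
  have h2 : ∑ α ∈ box.erase 0, ∏ k, x ^ (α k)
      = (∑ α ∈ box, ∏ k, x ^ (α k)) - 1 := by
    rw [Finset.sum_erase_eq_sub h0box]
    simp
  have h3 : ∑ α ∈ box, ∏ k, x ^ (α k) = ∏ _k : Fin n, (∑ m ∈ Finset.range (M+1), x ^ m) := by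
    rw [Finset.prod_univ_sum]
  have hgeom : ∑ m ∈ Finset.range (M+1), x ^ m ≤ (1 - x)⁻¹ := by
    have hsummable : Summable fun m : ℕ => x ^ m := summable_geometric_of_lt_one hx0 hx1
    refine le_trans (Summable.sum_le_tsum (Finset.range (M+1)) (fun m _ => pow_nonneg hx0 m) hsummable) ?_
    rw [tsum_geometric_of_lt_one hx0 hx1]
  have hb : (2:ℝ)/3 ≤ (1 - x)^n := by
    have := one_add_mul_le_pow (a := -x) (by linarith) n
    have hnx : (n:ℝ) * x ≤ 1/3 := hx
    calc (2:ℝ)/3 = 1 - 1/3 := by norm_num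
      _ ≤ 1 + (n:ℝ) * (-x) := by nlinarith
      _ ≤ (1 + -x)^n := this
      _ = (1 - x)^n := by ring_nf
  have hbpos : (0:ℝ) < (1 - x)^n := lt_of_lt_of_le (by norm_num) hb
  have h4 : ∏ _k : Fin n, (∑ m ∈ Finset.range (M+1), x ^ m) ≤ ((1 - x)⁻¹)^n := by
    rw [Finset.prod_const]
    simp only [Finset.card_univ, Fintype.card_fin]
    refine pow_le_pow_left₀ (Finset.sum_nonneg fun m _ => pow_nonneg hx0 m) hgeom n
  have h5 : ((1 - x)⁻¹)^n ≤ 3/2 := by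
    rw [inv_pow]
    rw [inv_le_comm₀ (by positivity) (by norm_num)]
    calc ((3:ℝ)/2)⁻¹ = 2/3 := by norm_num
      _ ≤ (1-x)^n := hb
  linarith

lemma numeric1 : Real.sqrt 3 * (π / (π + 4 * Real.sqrt 2)) < 1 := by
  have h2 : Real.sqrt 2 ^ 2 = 2 := Real.sq_sqrt (by norm_num)
  have h3 : Real.sqrt 3 ^ 2 = 3 := Real.sq_sqrt (by norm_num)
  have h2n : 0 ≤ Real.sqrt 2 := Real.sqrt_nonneg 2
  have h3n : 0 ≤ Real.sqrt 3 := Real.sqrt_nonneg 3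
  have hs2 : (1.41:ℝ) < Real.sqrt 2 := by nlinarith
  have hs3 : Real.sqrt 3 < 1.74 := by nlinarith
  have hpil : π < 3.15 := Real.pi_lt_d2
  have hpig : 3.14 < π := Real.pi_gt_d2
  have hden : 0 < π + 4 * Real.sqrt 2 := by nlinarith
  rw [mul_div_assoc']
  rw [div_lt_one hden]
  nlinarith

end Stmt12Aux

theorem stmt12 (n : ℕ) (hn : 1 ≤ n) (p : ℝ≥0∞) (hp : 2 ≤ p)
    (f h g : (Fin n → ℂ) → ℂ) (a b : (Fin n → ℕ) → ℂ) (hb0 : b 0 = 0)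
    (hh : DifferentiableOn ℂ h {z | pnormE p z < 1})
    (hg : DifferentiableOn ℂ g {z | pnormE p z < 1})
    (hg0 : g 0 = 0)
    (hfd : ∀ z : Fin n → ℂ, pnormE p z < 1 → f z = h z + (starRingEnd ℂ) (g z))
    (hha : ∀ z : Fin n → ℂ, pnormE p z < 1 →
      HasSum (fun α : Fin n → ℕ => a α * ∏ k, z k ^ α k) (h z))
    (hgb : ∀ z : Fin n → ℂ, pnormE p z < 1 →
      HasSum (fun α : Fin n → ℕ => b α * ∏ k, z k ^ α k) (g z))
    (hmap : ∀ z : Fin n → ℂ, pnormE p z < 1 → ‖f z‖ ≤ 1)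
    (z : Fin n → ℂ)
    (hz : pnormE p z ≤ Real.pi / ((Real.pi + 4 * Real.sqrt 2) * Real.sqrt n)) :
    -- the (nonnegative-term) Bohr sum over all multi-indices with `|α| ≥ 1`
    -- is at most 1, i.e. every finite partial sum is at most 1
    ∀ s : Finset (Fin n → ℕ), 0 ∉ s →
      ∑ α ∈ s, (‖a α‖ + ‖b α‖) * ‖∏ k, z k ^ α k‖ ≤ 1 := by
  classical
  intro s hs0
  open Stmt12Aux in
  by_cases hz0 : z = 0
  · -- trivial case `z = 0`
    refine le_trans (le_of_eq (Finset.sum_eq_zero ?_)) zero_le_one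
    intro α hα
    obtain ⟨j, hj⟩ : ∃ j, α j ≠ 0 := by
      by_contra hc; push_neg at hc
      exact hs0 (by rwa [show α = 0 from funext hc] at hα)
    have : (∏ k, z k ^ α k) = 0 :=
      Finset.prod_eq_zero (Finset.mem_univ j) (by simp [hz0, hj, zero_pow])
    rw [this]
    simp
  -- main case
  have hs' : ∀ α ∈ s, α ≠ 0 := fun α hα => ne_of_mem_of_not_mem hα hs0
  set r : ℝ := pnormE p z with hr
  have hr0 : 0 ≤ r := Stmt12Aux.pnormE_nonneg z
  have hrpos : 0 < r := by
    rcases lt_or_eq_of_le hr0 with h | h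
    · exact h
    · exact absurd (Stmt12Aux.pnormE_eq_zero hp h.symm) hz0
  set cst : ℝ := Real.pi / (Real.pi + 4 * Real.sqrt 2) with hcst
  have hden : (0:ℝ) < Real.pi + 4 * Real.sqrt 2 := by positivity
  have hcpos : 0 < cst := by rw [hcst]; positivity
  set t : ℝ := Real.sqrt 3 * cst with ht
  have htpos : 0 < t := by
    rw [ht]
    have : (0:ℝ) < Real.sqrt 3 := Real.sqrt_pos.mpr (by norm_num)
    positivity
  have ht1 : t < 1 := Stmt12Aux.numeric1
  have hnpos : (0:ℝ) < (n:ℝ) := by exact_mod_cast Nat.lt_of_lt_of_le Nat.zero_lt_one hn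
  have hsqn : (0:ℝ) < Real.sqrt n := Real.sqrt_pos.mpr hnpos
  have hzr : r ≤ cst / Real.sqrt n := by
    rw [hcst, div_div]
    exact hz
  set ρ : Fin n → ℝ := fun j => (t / r) * ‖z j‖ with hρ
  have hρnn : ∀ j, 0 ≤ ρ j := fun j => mul_nonneg (le_of_lt (div_pos htpos hrpos)) (norm_nonneg _)
  set q : ℝ := r / t with hqdef
  have hq0 : 0 ≤ q := le_of_lt (div_pos hrpos htpos)
  have hzρq : ∀ j, ‖z j‖ = ρ j * q := by
    intro j
    rw [hρ, hqdef]
    field_simp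
  -- the torus map
  set w : (Fin n → ℝ) → (Fin n → ℂ) := fun θ j => (ρ j : ℂ) * Complex.exp (θ j * I) with hw
  have hwnorm : ∀ θ j, ‖w θ j‖ = (t / r) * ‖z j‖ := by
    intro θ j
    have e1 : ‖Complex.exp ((θ j : ℂ) * I)‖ = 1 := by
      rw [Complex.norm_exp]
      simp
    show ‖(ρ j : ℂ) * Complex.exp (θ j * I)‖ = t / r * ‖z j‖
    rw [norm_mul, e1, mul_one, Complex.norm_real, Real.norm_eq_abs,
      _root_.abs_of_nonneg (hρnn j)]
  have hwball : ∀ θ, pnormE p (w θ) < 1 := by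
    intro θ
    have := Stmt12Aux.pnormE_scale hp (le_of_lt (div_pos htpos hrpos)) (w θ) z (hwnorm θ)
    rw [this, ← hr, div_mul_cancel₀ _ (ne_of_gt hrpos)]
    exact ht1
  have hwcont : Continuous w := by
    refine continuous_pi fun j => continuous_const.mul (Complex.continuous_exp.comp ?_)
    exact (Complex.continuous_ofReal.comp (continuous_apply j)).mul continuous_const
  -- the real positive point
  set ζ : Fin n → ℂ := fun j => (ρ j : ℂ) with hζ
  have hζball : pnormE p ζ < 1 := by
    have hnorm : ∀ j, ‖ζ j‖ = (t / r) * ‖z j‖ := by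
      intro j
      show ‖((ρ j : ℝ) : ℂ)‖ = t / r * ‖z j‖
      rw [Complex.norm_real, Real.norm_eq_abs, _root_.abs_of_nonneg (hρnn j)]
    have := Stmt12Aux.pnormE_scale hp (le_of_lt (div_pos htpos hrpos)) ζ z hnorm
    rw [this, ← hr, div_mul_cancel₀ _ (ne_of_gt hrpos)]
    exact ht1
  -- coefficients
  set ua : (Fin n → ℕ) → ℂ := fun α => a α * ((∏ k, ρ k ^ α k : ℝ) : ℂ) with hua
  set ub : (Fin n → ℕ) → ℂ := fun α => b α * ((∏ k, ρ k ^ α k : ℝ) : ℂ) with hub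
  have hζprod : ∀ α : Fin n → ℕ, (∏ k, ζ k ^ α k) = ((∏ k, ρ k ^ α k : ℝ) : ℂ) := by
    intro α
    rw [hζ]
    push_cast
    rfl
  have hwprod : ∀ (θ : Fin n → ℝ) (α : Fin n → ℕ),
      (∏ k, (w θ k) ^ α k)
        = ((∏ k, ρ k ^ α k : ℝ) : ℂ) * Stmt12Aux.eE (fun j => (α j : ℤ)) θ := by
    intro θ α
    rw [hw, Stmt12Aux.eE]
    simp only [mul_pow]
    rw [Finset.prod_mul_distrib]
    congr 1
    · push_cast; rfl
    · refine Finset.prod_congr rfl fun k _ => ?_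
      rw [← Complex.exp_nat_mul]
      congr 1
      push_cast
      ring
  -- summability of the coefficients
  have hsum_ua : Summable fun α => ‖ua α‖ := by
    have h1 := hha ζ hζball
    have h2 : (fun α : Fin n → ℕ => a α * ∏ k, ζ k ^ α k) = ua := by
      funext α; rw [hua, hζprod α]
    rw [h2] at h1
    exact summable_norm_iff.mpr h1.summable
  have hsum_ub : Summable fun α => ‖ub α‖ := by
    have h1 := hgb ζ hζball
    have h2 : (fun α : Fin n → ℕ => b α * ∏ k, ζ k ^ α k) = ub := by
      funext α; rw [hub, hζprod α]
    rw [h2] at h1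
    exact summable_norm_iff.mpr h1.summable
  -- HasSum on the torus
  have hSa : ∀ θ, HasSum (fun α => ua α * Stmt12Aux.eE (fun j => (α j : ℤ)) θ) (h (w θ)) := by
    intro θ
    have h1 := hha (w θ) (hwball θ)
    have h2 : (fun α : Fin n → ℕ => a α * ∏ k, (w θ k) ^ α k)
        = fun α => ua α * Stmt12Aux.eE (fun j => (α j : ℤ)) θ := by
      funext α; rw [hua, hwprod θ α]; ring
    rwa [h2] at h1
  have hSb : ∀ θ, HasSum (fun α => ub α * Stmt12Aux.eE (fun j => (α j : ℤ)) θ) (g (w θ)) := by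
    intro θ
    have h1 := hgb (w θ) (hwball θ)
    have h2 : (fun α : Fin n → ℕ => b α * ∏ k, (w θ k) ^ α k)
        = fun α => ub α * Stmt12Aux.eE (fun j => (α j : ℤ)) θ := by
      funext α; rw [hub, hwprod θ α]; ring
    rwa [h2] at h1
  -- continuity and boundedness
  have hS1c : Continuous (fun θ => h (w θ)) :=
    hh.continuousOn.comp_continuous hwcont fun θ => Set.mem_setOf.mpr (hwball θ)
  have hS2c : Continuous (fun θ => g (w θ)) :=
    hg.continuousOn.comp_continuous hwcont fun θ => Set.mem_setOf.mpr (hwball θ)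
  have hbound : ∀ θ, ‖h (w θ) + (starRingEnd ℂ) (g (w θ))‖ ≤ 1 := by
    intro θ
    rw [← hfd (w θ) (hwball θ)]
    exact hmap (w θ) (hwball θ)
  -- Bessel inequality
  have hB : ∑ α ∈ s, (‖ua α‖^2 + ‖ub α‖^2) ≤ 1 :=
    Stmt12Aux.bessel_coeffs ua ub hsum_ua hsum_ub _ _ hS1c hS2c hSa hSb hbound s hs'
  -- the factorization of the norms of the monomials
  have hznorm : ∀ α : Fin n → ℕ,
      ‖∏ k, z k ^ α k‖ = (∏ k, ρ k ^ α k) * q ^ (∑ k, α k) := by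
    intro α
    rw [norm_prod]
    have h1 : ∀ k : Fin n, ‖z k ^ α k‖ = (ρ k * q) ^ α k := by
      intro k
      rw [norm_pow, hzρq k]
    rw [Finset.prod_congr rfl fun k _ => h1 k]
    simp only [mul_pow]
    rw [Finset.prod_mul_distrib, Finset.prod_pow_eq_pow_sum]
  -- the bound on q
  have hq2 : (n:ℝ) * q^2 ≤ 1/3 := by
    have hqle : q ≤ 1 / (Real.sqrt 3 * Real.sqrt n) := by
      rw [hqdef, ht]
      rw [div_le_div_iff₀ htpos (by positivity)]
      calc r * (Real.sqrt 3 * Real.sqrt n) ≤ (cst / Real.sqrt n) * (Real.sqrt 3 * Real.sqrt n) := by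
            refine mul_le_mul_of_nonneg_right hzr (by positivity)
        _ = 1 * (Real.sqrt 3 * cst) := by field_simp
    have h3 : Real.sqrt 3 ^ 2 = 3 := Real.sq_sqrt (by norm_num)
    have hnn : Real.sqrt n ^ 2 = n := Real.sq_sqrt (le_of_lt hnpos)
    have hsq : q^2 ≤ (1 / (Real.sqrt 3 * Real.sqrt n))^2 := pow_le_pow_left₀ hq0 hqle 2
    have heq : (1 / (Real.sqrt 3 * Real.sqrt n))^2 = 1 / (3 * n) := by
      rw [div_pow, one_pow, mul_pow, h3, hnn]
    rw [heq] at hsq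
    calc (n:ℝ) * q^2 ≤ (n:ℝ) * (1 / (3*n)) := by
          exact mul_le_mul_of_nonneg_left hsq (le_of_lt hnpos)
      _ = 1/3 := by field_simp
  -- Cauchy–Schwarz
  set A : (Fin n → ℕ) → ℝ := fun α => (‖a α‖ + ‖b α‖) * (∏ k, ρ k ^ α k) with hA
  set G : (Fin n → ℕ) → ℝ := fun α => q ^ (∑ k, α k) with hG
  have hCS := Finset.sum_mul_sq_le_sq_mul_sq s A G
  have hLHS : ∑ α ∈ s, (‖a α‖ + ‖b α‖) * ‖∏ k, z k ^ α k‖ = ∑ α ∈ s, A α * G α := by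
    refine Finset.sum_congr rfl fun α _ => ?_
    rw [hznorm α, hA, hG]
    ring
  have hprodnn : ∀ α : Fin n → ℕ, 0 ≤ ∏ k, ρ k ^ α k :=
    fun α => Finset.prod_nonneg fun k _ => pow_nonneg (hρnn k) _
  have huanorm : ∀ α, ‖ua α‖ = ‖a α‖ * (∏ k, ρ k ^ α k) := by
    intro α
    rw [hua]
    simp only [norm_mul, Complex.norm_real]
    rw [Real.norm_eq_abs, _root_.abs_of_nonneg (hprodnn α)]
  have hubnorm : ∀ α, ‖ub α‖ = ‖b α‖ * (∏ k, ρ k ^ α k) := by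
    intro α
    rw [hub]
    simp only [norm_mul, Complex.norm_real]
    rw [Real.norm_eq_abs, _root_.abs_of_nonneg (hprodnn α)]
  have hA2 : ∑ α ∈ s, A α ^ 2 ≤ 2 := by
    have hpt : ∀ α ∈ s, A α ^ 2 ≤ 2 * (‖ua α‖^2 + ‖ub α‖^2) := by
      intro α _
      rw [hA, huanorm, hubnorm]
      have hab : (‖a α‖ + ‖b α‖)^2 ≤ 2 * (‖a α‖^2 + ‖b α‖^2) := by
        nlinarith [sq_nonneg (‖a α‖ - ‖b α‖)]
      calc ((‖a α‖ + ‖b α‖) * (∏ k, ρ k ^ α k))^2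
          = (‖a α‖ + ‖b α‖)^2 * (∏ k, ρ k ^ α k)^2 := by ring
        _ ≤ 2 * (‖a α‖^2 + ‖b α‖^2) * (∏ k, ρ k ^ α k)^2 := by
            exact mul_le_mul_of_nonneg_right hab (sq_nonneg _)
        _ = 2 * ((‖a α‖ * (∏ k, ρ k ^ α k))^2 + (‖b α‖ * (∏ k, ρ k ^ α k))^2) := by ring
    calc ∑ α ∈ s, A α ^ 2 ≤ ∑ α ∈ s, 2 * (‖ua α‖^2 + ‖ub α‖^2) := Finset.sum_le_sum hpt
      _ = 2 * ∑ α ∈ s, (‖ua α‖^2 + ‖ub α‖^2) := by rw [Finset.mul_sum]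
      _ ≤ 2 * 1 := by linarith
      _ = 2 := by norm_num
  have hG2 : ∑ α ∈ s, G α ^ 2 ≤ 1/2 := by
    have hpt : ∀ α : Fin n → ℕ, G α ^ 2 = ∏ k, (q^2) ^ (α k) := by
      intro α
      rw [hG, Finset.prod_pow_eq_pow_sum, ← pow_mul, ← pow_mul, mul_comm]
    rw [Finset.sum_congr rfl fun α _ => hpt α]
    exact Stmt12Aux.sum_prod_pow_le hn (q^2) (sq_nonneg q) hq2 s hs0
  have hLHSnn : 0 ≤ ∑ α ∈ s, A α * G α := by
    refine Finset.sum_nonneg fun α _ => mul_nonneg ?_ ?_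
    · exact mul_nonneg (by positivity) (hprodnn α)
    · exact pow_nonneg hq0 _
  rw [hLHS]
  nlinarith [hCS, hA2, hG2, hLHSnn,
    Finset.sum_nonneg (fun α (_ : α ∈ s) => sq_nonneg (G α)),
    Finset.sum_nonneg (fun α (_ : α ∈ s) => sq_nonneg (A α))]
end
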